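/- arXiv:1009.3248 — 8 statements merged into one kernel-verified Lean document; each statement's English description precedes it below -/
import Mathlib

section
/- Finite time Evans–Searles identity: if the system is TRI then, for every nonzero n ∈ ℤ and every bounded measurable f : ℝ → ℝ, ∫_M f(−Σ^n(x)) dω(x) = ∫_M e^{−n Σ^n(x)} f(Σ^n(x)) dω(x); equivalently, the reflected law P̄_n is equivalent to P_n and dP̄_n/dP_n(s) = e^{−ns} for P_n-a.e. s ∈ ℝ. -/
open MeasureTheory
open scoped ENNReal NNReal

/-- `Δ^n := d(ω∘φ^{-n})/dω` as a real-valued function, where `T n` is `φ^n`. -/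
noncomputable def Delta {M : Type*} [MeasurableSpace M] (ω : Measure M) (T : ℤ → M → M)
    (n : ℤ) (x : M) : ℝ :=
  ((ω.map (T n)).rnDeriv ω x).toReal

/-- The entropy cocycle `c^n := (log Δ^n) ∘ φ^n`. -/
noncomputable def ecoc {M : Type*} [MeasurableSpace M] (ω : Measure M) (T : ℤ → M → M)
    (n : ℤ) (x : M) : ℝ :=
  Real.log (Delta ω T n (T n x))

/-- The mean entropy production rate `Σ^n := c^n / n`. -/
noncomputable def meanSigma {M : Type*} [MeasurableSpace M] (ω : Measure M) (T : ℤ → M → M)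
    (n : ℤ) (x : M) : ℝ :=
  ecoc ω T n x / (n : ℝ)

/-- Finite time Evans–Searles identity for TRI systems: the reflected law of `Σ^n` has density
`e^{-ns}` with respect to the law of `Σ^n`, equivalently the change-of-variables integral
identity holds for every bounded measurable `f`. -/
theorem finite_time_evans_searles
    {M : Type*} [MeasurableSpace M] (ω : Measure M) [IsProbabilityMeasure ω]
    (T : ℤ → M → M)
    (hT0 : T 0 = id)
    (hTadd : ∀ n m : ℤ, T (n + m) = T n ∘ T m)
    (hTmeas : ∀ n : ℤ, Measurable (T n))
    (hequiv : ∀ n : ℤ, ω.map (T n) ≪ ω ∧ ω ≪ ω.map (T n))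
    (θ : M → M) (hθmeas : Measurable θ)
    (hθinv : ∀ x, θ (θ x) = x)
    (hθT : θ ∘ T 1 = T (-1) ∘ θ)
    (hθω : ω.map θ = ω)
    (n : ℤ) (hn : n ≠ 0) :
    (∀ (f : ℝ → ℝ), Measurable f → ∀ C : ℝ, (∀ s, |f s| ≤ C) →
      ∫ x, f (-(meanSigma ω T n x)) ∂ω
        = ∫ x, Real.exp (-(n : ℝ) * meanSigma ω T n x) * f (meanSigma ω T n x) ∂ω) ∧
    ((ω.map (meanSigma ω T n)).map (fun s : ℝ => -s) ≪ ω.map (meanSigma ω T n) ∧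
     ω.map (meanSigma ω T n) ≪ (ω.map (meanSigma ω T n)).map (fun s : ℝ => -s) ∧
     ((ω.map (meanSigma ω T n)).map (fun s : ℝ => -s)).rnDeriv (ω.map (meanSigma ω T n))
        =ᵐ[ω.map (meanSigma ω T n)] fun s : ℝ => ENNReal.ofReal (Real.exp (-(n : ℝ) * s))) := by
  -- Notation and measurability
  have hDnm : Measurable ((ω.map (T n)).rnDeriv ω) := Measure.measurable_rnDeriv _ _
  have hSdef : ∀ x, meanSigma ω T n x
      = Real.log (((ω.map (T n)).rnDeriv ω (T n x)).toReal) / (n : ℝ) := fun _ => rfl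
  have hSmeas : Measurable (meanSigma ω T n) := by
    have : meanSigma ω T n = fun x =>
        Real.log (((ω.map (T n)).rnDeriv ω (T n x)).toReal) / (n : ℝ) := funext hSdef
    rw [this]
    exact (Real.measurable_log.comp ((hDnm.comp (hTmeas n)).ennreal_toReal)).div_const _
  haveI : IsProbabilityMeasure (ω.map (T n)) := Measure.isProbabilityMeasure_map (hTmeas n).aemeasurable
  haveI : IsProbabilityMeasure (ω.map (meanSigma ω T n)) :=
    Measure.isProbabilityMeasure_map hSmeas.aemeasurable
  -- group facts
  have hTcomp : ∀ a b : ℤ, ∀ x, T a (T b x) = T (a + b) x := fun a b x =>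
    (congrFun (hTadd a b) x).symm
  have hTnn : ∀ x, T n (T (-n) x) = x := by
    intro x; rw [hTcomp]; simp [hT0]
  -- commutation of θ with all T m
  have hstep : ∀ x, θ (T 1 x) = T (-1) (θ x) := fun x => congrFun hθT x
  have hstep' : ∀ x, θ (T (-1) x) = T 1 (θ x) := by
    intro x
    have h := hstep (θ x)
    rw [hθinv x] at h
    have h2 := congrArg θ h
    rw [hθinv] at h2
    exact h2.symm
  have hθTm : ∀ m : ℤ, ∀ x, θ (T m x) = T (-m) (θ x) := by
    intro m
    induction m using Int.induction_on with
    | zero => intro x; simp [hT0]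
    | succ i ih =>
      intro x
      have h1 : T ((i : ℤ) + 1) x = T i (T 1 x) := congrFun (hTadd i 1) x
      rw [h1, ih, hstep, hTcomp, show (-(i : ℤ) + -1) = -((i : ℤ) + 1) by ring]
    | pred i ih =>
      intro x
      have h1 : T (-(i : ℤ) - 1) x = T (-i) (T (-1) x) := by
        have h2 := congrFun (hTadd (-i) (-1)) x
        rw [show (-(i : ℤ) + -1) = -(i : ℤ) - 1 by ring] at h2
        exact h2
      rw [h1, ih, hstep', hTcomp, show (- -(i : ℤ) + 1) = -(-(i : ℤ) - 1) by ring]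
  -- positivity and finiteness of the RN derivative
  have hposfin : ∀ᵐ x ∂ω, 0 < (ω.map (T n)).rnDeriv ω x ∧ (ω.map (T n)).rnDeriv ω x < ⊤ := by
    have h1 : ∀ᵐ x ∂ω, 0 < (ω.map (T n)).rnDeriv ω x :=
      (hequiv n).2.ae_le (Measure.rnDeriv_pos (hequiv n).1)
    have h2 : ∀ᵐ x ∂ω, (ω.map (T n)).rnDeriv ω x < ⊤ := Measure.rnDeriv_lt_top _ _
    filter_upwards [h1, h2] with x hx1 hx2 using ⟨hx1, hx2⟩
  have hposfinT : ∀ᵐ x ∂ω, 0 < (ω.map (T n)).rnDeriv ω (T n x)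
      ∧ (ω.map (T n)).rnDeriv ω (T n x) < ⊤ := by
    have h0 : ω {x | ¬ (0 < (ω.map (T n)).rnDeriv ω x ∧ (ω.map (T n)).rnDeriv ω x < ⊤)} = 0 :=
      ae_iff.mp hposfin
    have hA : MeasurableSet {x | ¬ (0 < (ω.map (T n)).rnDeriv ω x
        ∧ (ω.map (T n)).rnDeriv ω x < ⊤)} :=
      ((measurableSet_lt measurable_const hDnm).inter
        (measurableSet_lt hDnm measurable_const)).compl
    have h1 : (ω.map (T n)) {x | ¬ (0 < (ω.map (T n)).rnDeriv ω x
        ∧ (ω.map (T n)).rnDeriv ω x < ⊤)} = 0 := (hequiv n).1 h0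
    rw [Measure.map_apply (hTmeas n) hA] at h1
    exact ae_iff.mpr h1
  -- basic measure facts
  have hmapTnT : (ω.map (T n)).map (T (-n)) = ω := by
    rw [Measure.map_map (hTmeas (-n)) (hTmeas n)]
    have h : T (-n) ∘ T n = id := by rw [← hTadd]; simp [hT0]
    rw [h, Measure.map_id]
  have hωd : ω.map (T n) = ω.withDensity ((ω.map (T n)).rnDeriv ω) :=
    (Measure.withDensity_rnDeriv_eq _ _ (hequiv n).1).symm
  -- Lemma 1 : ω ∘ φ^n = ((Δ^n) ∘ φ^n)⁻¹ ω
  have hL1 : ω.map (T (-n))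
      = ω.withDensity (fun x => ((ω.map (T n)).rnDeriv ω (T n x))⁻¹) := by
    ext s hs
    rw [Measure.map_apply (hTmeas (-n)) hs, withDensity_apply _ hs,
      ← lintegral_indicator hs]
    have hind : Measurable (s.indicator fun y => ((ω.map (T n)).rnDeriv ω (T n y))⁻¹) :=
      ((hDnm.comp (hTmeas n)).inv).indicator hs
    calc ω (T (-n) ⁻¹' s)
        = ∫⁻ x, (T (-n) ⁻¹' s).indicator 1 x ∂ω :=
          (lintegral_indicator_one ((hTmeas (-n)) hs)).symm
      _ = ∫⁻ x, ((ω.map (T n)).rnDeriv ω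
            * fun y => (s.indicator fun z => ((ω.map (T n)).rnDeriv ω (T n z))⁻¹)
                (T (-n) y)) x ∂ω := by
          refine lintegral_congr_ae ?_
          filter_upwards [hposfin] with x hx
          simp only [Pi.mul_apply]
          by_cases h : T (-n) x ∈ s
          · rw [Set.indicator_of_mem h, Set.indicator_of_mem
                (show x ∈ T (-n) ⁻¹' s from h) (1 : M → ℝ≥0∞), hTnn x, Pi.one_apply]
            exact (ENNReal.mul_inv_cancel hx.1.ne' hx.2.ne).symm
          · rw [Set.indicator_of_notMem h, Set.indicator_of_notMem
                (show x ∉ T (-n) ⁻¹' s from h) (1 : M → ℝ≥0∞), mul_zero]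
      _ = ∫⁻ x, (s.indicator fun z => ((ω.map (T n)).rnDeriv ω (T n z))⁻¹) (T (-n) x)
            ∂(ω.withDensity ((ω.map (T n)).rnDeriv ω)) :=
          (lintegral_withDensity_eq_lintegral_mul ω hDnm (hind.comp (hTmeas (-n)))).symm
      _ = ∫⁻ x, (s.indicator fun z => ((ω.map (T n)).rnDeriv ω (T n z))⁻¹) (T (-n) x)
            ∂(ω.map (T n)) := by rw [← hωd]
      _ = ∫⁻ x, (s.indicator fun z => ((ω.map (T n)).rnDeriv ω (T n z))⁻¹) x
            ∂((ω.map (T n)).map (T (-n))) := (lintegral_map hind (hTmeas (-n))).symm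
      _ = ∫⁻ x, s.indicator (fun z => ((ω.map (T n)).rnDeriv ω (T n z))⁻¹) x ∂ω := by
          rw [hmapTnT]
  -- Lemma 2 : ω ∘ φ^n = ((Δ^n) ∘ θ) ω
  have hL2 : ω.map (T (-n))
      = ω.withDensity (fun x => (ω.map (T n)).rnDeriv ω (θ x)) := by
    ext s hs
    rw [Measure.map_apply (hTmeas (-n)) hs, withDensity_apply _ hs,
      ← lintegral_indicator hs]
    have hind : Measurable (s.indicator fun y => (ω.map (T n)).rnDeriv ω (θ y)) :=
      (hDnm.comp hθmeas).indicator hs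
    symm
    calc ∫⁻ x, s.indicator (fun y => (ω.map (T n)).rnDeriv ω (θ y)) x ∂ω
        = ∫⁻ x, s.indicator (fun y => (ω.map (T n)).rnDeriv ω (θ y)) x ∂(ω.map θ) := by
          rw [hθω]
      _ = ∫⁻ x, s.indicator (fun y => (ω.map (T n)).rnDeriv ω (θ y)) (θ x) ∂ω :=
          lintegral_map hind hθmeas
      _ = ∫⁻ x, (θ ⁻¹' s).indicator ((ω.map (T n)).rnDeriv ω) x ∂ω := by
          refine lintegral_congr fun x => ?_
          by_cases h : θ x ∈ s
          · rw [Set.indicator_of_mem h, Set.indicator_of_mem (show x ∈ θ ⁻¹' s from h), hθinv x]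
          · rw [Set.indicator_of_notMem h,
              Set.indicator_of_notMem (show x ∉ θ ⁻¹' s from h)]
      _ = (ω.withDensity ((ω.map (T n)).rnDeriv ω)) (θ ⁻¹' s) := by
          rw [lintegral_indicator (hθmeas hs), ← withDensity_apply _ (hθmeas hs)]
      _ = (ω.map (T n)) (θ ⁻¹' s) := by rw [← hωd]
      _ = ω (T n ⁻¹' (θ ⁻¹' s)) := Measure.map_apply (hTmeas n) (hθmeas hs)
      _ = ω (θ ⁻¹' (T (-n) ⁻¹' s)) := by
          congr 1
          ext x
          simp only [Set.mem_preimage]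
          rw [hθTm n x]
      _ = (ω.map θ) (T (-n) ⁻¹' s) := (Measure.map_apply hθmeas ((hTmeas (-n)) hs)).symm
      _ = ω (T (-n) ⁻¹' s) := by rw [hθω]
  -- consequence : Δ^n ∘ θ = ((Δ^n) ∘ φ^n)⁻¹ a.e.
  have hDeq : (fun x => (ω.map (T n)).rnDeriv ω (θ x))
      =ᵐ[ω] fun x => ((ω.map (T n)).rnDeriv ω (T n x))⁻¹ := by
    have h1 := Measure.rnDeriv_withDensity ω
      (show Measurable fun x => (ω.map (T n)).rnDeriv ω (θ x) from hDnm.comp hθmeas)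
    have h2 := Measure.rnDeriv_withDensity ω
      (show Measurable fun x => ((ω.map (T n)).rnDeriv ω (T n x))⁻¹ from
        (hDnm.comp (hTmeas n)).inv)
    rw [← hL2] at h1
    rw [← hL1] at h2
    exact h1.symm.trans h2
  -- the key a.e. identity : -Σ^n = Σ^n ∘ φ^n ∘ θ
  have hnegS : (fun x => -(meanSigma ω T n x))
      =ᵐ[ω] fun x => meanSigma ω T n (T (-n) (θ x)) := by
    filter_upwards [hDeq] with x hDx
    rw [hSdef, hSdef, hTnn (θ x), hDx, ENNReal.toReal_inv, Real.log_inv, neg_div]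
  -- the density form of exp(-nΣ^n)
  have hexp : (fun x => ((ω.map (T n)).rnDeriv ω (T n x))⁻¹)
      =ᵐ[ω] fun x => ENNReal.ofReal (Real.exp (-(n : ℝ) * meanSigma ω T n x)) := by
    filter_upwards [hposfinT] with x hx
    have hr : (0 : ℝ) < ((ω.map (T n)).rnDeriv ω (T n x)).toReal :=
      ENNReal.toReal_pos hx.1.ne' hx.2.ne
    have hncast : (n : ℝ) ≠ 0 := Int.cast_ne_zero.mpr hn
    have h1 : -(n : ℝ) * meanSigma ω T n x
        = -Real.log (((ω.map (T n)).rnDeriv ω (T n x)).toReal) := by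
      rw [hSdef]; field_simp
    rw [h1, Real.exp_neg, Real.exp_log hr, ENNReal.ofReal_inv_of_pos hr,
      ENNReal.ofReal_toReal hx.2.ne]
  -- measurability of the density on ℝ
  have hgmeas : Measurable fun s : ℝ => ENNReal.ofReal (Real.exp (-(n : ℝ) * s)) :=
    (Real.measurable_exp.comp ((measurable_const.mul measurable_id))).ennreal_ofReal
  -- main pushforward identity
  have hmapneg : ω.map (fun x => -(meanSigma ω T n x))
      = (ω.withDensity fun x => ENNReal.ofReal
          (Real.exp (-(n : ℝ) * meanSigma ω T n x))).map (meanSigma ω T n) := by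
    calc ω.map (fun x => -(meanSigma ω T n x))
        = ω.map (fun x => meanSigma ω T n (T (-n) (θ x))) := Measure.map_congr hnegS
      _ = ((ω.map θ).map (T (-n))).map (meanSigma ω T n) := by
          rw [Measure.map_map (hTmeas (-n)) hθmeas,
            Measure.map_map hSmeas ((hTmeas (-n)).comp hθmeas)]
          rfl
      _ = (ω.map (T (-n))).map (meanSigma ω T n) := by rw [hθω]
      _ = (ω.withDensity fun x => ((ω.map (T n)).rnDeriv ω (T n x))⁻¹).map
            (meanSigma ω T n) := by rw [hL1]
      _ = _ := by rw [withDensity_congr_ae hexp]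
  -- moving the density through the map
  have hpush : (ω.withDensity fun x => ENNReal.ofReal
        (Real.exp (-(n : ℝ) * meanSigma ω T n x))).map (meanSigma ω T n)
      = (ω.map (meanSigma ω T n)).withDensity
          fun s : ℝ => ENNReal.ofReal (Real.exp (-(n : ℝ) * s)) := by
    ext s hs
    rw [Measure.map_apply hSmeas hs, withDensity_apply _ (hSmeas hs), withDensity_apply _ hs,
      ← setLIntegral_map hs hgmeas hSmeas]
  have hkey : (ω.map (meanSigma ω T n)).map (fun s : ℝ => -s)
      = (ω.map (meanSigma ω T n)).withDensity
          fun s : ℝ => ENNReal.ofReal (Real.exp (-(n : ℝ) * s)) := by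
    rw [Measure.map_map measurable_neg hSmeas]
    rw [show ((fun s : ℝ => -s) ∘ meanSigma ω T n) = fun x => -(meanSigma ω T n x) from rfl]
    rw [hmapneg, hpush]
  refine ⟨?_, ?_, ?_, ?_⟩
  · -- the integral identity
    intro f hf C hC
    have hfm : AEStronglyMeasurable f (ω.map fun x => -(meanSigma ω T n x)) :=
      hf.aestronglyMeasurable
    have hdcast : (fun x => ENNReal.ofReal (Real.exp (-(n : ℝ) * meanSigma ω T n x)))
        = fun x => ((Real.exp (-(n : ℝ) * meanSigma ω T n x)).toNNReal : ℝ≥0∞) := rfl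
    have humeas : Measurable fun x => (Real.exp (-(n : ℝ) * meanSigma ω T n x)).toNNReal :=
      (Real.measurable_exp.comp (measurable_const.mul hSmeas)).real_toNNReal
    calc ∫ x, f (-(meanSigma ω T n x)) ∂ω
        = ∫ y, f y ∂(ω.map fun x => -(meanSigma ω T n x)) :=
          (integral_map hSmeas.neg.aemeasurable hf.aestronglyMeasurable).symm
      _ = ∫ y, f y ∂((ω.withDensity fun x => ENNReal.ofReal
            (Real.exp (-(n : ℝ) * meanSigma ω T n x))).map (meanSigma ω T n)) := by
          rw [hmapneg]
      _ = ∫ x, f (meanSigma ω T n x) ∂(ω.withDensity fun x => ENNReal.ofReal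
            (Real.exp (-(n : ℝ) * meanSigma ω T n x))) :=
          integral_map hSmeas.aemeasurable hf.aestronglyMeasurable
      _ = ∫ x, (Real.exp (-(n : ℝ) * meanSigma ω T n x)).toNNReal
            • f (meanSigma ω T n x) ∂ω := by
          rw [hdcast]
          exact integral_withDensity_eq_integral_smul humeas _
      _ = ∫ x, Real.exp (-(n : ℝ) * meanSigma ω T n x) * f (meanSigma ω T n x) ∂ω := by
          refine integral_congr_ae (ae_of_all _ fun x => ?_)
          show (Real.exp (-(n : ℝ) * meanSigma ω T n x)).toNNReal
              • f (meanSigma ω T n x)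
            = Real.exp (-(n : ℝ) * meanSigma ω T n x) * f (meanSigma ω T n x)
          rw [NNReal.smul_def, smul_eq_mul, Real.coe_toNNReal _ (Real.exp_nonneg _)]
  · -- absolute continuity P̄ ≪ P
    rw [hkey]
    exact withDensity_absolutelyContinuous _ _
  · -- absolute continuity P ≪ P̄
    have hmul : (fun s : ℝ => ENNReal.ofReal (Real.exp (-(n : ℝ) * s))
        * ENNReal.ofReal (Real.exp ((n : ℝ) * s))) = fun _ => 1 := by
      funext s
      rw [← ENNReal.ofReal_mul (Real.exp_nonneg _), ← Real.exp_add]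
      norm_num
    have hg'meas : Measurable fun s : ℝ => ENNReal.ofReal (Real.exp ((n : ℝ) * s)) :=
      (Real.measurable_exp.comp (measurable_const.mul measurable_id)).ennreal_ofReal
    have h2 : ω.map (meanSigma ω T n)
        = ((ω.map (meanSigma ω T n)).map (fun s : ℝ => -s)).withDensity
            fun s : ℝ => ENNReal.ofReal (Real.exp ((n : ℝ) * s)) := by
      rw [hkey, ← withDensity_mul _ hgmeas hg'meas]
      rw [show (fun s : ℝ => ENNReal.ofReal (Real.exp (-(n : ℝ) * s)))
          * (fun s : ℝ => ENNReal.ofReal (Real.exp ((n : ℝ) * s))) = fun _ => 1 from hmul]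
      rw [show (fun _ : ℝ => (1 : ℝ≥0∞)) = 1 from rfl, withDensity_one]
    calc ω.map (meanSigma ω T n)
        = ((ω.map (meanSigma ω T n)).map (fun s : ℝ => -s)).withDensity
            fun s : ℝ => ENNReal.ofReal (Real.exp ((n : ℝ) * s)) := h2
      _ ≪ (ω.map (meanSigma ω T n)).map (fun s : ℝ => -s) :=
          withDensity_absolutelyContinuous _ _
  · -- the RN derivative
    rw [hkey]
    exact Measure.rnDeriv_withDensity _ hgmeas
end

section
/- With e_n(α) := log ∫_M (Δ^n)^α dω ∈ (−∞, +∞]: (1) for every n ∈ ℤ and α ∈ ℝ, e_n(α) = e_{−n}(1 − α), i.e. ∫_M (Δ^n)^α dω = ∫_M (Δ^{−n})^{1−α} dω; (2) if the system is TRI, then e_{−n}(α) = e_n(α) for all n ∈ ℤ and α ∈ ℝ, and hence the finite time Evans–Searles symmetry e_n(α) = e_n(1 − α) holds. -/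
open MeasureTheory ENNReal

/-- The Rényi-type functional `e_n(α)` is `log` of this quantity:
`∫ (Δ^n)^α dω` computed in `[0,∞]`, where `Δ^n := d(ω∘φ^{-n})/dω` and `T n` is `φ^n`. -/
noncomputable def renyiInt {M : Type*} [MeasurableSpace M] (ω : Measure M) (T : ℤ → M → M)
    (n : ℤ) (α : ℝ) : ℝ≥0∞ :=
  ∫⁻ x, ((ω.map (T n)).rnDeriv ω x) ^ α ∂ω

/-- `withDensity` commutes with `map` in the natural way. -/
lemma aux_map_withDensity {M : Type*} [MeasurableSpace M] (μ : Measure M) {g : M → M}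
    (hg : Measurable g) {f : M → ℝ≥0∞} (hf : Measurable f) :
    (μ.map g).withDensity f = (μ.withDensity (f ∘ g)).map g := by
  ext s hs
  rw [withDensity_apply _ hs, Measure.map_apply hg hs,
    withDensity_apply _ (hg hs), setLIntegral_map hs hf hg]
  rfl

/-- (1) `e_n(α) = e_{-n}(1-α)`, i.e. `∫ (Δ^n)^α dω = ∫ (Δ^{-n})^{1-α} dω`;
(2) if the system is TRI then `e_{-n}(α) = e_n(α)`, hence the finite time Evans–Searles
symmetry `e_n(α) = e_n(1-α)` holds. -/
theorem finite_time_ES_symmetry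
    {M : Type*} [MeasurableSpace M] (ω : Measure M) [IsProbabilityMeasure ω]
    (T : ℤ → M → M)
    (hT0 : T 0 = id)
    (hTadd : ∀ n m : ℤ, T (n + m) = T n ∘ T m)
    (hTmeas : ∀ n : ℤ, Measurable (T n))
    (hequiv : ∀ n : ℤ, ω.map (T n) ≪ ω ∧ ω ≪ ω.map (T n)) :
    (∀ (n : ℤ) (α : ℝ), renyiInt ω T n α = renyiInt ω T (-n) (1 - α)) ∧
    (∀ θ : M → M, Measurable θ → (∀ x, θ (θ x) = x) →
      θ ∘ T 1 = T (-1) ∘ θ → ω.map θ = ω →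
      (∀ (n : ℤ) (α : ℝ), renyiInt ω T (-n) α = renyiInt ω T n α) ∧
      (∀ (n : ℤ) (α : ℝ), renyiInt ω T n α = renyiInt ω T n (1 - α))) := by
  haveI : ∀ m : ℤ, IsProbabilityMeasure (ω.map (T m)) := fun m =>
    Measure.isProbabilityMeasure_map (hTmeas m).aemeasurable
  set D : ℤ → M → ℝ≥0∞ := fun m => (ω.map (T m)).rnDeriv ω with hD
  have hDmeas : ∀ m : ℤ, Measurable (D m) := fun m => Measure.measurable_rnDeriv _ _
  have hwd : ∀ m : ℤ, ω.withDensity (D m) = ω.map (T m) := fun m =>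
    Measure.withDensity_rnDeriv_eq _ _ (hequiv m).1
  have hinv : ∀ (m : ℤ) (x : M), T m (T (-m) x) = x := by
    intro m x
    have h := congrFun (hTadd m (-m)).symm x
    simpa [hT0] using h
  -- the fundamental cocycle identity `Δ^{-n} · (Δ^n ∘ T n) = 1` a.e.
  have key : ∀ m : ℤ, (fun x => D (-m) x * D m (T m x)) =ᵐ[ω] fun _ => 1 := by
    intro m
    have hmeas : Measurable (D m ∘ T m) := (hDmeas m).comp (hTmeas m)
    have hcomp : ω.withDensity (D (-m) * (D m ∘ T m)) = ω := by
      rw [withDensity_mul ω (hDmeas (-m)) hmeas, hwd (-m),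
        aux_map_withDensity ω (hTmeas (-m)) hmeas]
      have : (D m ∘ T m) ∘ T (-m) = D m := by
        funext x; simp [Function.comp, hinv m x]
      rw [this, hwd m, Measure.map_map (hTmeas (-m)) (hTmeas m), ← hTadd (-m) m]
      simp [hT0]
    have h1 : (ω.withDensity (D (-m) * (D m ∘ T m))).rnDeriv ω
        =ᵐ[ω] D (-m) * (D m ∘ T m) :=
      Measure.rnDeriv_withDensity ω ((hDmeas (-m)).mul hmeas)
    have h2 : (ω.withDensity (D (-m) * (D m ∘ T m))).rnDeriv ω =ᵐ[ω] fun _ => 1 := by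
      rw [hcomp]; exact Measure.rnDeriv_self ω
    filter_upwards [h1.symm.trans h2] with x hx
    simpa [Function.comp] using hx
  have hpos : ∀ m : ℤ, ∀ᵐ x ∂ω, 0 < D m x := fun m =>
    (hequiv m).2.ae_le (Measure.rnDeriv_pos (hequiv m).1)
  have hfin : ∀ m : ℤ, ∀ᵐ x ∂ω, D m x < ∞ := fun m => Measure.rnDeriv_lt_top _ _
  have hrpow : ∀ (f : M → ℝ≥0∞) (α : ℝ), Measurable f →
      Measurable (fun x => f x ^ α) := fun f α hf =>
    ENNReal.continuous_rpow_const.measurable.comp hf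
  -- Part (1)
  have part1 : ∀ (n : ℤ) (α : ℝ), renyiInt ω T n α = renyiInt ω T (-n) (1 - α) := by
    intro n α
    show ∫⁻ x, D n x ^ α ∂ω = ∫⁻ x, D (-n) x ^ (1 - α) ∂ω
    have hm : Measurable fun y => D n (T n y) ^ α :=
      hrpow _ α ((hDmeas n).comp (hTmeas n))
    calc ∫⁻ x, D n x ^ α ∂ω
        = ∫⁻ y, D n (T n y) ^ α ∂(ω.map (T (-n))) := by
          rw [lintegral_map hm (hTmeas (-n))]
          refine lintegral_congr fun x => ?_
          rw [hinv n x]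
      _ = ∫⁻ x, D (-n) x * D n (T n x) ^ α ∂ω := by
          rw [← hwd (-n), lintegral_withDensity_eq_lintegral_mul ω (hDmeas (-n)) hm]
          simp only [Pi.mul_apply]
      _ = ∫⁻ x, D (-n) x ^ (1 - α) ∂ω := by
          refine lintegral_congr_ae ?_
          filter_upwards [key n, hpos (-n), hfin (-n)] with x hk hp hf
          have hne : D (-n) x ≠ 0 := hp.ne'
          have hnt : D (-n) x ≠ ∞ := hf.ne
          have hDnT : D n (T n x) = (D (-n) x)⁻¹ := by
            have : (D (-n) x)⁻¹ * (D (-n) x * D n (T n x)) = (D (-n) x)⁻¹ * 1 := by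
              rw [hk]
            rwa [← mul_assoc, ENNReal.inv_mul_cancel hne hnt, one_mul, mul_one] at this
          rw [hDnT, ENNReal.inv_rpow, ← ENNReal.rpow_neg]
          rw [show (1 : ℝ) - α = 1 + (-α) by ring, ENNReal.rpow_add _ _ hne hnt,
            ENNReal.rpow_one]
  refine ⟨part1, ?_⟩
  intro θ hθm hθinv hθT hθω
  -- `θ ∘ T n = T (-n) ∘ θ` for all `n : ℤ`
  have hθTn : ∀ (n : ℤ) (x : M), θ (T n x) = T (-n) (θ x) := by
    have hstep : ∀ x, θ (T 1 x) = T (-1) (θ x) := fun x => congrFun hθT x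
    have hstep' : ∀ x, θ (T (-1) x) = T 1 (θ x) := by
      intro x
      have h := hstep (T (-1) x)
      rw [show T 1 (T (-1) x) = x from hinv 1 x] at h
      have h2 := congrArg (T 1) h
      rw [hinv 1 (θ (T (-1) x))] at h2
      exact h2.symm
    intro n
    induction n using Int.induction_on with
    | zero => intro x; simp [hT0]
    | succ k ih =>
        intro x
        have h1 : T (k + 1 : ℤ) x = T 1 (T k x) := by
          have := congrFun (hTadd 1 k) x
          rw [show (1 : ℤ) + k = k + 1 by ring] at this
          exact this
        rw [h1, hstep (T k x), ih x]
        have h2 := congrFun (hTadd (-1) (-k)) (θ x)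
        rw [show (-1 : ℤ) + -k = -(k + 1) by ring] at h2
        exact h2.symm
    | pred k ih =>
        intro x
        have h1 : T (-k - 1 : ℤ) x = T (-1) (T (-k) x) := by
          have := congrFun (hTadd (-1) (-k)) x
          rw [show (-1 : ℤ) + -k = -k - 1 by ring] at this
          exact this
        simp only [neg_neg] at ih
        rw [h1, hstep' (T (-k) x), ih x]
        have h2 := congrFun (hTadd 1 k) (θ x)
        rw [show (1 : ℤ) + k = -(-k - 1) by ring] at h2
        exact h2.symm
  -- `D (-n) = D n ∘ θ` a.e.
  have hDtheta : ∀ n : ℤ, D (-n) =ᵐ[ω] D n ∘ θ := by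
    intro n
    have hmeas : Measurable (D n ∘ θ) := (hDmeas n).comp hθm
    have hwdθ : ω.withDensity (D n ∘ θ) = ω.map (T (-n)) := by
      have h1 : (ω.map θ).withDensity (D n) = (ω.withDensity (D n ∘ θ)).map θ :=
        aux_map_withDensity ω hθm (hDmeas n)
      rw [hθω, hwd n] at h1
      have h2 := congrArg (fun μ : Measure M => μ.map θ) h1
      rw [Measure.map_map hθm hθm] at h2
      have hid : θ ∘ θ = id := funext hθinv
      rw [hid, Measure.map_id] at h2
      rw [← h2, Measure.map_map hθm (hTmeas n)]
      have : θ ∘ T n = T (-n) ∘ θ := funext (hθTn n)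
      rw [this, ← Measure.map_map (hTmeas (-n)) hθm, hθω]
    have h := Measure.rnDeriv_withDensity ω hmeas
    rw [hwdθ] at h
    exact h
  have part2a : ∀ (n : ℤ) (α : ℝ), renyiInt ω T (-n) α = renyiInt ω T n α := by
    intro n α
    show ∫⁻ x, D (-n) x ^ α ∂ω = ∫⁻ x, D n x ^ α ∂ω
    calc ∫⁻ x, D (-n) x ^ α ∂ω
        = ∫⁻ x, D n (θ x) ^ α ∂ω := by
          refine lintegral_congr_ae ?_
          filter_upwards [hDtheta n] with x hx
          rw [hx]; rfl
      _ = ∫⁻ x, D n x ^ α ∂(ω.map θ) := by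
          rw [lintegral_map (hrpow _ α (hDmeas n)) hθm]
      _ = ∫⁻ x, D n x ^ α ∂ω := by rw [hθω]
  exact ⟨part2a, fun n α => (part1 n α).trans (part2a n (1 - α))⟩
end

section
/- Properties of the entropy production observable: (1) the integral ∫_M σ dω is well defined in [0, +∞] (the negative part of σ is ω-integrable) and satisfies ∫_M σ dω ≥ 0; (2) the integral ∫_M σ dω_{−1} is well defined in [−∞, 0] (the positive part of σ is ω_{−1}-integrable) and satisfies ∫_M σ dω_{−1} ≤ 0; (3) if θ is a time reversal of the system, then σ ∘ θ = −σ ∘ φ^{−1} ω-almost everywhere. -/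
open MeasureTheory ENNReal

/-- The entropy production observable `σ := (log Δ^1) ∘ φ`. -/
noncomputable def entProd {M : Type*} [MeasurableSpace M] (ω : Measure M) (T : ℤ → M → M)
    (x : M) : ℝ :=
  Real.log (Delta ω T 1 (T 1 x))

/-- For `t > 0`, `(-log t) * t ≤ 1 - t`. -/
private lemma neg_log_mul_self_le {t : ℝ} (ht : 0 < t) : (-Real.log t) * t ≤ 1 - t := by
  have h := Real.log_le_sub_one_of_pos (inv_pos.2 ht)
  rw [Real.log_inv] at h
  have h2 := mul_le_mul_of_nonneg_right h ht.le
  rw [sub_mul, inv_mul_cancel₀ ht.ne'] at h2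
  linarith

/-- Basic properties of the entropy production observable:
(1) `∫ σ dω` is well defined in `[0,∞]` (its negative part is `ω`-integrable) and is `≥ 0`;
(2) `∫ σ dω_{-1}` is well defined in `[-∞,0]` (its positive part is `ω_{-1}`-integrable) and
is `≤ 0`; (3) if `θ` is a time reversal then `σ ∘ θ = -σ ∘ φ^{-1}` ω-a.e. -/
theorem entropy_production_basic
    {M : Type*} [MeasurableSpace M] (ω : Measure M) [IsProbabilityMeasure ω]
    (T : ℤ → M → M)
    (hT0 : T 0 = id)
    (hTadd : ∀ n m : ℤ, T (n + m) = T n ∘ T m)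
    (hTmeas : ∀ n : ℤ, Measurable (T n))
    (hequiv : ∀ n : ℤ, ω.map (T n) ≪ ω ∧ ω ≪ ω.map (T n)) :
    ((∫⁻ x, ENNReal.ofReal (-(entProd ω T x)) ∂ω < ⊤) ∧
      ∫⁻ x, ENNReal.ofReal (-(entProd ω T x)) ∂ω ≤ ∫⁻ x, ENNReal.ofReal (entProd ω T x) ∂ω) ∧
    ((∫⁻ x, ENNReal.ofReal (entProd ω T x) ∂(ω.map (T (-1))) < ⊤) ∧
      ∫⁻ x, ENNReal.ofReal (entProd ω T x) ∂(ω.map (T (-1)))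
        ≤ ∫⁻ x, ENNReal.ofReal (-(entProd ω T x)) ∂(ω.map (T (-1)))) ∧
    (∀ θ : M → M, Measurable θ → (∀ x, θ (θ x) = x) →
      θ ∘ T 1 = T (-1) ∘ θ → ω.map θ = ω →
      ∀ᵐ x ∂ω, entProd ω T (θ x) = -(entProd ω T (T (-1) x))) := by
  classical
  set ν : Measure M := ω.map (T 1) with hν
  haveI hν1 : IsProbabilityMeasure ν := Measure.isProbabilityMeasure_map (hTmeas 1).aemeasurable
  set D : M → ℝ≥0∞ := ν.rnDeriv ω with hD
  have hDmeas : Measurable D := Measure.measurable_rnDeriv _ _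
  have hνω : ν ≪ ω := (hequiv 1).1
  have hων : ω ≪ ν := (hequiv 1).2
  -- the positive/negative "log density" functions
  set gp : M → ℝ≥0∞ := fun x => ENNReal.ofReal (Real.log (D x).toReal) with hgp_def
  set gm : M → ℝ≥0∞ := fun x => ENNReal.ofReal (-Real.log (D x).toReal) with hgm_def
  have hgp : Measurable gp :=
    ENNReal.measurable_ofReal.comp (Real.measurable_log.comp hDmeas.ennreal_toReal)
  have hgm : Measurable gm :=
    ENNReal.measurable_ofReal.comp ((Real.measurable_log.comp hDmeas.ennreal_toReal).neg)
  have hσp : ∀ x, ENNReal.ofReal (entProd ω T x) = gp (T 1 x) := fun x => rfl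
  have hσm : ∀ x, ENNReal.ofReal (-(entProd ω T x)) = gm (T 1 x) := fun x => rfl
  -- `T 1 ∘ T (-1) = id` and `T (-1) ∘ T 1 = id`
  have hco : T 1 ∘ T (-1) = id := by
    have h := (hTadd 1 (-1)).symm
    norm_num at h
    rw [h, hT0]
  have hco' : T (-1) ∘ T 1 = id := by
    have h := (hTadd (-1) 1).symm
    norm_num at h
    rw [h, hT0]
  have hid : ∀ x, T 1 (T (-1) x) = x := fun x => congrFun hco x
  have hid' : ∀ x, T (-1) (T 1 x) = x := fun x => congrFun hco' x
  -- the total mass of the density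
  have hDint : ∫⁻ x, D x ∂ω = 1 := by
    rw [hD, Measure.lintegral_rnDeriv hνω]
    exact measure_univ
  -- a.e. positivity and finiteness of the density
  have hDlt : ∀ᵐ x ∂ω, D x < ∞ := Measure.rnDeriv_lt_top ν ω
  have hDpos : ∀ᵐ x ∂ω, 0 < D x := Measure.rnDeriv_pos' hων
  -- rewrite the part-(1) integrals
  have hA : ∫⁻ x, ENNReal.ofReal (-(entProd ω T x)) ∂ω = ∫⁻ x, D x * gm x ∂ω := by
    have h1 : ∫⁻ x, ENNReal.ofReal (-(entProd ω T x)) ∂ω = ∫⁻ y, gm y ∂ν := by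
      rw [hν, lintegral_map hgm (hTmeas 1)]
      exact lintegral_congr fun x => hσm x
    rw [h1, ← MeasureTheory.lintegral_rnDeriv_mul hνω hgm.aemeasurable]
  have hB : ∫⁻ x, ENNReal.ofReal (entProd ω T x) ∂ω = ∫⁻ x, D x * gp x ∂ω := by
    have h1 : ∫⁻ x, ENNReal.ofReal (entProd ω T x) ∂ω = ∫⁻ y, gp y ∂ν := by
      rw [hν, lintegral_map hgp (hTmeas 1)]
      exact lintegral_congr fun x => hσp x
    rw [h1, ← MeasureTheory.lintegral_rnDeriv_mul hνω hgp.aemeasurable]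
  -- part (1): finiteness
  have hfin1 : ∫⁻ x, D x * gm x ∂ω ≤ 1 := by
    have hpt : ∀ x, D x * gm x ≤ 1 := by
      intro x
      rcases eq_or_ne (D x) ∞ with h | h
      · simp [hgm_def, h, Real.log_zero]
      · have ht0 : 0 ≤ (D x).toReal := ENNReal.toReal_nonneg
        rcases eq_or_lt_of_le ht0 with ht | ht
        · simp [hgm_def, ← ht, Real.log_zero]
        · have hDx : D x = ENNReal.ofReal (D x).toReal := (ENNReal.ofReal_toReal h).symm
          calc D x * gm x
              = ENNReal.ofReal ((D x).toReal * (-Real.log (D x).toReal)) := by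
                rw [ENNReal.ofReal_mul ht0, ← hDx]
            _ ≤ 1 := by
                rw [← ENNReal.ofReal_one]
                apply ENNReal.ofReal_le_ofReal
                have := neg_log_mul_self_le ht
                nlinarith
    calc ∫⁻ x, D x * gm x ∂ω ≤ ∫⁻ _, 1 ∂ω := lintegral_mono hpt
      _ = 1 := by simp
  -- part (1): inequality, via `A + 1 ≤ B + 1`
  have hae1 : ∀ᵐ x ∂ω, D x * gm x + D x ≤ D x * gp x + 1 := by
    filter_upwards [hDlt, hDpos] with x hlt hpos
    have htop : D x ≠ ∞ := hlt.ne
    have ht : 0 < (D x).toReal := ENNReal.toReal_pos hpos.ne' htop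
    set t : ℝ := (D x).toReal with htdef
    have hDx : D x = ENNReal.ofReal t := (ENNReal.ofReal_toReal htop).symm
    have hkey := neg_log_mul_self_le ht
    rcases le_total (Real.log t) 0 with hl | hl
    · have hgpx : gp x = 0 := ENNReal.ofReal_eq_zero.2 hl
      have : D x * gm x + D x ≤ 1 := by
        calc D x * gm x + D x
            = ENNReal.ofReal (t * (-Real.log t) + t) := by
              rw [ENNReal.ofReal_add (by nlinarith) ht.le, ENNReal.ofReal_mul ht.le, ← hDx]
          _ ≤ 1 := by
              rw [← ENNReal.ofReal_one]
              apply ENNReal.ofReal_le_ofReal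
              nlinarith
      rw [hgpx, mul_zero, zero_add]
      exact this.trans le_rfl
    · have hgmx : gm x = 0 := ENNReal.ofReal_eq_zero.2 (by simpa using hl)
      rw [hgmx, mul_zero, zero_add]
      calc D x = ENNReal.ofReal t := hDx
        _ ≤ ENNReal.ofReal (t * Real.log t + 1) := by
            apply ENNReal.ofReal_le_ofReal; nlinarith
        _ = ENNReal.ofReal (t * Real.log t) + 1 := by
            rw [ENNReal.ofReal_add (by nlinarith) zero_le_one, ENNReal.ofReal_one]
        _ ≤ D x * gp x + 1 := by
            gcongr
            rw [hDx, ← ENNReal.ofReal_mul ht.le]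
  have hDgm_meas : Measurable fun x => D x * gm x := hDmeas.mul hgm
  have hDgp_meas : Measurable fun x => D x * gp x := hDmeas.mul hgp
  have hAB : ∫⁻ x, D x * gm x ∂ω ≤ ∫⁻ x, D x * gp x ∂ω := by
    have h1 : (∫⁻ x, D x * gm x ∂ω) + 1 ≤ (∫⁻ x, D x * gp x ∂ω) + 1 := by
      calc (∫⁻ x, D x * gm x ∂ω) + 1
          = (∫⁻ x, D x * gm x ∂ω) + ∫⁻ x, D x ∂ω := by rw [hDint]
        _ = ∫⁻ x, (D x * gm x + D x) ∂ω := (lintegral_add_left hDgm_meas _).symm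
        _ ≤ ∫⁻ x, (D x * gp x + 1) ∂ω := lintegral_mono_ae hae1
        _ = (∫⁻ x, D x * gp x ∂ω) + ∫⁻ _, (1 : ℝ≥0∞) ∂ω := lintegral_add_left hDgp_meas _
        _ = (∫⁻ x, D x * gp x ∂ω) + 1 := by simp
    exact (ENNReal.add_le_add_iff_right one_ne_top).1 h1
  -- rewrite the part-(2) integrals
  have hσp_meas : Measurable fun x => ENNReal.ofReal (entProd ω T x) :=
    hgp.comp (hTmeas 1)
  have hσm_meas : Measurable fun x => ENNReal.ofReal (-(entProd ω T x)) :=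
    hgm.comp (hTmeas 1)
  have hA' : ∫⁻ x, ENNReal.ofReal (entProd ω T x) ∂(ω.map (T (-1))) = ∫⁻ x, gp x ∂ω := by
    rw [lintegral_map hσp_meas (hTmeas (-1))]
    exact lintegral_congr fun x => by rw [hσp (T (-1) x), hid x]
  have hB' : ∫⁻ x, ENNReal.ofReal (-(entProd ω T x)) ∂(ω.map (T (-1))) = ∫⁻ x, gm x ∂ω := by
    rw [lintegral_map hσm_meas (hTmeas (-1))]
    exact lintegral_congr fun x => by rw [hσm (T (-1) x), hid x]
  -- part (2): finiteness
  have hfin2 : ∫⁻ x, gp x ∂ω ≤ 1 := by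
    have hpt : ∀ x, gp x ≤ D x := by
      intro x
      have h1 : gp x ≤ ENNReal.ofReal (D x).toReal := by
        apply ENNReal.ofReal_le_ofReal
        rcases eq_or_lt_of_le (ENNReal.toReal_nonneg : 0 ≤ (D x).toReal) with ht | ht
        · rw [← ht, Real.log_zero]
        · have := Real.log_le_sub_one_of_pos ht
          linarith
      exact h1.trans ENNReal.ofReal_toReal_le
    calc ∫⁻ x, gp x ∂ω ≤ ∫⁻ x, D x ∂ω := lintegral_mono hpt
      _ = 1 := hDint
  -- part (2): inequality
  have hae2 : ∀ᵐ x ∂ω, gp x + 1 ≤ gm x + D x := by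
    filter_upwards [hDlt, hDpos] with x hlt hpos
    have htop : D x ≠ ∞ := hlt.ne
    have ht : 0 < (D x).toReal := ENNReal.toReal_pos hpos.ne' htop
    set t : ℝ := (D x).toReal with htdef
    have hDx : D x = ENNReal.ofReal t := (ENNReal.ofReal_toReal htop).symm
    have hkey := Real.log_le_sub_one_of_pos ht
    rcases le_total (Real.log t) 0 with hl | hl
    · have hgpx : gp x = 0 := ENNReal.ofReal_eq_zero.2 hl
      rw [hgpx, zero_add, hDx]
      calc (1 : ℝ≥0∞) = ENNReal.ofReal 1 := ENNReal.ofReal_one.symm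
        _ ≤ ENNReal.ofReal (-Real.log t + t) := by
            apply ENNReal.ofReal_le_ofReal; linarith
        _ = ENNReal.ofReal (-Real.log t) + ENNReal.ofReal t :=
            ENNReal.ofReal_add (by linarith) ht.le
        _ = gm x + ENNReal.ofReal t := rfl

    · calc gp x + 1 = ENNReal.ofReal (Real.log t + 1) := by
            rw [ENNReal.ofReal_add hl zero_le_one, ENNReal.ofReal_one]
        _ ≤ ENNReal.ofReal t := by apply ENNReal.ofReal_le_ofReal; linarith
        _ = D x := hDx.symm
        _ ≤ gm x + D x := le_add_self
  have hAB' : ∫⁻ x, gp x ∂ω ≤ ∫⁻ x, gm x ∂ω := by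
    have h1 : (∫⁻ x, gp x ∂ω) + 1 ≤ (∫⁻ x, gm x ∂ω) + 1 := by
      calc (∫⁻ x, gp x ∂ω) + 1
          = ∫⁻ x, (gp x + 1) ∂ω := by rw [lintegral_add_left hgp]; simp
        _ ≤ ∫⁻ x, (gm x + D x) ∂ω := lintegral_mono_ae hae2
        _ = (∫⁻ x, gm x ∂ω) + ∫⁻ x, D x ∂ω := lintegral_add_left hgm _
        _ = (∫⁻ x, gm x ∂ω) + 1 := by rw [hDint]
    exact (ENNReal.add_le_add_iff_right one_ne_top).1 h1
  refine ⟨⟨?_, ?_⟩, ⟨?_, ?_⟩, ?_⟩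
  · rw [hA]; exact lt_of_le_of_lt hfin1 one_lt_top
  · rw [hA, hB]; exact hAB
  · rw [hA']; exact lt_of_le_of_lt hfin2 one_lt_top
  · rw [hA', hB']; exact hAB'
  -- part (3): time reversal
  · intro θ hθm hθθ hθT hθω
    have hθT' : ∀ y, θ (T (-1) y) = T 1 (θ y) := by
      intro y
      have h1 : θ (T 1 (θ y)) = T (-1) y := by
        have h := congrFun hθT (θ y)
        simp only [Function.comp_apply, hθθ] at h
        exact h
      calc θ (T (-1) y) = θ (θ (T 1 (θ y))) := by rw [h1]
        _ = T 1 (θ y) := hθθ _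
    set f : M → M := fun x => T 1 (θ x) with hf_def
    have hfmeas : Measurable f := (hTmeas 1).comp hθm
    set g : M → M := fun x => θ (T (-1) x) with hg_def
    have hgmeas : Measurable g := hθm.comp (hTmeas (-1))
    have hgf : ∀ x, g (f x) = x := by
      intro x
      show θ (T (-1) (T 1 (θ x))) = x
      rw [hid', hθθ]
    have hfg : ∀ x, f (g x) = x := by
      intro x
      show T 1 (θ (θ (T (-1) x))) = x
      rw [hθθ, hid]
    let e : M ≃ᵐ M :=
      { toFun := f, invFun := g, left_inv := hgf, right_inv := hfg,
        measurable_toFun := hfmeas, measurable_invFun := hgmeas }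
    have hemb : MeasurableEmbedding f := e.measurableEmbedding
    have hmap1 : ω.map f = ν := by
      rw [hν, show f = T 1 ∘ θ from rfl, ← Measure.map_map (hTmeas 1) hθm, hθω]
    have hmap2 : ν.map f = ω := by
      rw [hν, Measure.map_map hfmeas (hTmeas 1)]
      have : f ∘ T 1 = θ := by
        funext x
        show T 1 (θ (T 1 x)) = θ x
        have h := congrFun hθT x
        simp only [Function.comp_apply] at h
        rw [h, hid]
      rw [this, hθω]
    have h1 := hemb.rnDeriv_map ω ν
    rw [hmap1, hmap2] at h1
    have h2 : (ν.rnDeriv ω)⁻¹ =ᵐ[ν] ω.rnDeriv ν := Measure.inv_rnDeriv hνω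
    have h3 : ∀ᵐ x ∂ν, D (f x) = (D x)⁻¹ := by
      filter_upwards [h1, h2] with x h1x h2x
      rw [← hD] at h1x
      rw [h1x, ← h2x]
      rfl
    have h4 : ∀ᵐ x ∂ω, D (f x) = (D x)⁻¹ := hων.ae_le h3
    filter_upwards [h4] with x h4x
    show Real.log (Delta ω T 1 (T 1 (θ x))) = -Real.log (Delta ω T 1 (T 1 (T (-1) x)))
    have hDel : ∀ y, Delta ω T 1 y = (D y).toReal := fun y => rfl
    rw [hid x, hDel, hDel, show T 1 (θ x) = f x from rfl, h4x, ENNReal.toReal_inv,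
      Real.log_inv]
end

section
/- Finite time generalized Evans–Searles identity: fix X ∈ ℝ^N, and suppose the entropy cocycle of (M, (φ^t), ω) satisfies c^t = ∫_0^t (X·Φ)(φ^s(x)) ds for ω-a.e. x and every t ∈ ℝ, and that there is a time reversal θ with Φ ∘ θ = −Φ ω-a.e. Then for every t > 0 and every bounded measurable f : ℝ^N → ℝ, ∫_M f(−Σ^t(x)) dω(x) = ∫_M e^{−t X·Σ^t(x)} f(Σ^t(x)) dω(x), where Σ^t(x) := (1/t)∫_0^t Φ(φ^s(x)) ds; equivalently, the law of −Σ^t under ω is equivalent to the law P^t of Σ^t and has density e^{−t X·s} with respect to P^t. -/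
open MeasureTheory ENNReal intervalIntegral

/-- The mean flux over `[0,t]`: `Σ^t(x) := (1/t)∫_0^t Φ(φ^s(x)) ds` (componentwise). -/
noncomputable def meanFlux {M : Type*} {N : ℕ} (T : ℝ → M → M) (Φ : M → Fin N → ℝ)
    (t : ℝ) (x : M) (i : Fin N) : ℝ :=
  (1 / t) * ∫ s in (0:ℝ)..t, Φ (T s x) i

/-- Pull back an a.e. statement along a map whose pushforward is absolutely continuous. -/
lemma ae_comp_of_map_ac {M : Type*} [MeasurableSpace M] {ω : Measure M} {g : M → M}
    (hg : Measurable g) (hac : ω.map g ≪ ω) {P : M → Prop} (hP : ∀ᵐ y ∂ω, P y) :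
    ∀ᵐ x ∂ω, P (g x) :=
  ae_of_ae_map hg.aemeasurable (hac.ae_le hP)

/-- Finite time generalized Evans–Searles identity: if the entropy cocycle of
`(M,(φ^t),ω)` is `c^t = ∫_0^t (X·Φ)∘φ^s ds` and there is a time reversal `θ` with
`Φ∘θ = -Φ` a.e., then the law of `-Σ^t` has density `e^{-tX·s}` with respect to the law
of `Σ^t`; equivalently, for every bounded measurable `f`,
`∫ f(-Σ^t) dω = ∫ e^{-tX·Σ^t} f(Σ^t) dω`. -/
theorem finite_time_generalized_evans_searles
    {M : Type*} [MeasurableSpace M] (ω : Measure M) [IsProbabilityMeasure ω]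
    (T : ℝ → M → M)
    (hT0 : T 0 = id)
    (hTadd : ∀ s t : ℝ, T (s + t) = T s ∘ T t)
    (hTm : ∀ t : ℝ, Measurable (T t))
    (hTjoint : Measurable fun p : ℝ × M => T p.1 p.2)
    (hequiv : ∀ t : ℝ, ω.map (T t) ≪ ω ∧ ω ≪ ω.map (T t))
    {N : ℕ} (X : Fin N → ℝ)
    (Φ : M → Fin N → ℝ) (hΦm : Measurable Φ) (CΦ : ℝ) (hΦb : ∀ x, ‖Φ x‖ ≤ CΦ)
    (hcoc : ∀ t : ℝ, ∀ᵐ x ∂ω,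
      Real.log (((ω.map (T t)).rnDeriv ω (T t x)).toReal)
        = ∫ s in (0:ℝ)..t, ∑ i, X i * Φ (T s x) i)
    (θ : M → M) (hθm : Measurable θ) (hθinv : ∀ x, θ (θ x) = x)
    (hθT : ∀ t : ℝ, θ ∘ T t = T (-t) ∘ θ) (hθω : ω.map θ = ω)
    (hΦθ : ∀ᵐ x ∂ω, Φ (θ x) = -Φ x) :
    ∀ t : ℝ, 0 < t →
      ∀ f : (Fin N → ℝ) → ℝ, Measurable f → ∀ C : ℝ, (∀ v, |f v| ≤ C) →
        ∫ x, f (fun i => -(meanFlux T Φ t x i)) ∂ω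
          = ∫ x, Real.exp (-(t * ∑ i, X i * meanFlux T Φ t x i))
              * f (fun i => meanFlux T Φ t x i) ∂ω := by
  intro t ht f hf C hfC
  -- pointwise algebraic flow identities
  have hTpt : ∀ (s u : ℝ) (x : M), T s (T u x) = T (s + u) x := fun s u x =>
    (congrFun (hTadd s u) x).symm
  have hθTpt : ∀ (u : ℝ) (x : M), θ (T u x) = T (-u) (θ x) := fun u x => congrFun (hθT u) x
  have key_pt : ∀ (s : ℝ) (x : M), T s (θ (T t x)) = θ (T (t - s) x) := by
    intro s x
    rw [hθTpt t x, hTpt, hθTpt (t - s) x]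
    congr 1
    ring
  have hfix : ∀ x : M, T t (θ (T t x)) = θ x := by
    intro x
    rw [hθTpt t x, hTpt]
    simp [hT0]
  -- measurability of the flux along the flow
  have hΦi : ∀ i : Fin N, Measurable fun y : M => Φ y i := fun i =>
    (measurable_pi_apply i).comp hΦm
  have hjm : ∀ i : Fin N, Measurable fun p : M × ℝ => Φ (T p.2 p.1) i := fun i =>
    (hΦi i).comp (hTjoint.comp measurable_swap)
  have hsm : ∀ (x : M) (i : Fin N), Measurable fun s : ℝ => Φ (T s x) i := fun x i =>
    (hΦi i).comp (hTjoint.comp (measurable_id.prodMk measurable_const))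
  -- interval integrability of the flux components
  have hii : ∀ (x : M) (i : Fin N), IntervalIntegrable (fun s => Φ (T s x) i) volume 0 t := by
    intro x i
    rw [intervalIntegrable_iff]
    haveI : IsFiniteMeasure ((volume : Measure ℝ).restrict (Set.uIoc (0:ℝ) t)) :=
      ⟨by rw [Measure.restrict_apply_univ]; exact measure_Ioc_lt_top⟩
    refine (integrable_const CΦ).mono' ((hsm x i).aestronglyMeasurable) ?_
    refine Filter.Eventually.of_forall fun s => ?_
    calc ‖Φ (T s x) i‖ ≤ ‖Φ (T s x)‖ := norm_le_pi_norm _ i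
      _ ≤ CΦ := hΦb _
  -- measurability of the mean flux
  have hMF : Measurable fun x => meanFlux T Φ t x := by
    apply measurable_pi_lambda
    intro i
    unfold meanFlux
    have h1 : Measurable fun x : M => ∫ s in Set.Ioc (0:ℝ) t, Φ (T s x) i ∂volume :=
      ((hjm i).stronglyMeasurable.integral_prod_right').measurable
    have : (fun x : M => ∫ s in (0:ℝ)..t, Φ (T s x) i)
        = fun x : M => ∫ s in Set.Ioc (0:ℝ) t, Φ (T s x) i ∂volume := by
      funext x; exact intervalIntegral.integral_of_le ht.le
    exact (this ▸ h1).const_mul (1 / t)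
  -- a.e. in x, a.e. in s, the time reversal relation along the flow
  have hsec : ∀ s : ℝ, ∀ᵐ x ∂ω, Φ (θ (T s x)) = -Φ (T s x) := fun s =>
    ae_comp_of_map_ac (hTm s) (hequiv s).1 hΦθ
  have hBm : MeasurableSet {p : M × ℝ | Φ (θ (T p.2 p.1)) = -Φ (T p.2 p.1)} := by
    apply measurableSet_eq_fun
    · exact (hΦm.comp hθm).comp (hTjoint.comp measurable_swap)
    · exact (hΦm.comp (hTjoint.comp measurable_swap)).neg
  have hprodnull : (ω.prod (volume : Measure ℝ))
      {p : M × ℝ | Φ (θ (T p.2 p.1)) = -Φ (T p.2 p.1)}ᶜ = 0 := by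
    have hswap : (ω.prod (volume : Measure ℝ))
          {p : M × ℝ | Φ (θ (T p.2 p.1)) = -Φ (T p.2 p.1)}ᶜ
        = ((volume : Measure ℝ).prod ω)
          (Prod.swap ⁻¹' ({p : M × ℝ | Φ (θ (T p.2 p.1)) = -Φ (T p.2 p.1)}ᶜ)) := by
      rw [← Measure.prod_swap, Measure.map_apply measurable_swap hBm.compl]
    rw [hswap, Measure.prod_apply (measurable_swap hBm.compl)]
    have hz : ∀ s : ℝ, ω (Prod.mk s ⁻¹'
        (Prod.swap ⁻¹' ({p : M × ℝ | Φ (θ (T p.2 p.1)) = -Φ (T p.2 p.1)}ᶜ))) = 0 := by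
      intro s
      have h := hsec s
      rw [ae_iff] at h
      exact h
    simp only [hz]
    simp
  have hprod : ∀ᵐ x ∂ω, ∀ᵐ s ∂(volume : Measure ℝ), Φ (θ (T s x)) = -Φ (T s x) := by
    have : ∀ᵐ p ∂(ω.prod (volume : Measure ℝ)), Φ (θ (T p.2 p.1)) = -Φ (T p.2 p.1) := by
      rw [ae_iff]
      convert hprodnull using 2
      rfl
    exact Measure.ae_ae_of_ae_prod this
  -- Step A : Σ^t ∘ θ ∘ T t = -Σ^t a.e.
  have hA : ∀ᵐ x ∂ω, ∀ i, meanFlux T Φ t (θ (T t x)) i = -meanFlux T Φ t x i := by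
    filter_upwards [hprod] with x hx
    intro i
    have hmp : MeasurePreserving (fun s : ℝ => t - s) volume volume := by
      have := (measurePreserving_add_left (volume : Measure ℝ) t).comp
        (Measure.measurePreserving_neg (volume : Measure ℝ))
      simpa [Function.comp_def, sub_eq_add_neg] using this
    have hx' : ∀ᵐ s ∂(volume : Measure ℝ), Φ (θ (T (t - s) x)) = -Φ (T (t - s) x) :=
      ae_of_ae_map hmp.aemeasurable (by rw [hmp.map_eq]; exact hx)
    unfold meanFlux
    have e1 : (∫ s in (0:ℝ)..t, Φ (T s (θ (T t x))) i)
        = ∫ s in (0:ℝ)..t, -(Φ (T (t - s) x) i) := by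
      apply intervalIntegral.integral_congr_ae
      filter_upwards [hx'] with s hs _
      rw [key_pt s x, hs]
      simp
    have e2 : (∫ s in (0:ℝ)..t, Φ (T (t - s) x) i) = ∫ s in (0:ℝ)..t, Φ (T s x) i := by
      have h := intervalIntegral.integral_comp_sub_left (a := (0:ℝ)) (b := t)
        (fun s => Φ (T s x) i) t
      simpa using h
    rw [e1, intervalIntegral.integral_neg, e2]
    ring
  -- the Radon–Nikodym derivative
  set D : M → ℝ≥0∞ := (ω.map (T t)).rnDeriv ω with hD
  have hDm : Measurable D := Measure.measurable_rnDeriv _ _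
  haveI : IsProbabilityMeasure (ω.map (T t)) := Measure.isProbabilityMeasure_map (hTm t).aemeasurable
  have hQ : ∀ᵐ y ∂ω, 0 < D y ∧ D y < ⊤ := by
    have hpos : ∀ᵐ y ∂ω, 0 < D y :=
      (hequiv t).2.ae_le (Measure.rnDeriv_pos (hequiv t).1)
    exact hpos.and (Measure.rnDeriv_lt_top _ _)
  have hacθT : ω.map (fun x => θ (T t x)) ≪ ω := by
    have h1 : ω.map (fun x => θ (T t x)) = (ω.map (T t)).map θ := by
      rw [Measure.map_map hθm (hTm t)]
      rfl
    rw [h1]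
    calc (ω.map (T t)).map θ ≪ ω.map θ := (hequiv t).1.map hθm
      _ = ω := hθω
  -- cocycle identity pulled back along θ ∘ T t
  have hcoc' : ∀ᵐ x ∂ω, Real.log ((D (θ x)).toReal)
      = ∫ s in (0:ℝ)..t, ∑ i, X i * Φ (T s (θ (T t x))) i := by
    have h := ae_comp_of_map_ac (hθm.comp (hTm t)) hacθT (hcoc t)
    filter_upwards [h] with x hx
    simpa [Function.comp, hfix x, hD] using hx
  have hQθ : ∀ᵐ x ∂ω, 0 < D (θ x) ∧ D (θ x) < ⊤ :=
    ae_comp_of_map_ac hθm (by rw [hθω]) hQ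
  -- rewriting the cocycle integral as t * X·Σ^t
  have hsum : ∀ y : M, (∫ s in (0:ℝ)..t, ∑ i, X i * Φ (T s y) i)
      = t * ∑ i, X i * meanFlux T Φ t y i := by
    intro y
    rw [intervalIntegral.integral_finset_sum (fun i _ => (hii y i).const_mul (X i))]
    unfold meanFlux
    rw [Finset.mul_sum]
    refine Finset.sum_congr rfl fun i _ => ?_
    rw [intervalIntegral.integral_const_mul]
    field_simp
  -- Step B : D ∘ θ = exp(-t X·Σ^t) a.e.
  have hB : ∀ᵐ x ∂ω, (D (θ x)).toReal
      = Real.exp (-(t * ∑ i, X i * meanFlux T Φ t x i)) := by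
    filter_upwards [hcoc', hQθ, hA] with x h1 h2 h3
    have hpos : 0 < (D (θ x)).toReal := ENNReal.toReal_pos h2.1.ne' h2.2.ne
    have hlog : Real.log ((D (θ x)).toReal) = -(t * ∑ i, X i * meanFlux T Φ t x i) := by
      rw [h1, hsum (θ (T t x))]
      have : ∑ i, X i * meanFlux T Φ t (θ (T t x)) i
          = -∑ i, X i * meanFlux T Φ t x i := by
        rw [← Finset.sum_neg_distrib]
        exact Finset.sum_congr rfl fun i _ => by rw [h3 i]; ring
      rw [this]
      ring
    rw [← Real.exp_log hpos, hlog]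
  -- assembling the integrals
  have step1 : ∫ x, f (fun i => -(meanFlux T Φ t x i)) ∂ω
      = ∫ x, f (meanFlux T Φ t (θ (T t x))) ∂ω := by
    apply MeasureTheory.integral_congr_ae
    filter_upwards [hA] with x hx
    congr 1
    funext i
    rw [hx i]
  have step2 : ∫ x, f (meanFlux T Φ t (θ (T t x))) ∂ω
      = ∫ y, f (meanFlux T Φ t (θ y)) ∂(ω.map (T t)) :=
    (integral_map (hTm t).aemeasurable
      ((hf.comp (hMF.comp hθm)).aestronglyMeasurable)).symm
  have step3 : ∫ y, f (meanFlux T Φ t (θ y)) ∂(ω.map (T t))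
      = ∫ y, (D y).toReal • f (meanFlux T Φ t (θ y)) ∂ω :=
    (MeasureTheory.integral_rnDeriv_smul (hequiv t).1).symm
  have step4 : ∫ y, (D y).toReal • f (meanFlux T Φ t (θ y)) ∂ω
      = ∫ x, (D (θ x)).toReal • f (meanFlux T Φ t (θ (θ x))) ∂ω := by
    conv_lhs => rw [← hθω]
    exact integral_map hθm.aemeasurable
      ((hDm.ennreal_toReal.smul (hf.comp (hMF.comp hθm))).aestronglyMeasurable)
  have step5 : ∫ x, (D (θ x)).toReal • f (meanFlux T Φ t (θ (θ x))) ∂ω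
      = ∫ x, Real.exp (-(t * ∑ i, X i * meanFlux T Φ t x i))
          * f (fun i => meanFlux T Φ t x i) ∂ω := by
    apply MeasureTheory.integral_congr_ae
    filter_upwards [hB] with x hx
    rw [hθinv x, hx, smul_eq_mul]
  rw [step1, step2, step3, step4, step5]
end

section
/- Finite time Green–Kubo formula and Onsager reciprocity relations: fix t > 0 and suppose that for each X in an open neighborhood of 0 in ℝ^N one is given a system (M, (φ_X^t), ω_X) as in the continuous-time setup together with a bounded measurable flux observable Φ_X = (Φ_X^{(1)},…,Φ_X^{(N)}) : M → ℝ^N whose entropy cocycle satisfies c_X^t = ∫_0^t (X·Φ_X) ∘ φ_X^s ds ω_X-a.e. for all t. Assume (T1): ω_0 is invariant under φ_0^t for all t; (T2): each system has a time reversal θ_X with Φ_X ∘ θ_X = −Φ_X ω_X-a.e.; and that g_t(X,Y) := log ∫_M exp(−Y·∫_0^t Φ_X(φ_X^s(x)) ds) dω_X(x) is C^{1,2} in a neighborhood of (X,Y) = (0,0). Then X ↦ ⟨Φ_X^{(j)}⟩_t := (1/t)∫_0^t (∫_M Φ_X^{(j)} ∘ φ_X^s dω_X) ds is differentiable at X =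 0 for each j, and the finite time kinetic transport coefficients L_{jkt} := ∂_{X_k}⟨Φ_X^{(j)}⟩_t|_{X=0} satisfy: (1) L_{jkt} = (1/2)∫_{−t}^{t} ω(Φ^{(k)}·(Φ^{(j)} ∘ φ^s))(1 − |s|/t) ds, where ω = ω_0, φ = φ_0, Φ = Φ_0; (2) L_{jkt} = L_{kjt}. -/
open MeasureTheory ENNReal intervalIntegral

/-- The time-averaged expectation value of the flux:
`⟨Φ^{(j)}⟩_t := (1/t)∫_0^t ω(Φ^{(j)}∘φ^s) ds`. -/
noncomputable def fluxAvg {M : Type*} [MeasurableSpace M] {N : ℕ}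
    (ω : Measure M) (T : ℝ → M → M) (Φ : M → Fin N → ℝ) (t : ℝ) (j : Fin N) : ℝ :=
  (1 / t) * ∫ s in (0:ℝ)..t, ∫ x, Φ (T s x) j ∂ω

/-- The generalized Evans–Searles functional
`g_t(X,Y) := log ∫ exp(-Y·∫_0^t Φ_X∘φ_X^s ds) dω_X` (here for fixed data of one `X`). -/
noncomputable def gES {M : Type*} [MeasurableSpace M] {N : ℕ}
    (ω : Measure M) (T : ℝ → M → M) (Φ : M → Fin N → ℝ) (t : ℝ) (Y : Fin N → ℝ) : ℝ :=
  Real.log (∫ x, Real.exp (-(∑ i, Y i * ∫ s in (0:ℝ)..t, Φ (T s x) i)) ∂ω)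


open Real Set Filter

section AuxHelpers
variable {M : Type*} [MeasurableSpace M]

lemma aux_integrable_of_bounded {ω : Measure M} [IsFiniteMeasure ω] {f : M → ℝ}
    (hm : AEStronglyMeasurable f ω) {C : ℝ} (h : ∀ x, |f x| ≤ C) : Integrable f ω :=
  Integrable.mono' (integrable_const C) hm (ae_of_all _ fun x => by
    simpa [Real.norm_eq_abs] using h x)

lemma aux_nonempty (ω : Measure M) [IsProbabilityMeasure ω] : Nonempty M := by
  by_contra h
  rw [not_nonempty_iff] at h
  have h1 : ω Set.univ = 1 := measure_univ
  simp [Set.univ_eq_empty_iff.2 h] at h1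

lemma aux_hasDerivAt_exp_integral (ω : Measure M) [IsProbabilityMeasure ω]
    {w ψ : M → ℝ} (hw : Measurable w) (hψ : Measurable ψ)
    {Cw Cψ : ℝ} (hwb : ∀ x, |w x| ≤ Cw) (hψb : ∀ x, |ψ x| ≤ Cψ) (u₀ : ℝ) :
    HasDerivAt (fun u => ∫ x, w x * Real.exp (u * ψ x) ∂ω)
      (∫ x, w x * ψ x * Real.exp (u₀ * ψ x) ∂ω) u₀ := by
  have : Nonempty M := aux_nonempty ω
  have hCψ : 0 ≤ Cψ := le_trans (abs_nonneg _) (hψb (Classical.arbitrary M))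
  have hCw : 0 ≤ Cw := le_trans (abs_nonneg _) (hwb (Classical.arbitrary M))
  have key : ∀ (u : ℝ) (x : M), u ∈ Metric.ball u₀ 1 →
      |w x * ψ x * Real.exp (u * ψ x)| ≤ Cw * Cψ * Real.exp ((|u₀| + 1) * Cψ) := by
    intro u x hu
    rw [abs_mul, abs_mul]
    have h1 : Real.exp (u * ψ x) ≤ Real.exp ((|u₀| + 1) * Cψ) := by
      apply Real.exp_le_exp.2
      calc u * ψ x ≤ |u * ψ x| := le_abs_self _
        _ = |u| * |ψ x| := abs_mul _ _
        _ ≤ (|u₀| + 1) * Cψ := by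
            apply mul_le_mul _ (hψb x) (abs_nonneg _) (by positivity)
            have := Metric.mem_ball.1 hu
            rw [Real.dist_eq] at this
            calc |u| ≤ |u₀| + |u - u₀| := by
                  have := abs_sub_abs_le_abs_sub u u₀; linarith
              _ ≤ |u₀| + 1 := by linarith
    have h2 : (0:ℝ) ≤ Real.exp (u * ψ x) := (Real.exp_pos _).le
    gcongr
    · exact hwb x
    · exact hψb x
    · rwa [abs_of_nonneg h2]
  have hd := _root_.hasDerivAt_integral_of_dominated_loc_of_deriv_le (μ := ω)
    (F := fun u x => w x * Real.exp (u * ψ x))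
    (F' := fun u x => w x * ψ x * Real.exp (u * ψ x))
    (bound := fun _ => Cw * Cψ * Real.exp ((|u₀| + 1) * Cψ))
    (x₀ := u₀) (s := Metric.ball u₀ 1) (Metric.ball_mem_nhds u₀ one_pos)
    (Filter.Eventually.of_forall fun u =>
      ((hw.mul ((measurable_const.mul hψ).exp)).aestronglyMeasurable))
    (aux_integrable_of_bounded
      ((hw.mul ((measurable_const.mul hψ).exp)).aestronglyMeasurable)
      (C := Cw * Real.exp ((|u₀| + 1) * Cψ)) (fun x => by
        have := key u₀ x (Metric.mem_ball_self one_pos)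
        rw [abs_mul]
        have h1 : Real.exp (u₀ * ψ x) ≤ Real.exp ((|u₀| + 1) * Cψ) := by
          apply Real.exp_le_exp.2
          calc u₀ * ψ x ≤ |u₀ * ψ x| := le_abs_self _
            _ = |u₀| * |ψ x| := abs_mul _ _
            _ ≤ (|u₀| + 1) * Cψ := by
                apply mul_le_mul (by linarith [le_abs_self u₀, abs_nonneg u₀])
                  (hψb x) (abs_nonneg _) (by positivity)
        have h2 : (0:ℝ) ≤ Real.exp (u₀ * ψ x) := (Real.exp_pos _).le
        gcongr
        · exact hwb x
        · rwa [abs_of_nonneg h2]))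
    (((hw.mul hψ).mul ((measurable_const.mul hψ).exp)).aestronglyMeasurable)
    (ae_of_all _ fun x u hu => by
      simpa only [Real.norm_eq_abs] using key u x hu)
    (integrable_const _)
    (ae_of_all _ fun x u _ => by
      have h : HasDerivAt (fun u : ℝ => u * ψ x) (ψ x) u := by
        simpa using (hasDerivAt_id u).mul_const (ψ x)
      have := (h.exp).const_mul (w x)
      exact this.congr_deriv (by ring))
  exact hd.2


lemma aux_meas_param (a b : ℝ) {f : ℝ × M → ℝ} (hf : Measurable f) :
    Measurable fun x => ∫ s in a..b, f (s, x) := by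
  have h1 : ∀ c d : ℝ, Measurable fun x => ∫ s in Set.Ioc c d, f (s, x) := by
    intro c d
    exact (hf.stronglyMeasurable.integral_prod_left'
      (μ := volume.restrict (Set.Ioc c d))).measurable
  simp only [intervalIntegral]
  exact (h1 a b).sub (h1 b a)

lemma aux_swap_integral (ω : Measure M) [IsFiniteMeasure ω] {a b : ℝ} (hab : a ≤ b)
    {f : ℝ × M → ℝ} (hf : Measurable f) {C : ℝ} (hC : ∀ p, |f p| ≤ C) :
    ∫ x, (∫ s in a..b, f (s, x)) ∂ω = ∫ s in a..b, (∫ x, f (s, x) ∂ω) := by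
  rw [intervalIntegral.integral_of_le hab]
  have : ∀ x, (∫ s in a..b, f (s, x)) = ∫ s in Set.Ioc a b, f (s, x) := fun x =>
    intervalIntegral.integral_of_le hab
  simp_rw [this]
  haveI : IsFiniteMeasure (volume.restrict (Set.Ioc a b)) :=
    ⟨by simp [Real.volume_Ioc, lt_top_iff_ne_top]⟩
  exact (MeasureTheory.integral_integral_swap (f := fun s x => f (s, x))
    (aux_integrable_of_bounded (ω := (volume.restrict (Set.Ioc a b)).prod ω)
      hf.aestronglyMeasurable hC)).symm

lemma aux_ae_pair (μ : Measure ℝ) [SFinite μ] (ω : Measure M) [SFinite ω]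
    {p : ℝ × M → Prop} (hp : MeasurableSet {q | p q}) (h : ∀ s, ∀ᵐ x ∂ω, p (s, x)) :
    ∀ᵐ x ∂ω, ∀ᵐ s ∂μ, p (s, x) := by
  have hA : (μ.prod ω) {q | ¬ p q} = 0 := by
    have hc : MeasurableSet {q : ℝ × M | ¬ p q} := by
      simpa [Set.compl_setOf] using hp.compl
    rw [Measure.prod_apply hc]
    have : ∀ s : ℝ, ω (Prod.mk s ⁻¹' {q | ¬ p q}) = 0 := fun s => by
      have := h s
      rw [ae_iff] at this
      exact this
    have : ∀ x : ℝ, ω {a | ¬p (x, a)} = 0 := fun x => by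
      simpa [Set.preimage] using this x
    simp [this]
  have hB : (ω.prod μ) {q : M × ℝ | ¬ p (q.2, q.1)} = 0 := by
    have hswap : (ω.prod μ) = (μ.prod ω).map Prod.swap := (Measure.prod_swap).symm
    rw [hswap, Measure.map_apply measurable_swap]
    · exact hA
    · have hc : MeasurableSet {q : ℝ × M | ¬ p q} := by
        simpa [Set.compl_setOf] using hp.compl
      exact hc.preimage measurable_swap
  have := (Measure.ae_ae_of_ae_prod (μ := ω) (ν := μ)
    (p := fun q : M × ℝ => p (q.2, q.1)) ?_)
  · exact this
  · rw [Filter.eventually_iff, mem_ae_iff]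
    have he : {x : M × ℝ | p (x.2, x.1)}ᶜ = {q : M × ℝ | ¬ p (q.2, q.1)} := by
      ext q; simp
    rw [he]
    exact hB

lemma aux_ae_trans {μ ν : Measure M} (h : μ ≪ ν) {p : M → Prop}
    (hp : ∀ᵐ x ∂ν, p x) : ∀ᵐ x ∂μ, p x :=
  Filter.Eventually.filter_mono h.ae_le hp

lemma aux_uIoc (t : ℝ) (ht : 0 < t) : Set.uIoc (0:ℝ) t = Set.Ioc 0 t := by
  rw [Set.uIoc_of_le ht.le]

lemma aux_interval_congr_ae {f g : ℝ → ℝ} {t : ℝ} (ht : 0 < t)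
    (h : ∀ᵐ s ∂(volume.restrict (Set.Ioc (0:ℝ) t)), f s = g s) :
    ∫ s in (0:ℝ)..t, f s = ∫ s in (0:ℝ)..t, g s := by
  apply intervalIntegral.integral_congr_ae
  rw [aux_uIoc t ht]
  exact (ae_restrict_iff' measurableSet_Ioc).1 h

lemma aux_intervalIntegrable {f : ℝ → ℝ} (hm : Measurable f) {C : ℝ}
    (hb : ∀ s, |f s| ≤ C) (a b : ℝ) : IntervalIntegrable f volume a b := by
  rw [intervalIntegrable_iff]
  haveI : IsFiniteMeasure (volume.restrict (Set.uIoc a b)) :=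
    ⟨by simp [Set.uIoc, Real.volume_Ioc, lt_top_iff_ne_top]⟩
  exact aux_integrable_of_bounded hm.aestronglyMeasurable hb

section ES
variable {N : ℕ}

lemma aux_ES_symmetry (ω : Measure M) [IsProbabilityMeasure ω]
    (T : ℝ → M → M) (hT0 : T 0 = id) (hTadd : ∀ s u : ℝ, T (s + u) = T s ∘ T u)
    (hTm : ∀ u : ℝ, Measurable (T u)) (hTj : Measurable fun p : ℝ × M => T p.1 p.2)
    (hequiv : ∀ u : ℝ, ω.map (T u) ≪ ω ∧ ω ≪ ω.map (T u))
    (Φ : M → Fin N → ℝ) (hΦm : Measurable Φ) {C : ℝ} (hΦb : ∀ x i, |Φ x i| ≤ C)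
    (X : Fin N → ℝ)
    (hcoc : ∀ u : ℝ, ∀ᵐ x ∂ω, Real.log (((ω.map (T u)).rnDeriv ω (T u x)).toReal)
      = ∫ s in (0:ℝ)..u, ∑ i, X i * Φ (T s x) i)
    (θ : M → M) (hθm : Measurable θ)
    (hθT : ∀ u : ℝ, θ ∘ T u = T (-u) ∘ θ) (hθω : ω.map θ = ω)
    (hθΦ : ∀ᵐ x ∂ω, Φ (θ x) = - Φ x)
    (t : ℝ) (ht : 0 < t) (Y : Fin N → ℝ) :
    ∫ x, Real.exp (-(∑ i, Y i * ∫ s in (0:ℝ)..t, Φ (T s x) i)) ∂ω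
      = ∫ x, Real.exp (-(∑ i, (X i - Y i) * ∫ s in (0:ℝ)..t, Φ (T s x) i)) ∂ω := by
  set S : M → Fin N → ℝ := fun x i => ∫ s in (0:ℝ)..t, Φ (T s x) i with hS
  set R : M → Fin N → ℝ := fun x i => ∫ s in (0:ℝ)..t, Φ (T (-s) x) i with hR
  have hSm : ∀ i, Measurable fun x => S x i := fun i =>
    aux_meas_param 0 t ((measurable_pi_apply i).comp (hΦm.comp hTj))
  have hRm : ∀ i, Measurable fun x => R x i := fun i => by
    have : Measurable fun p : ℝ × M => Φ (T (-p.1) p.2) i :=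
      (measurable_pi_apply i).comp (hΦm.comp (hTj.comp
        ((measurable_fst.neg).prodMk measurable_snd)))
    exact aux_meas_param 0 t this
  have hTinv : ∀ u : ℝ, ∀ x, T u (T (-u) x) = x := by
    intro u x
    have h1 : T (u + -u) = T u ∘ T (-u) := hTadd u (-u)
    simp only [add_neg_cancel, hT0] at h1
    exact (congrFun h1.symm x)
  -- Step A : θ-step
  have stepA : ∫ x, Real.exp (-(∑ i, Y i * S x i)) ∂ω
      = ∫ x, Real.exp (∑ i, Y i * R x i) ∂ω := by
    have hmeasL : AEStronglyMeasurable (fun x => Real.exp (-(∑ i, Y i * S x i))) ω :=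
      (((Finset.measurable_sum _ fun i _ => (hSm i).const_mul (Y i)).neg).exp).aestronglyMeasurable
    calc ∫ x, Real.exp (-(∑ i, Y i * S x i)) ∂ω
        = ∫ x, Real.exp (-(∑ i, Y i * S x i)) ∂(ω.map θ) := by rw [hθω]
      _ = ∫ x, Real.exp (-(∑ i, Y i * S (θ x) i)) ∂ω := by
          rw [integral_map hθm.aemeasurable (by rwa [hθω])]
      _ = ∫ x, Real.exp (∑ i, Y i * R x i) ∂ω := by
          apply MeasureTheory.integral_congr_ae
          have hae : ∀ᵐ x ∂ω, ∀ i, S (θ x) i = - R x i := by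
            have hP : MeasurableSet {q : ℝ × M |
                Φ (θ (T (-q.1) q.2)) = - (Φ (T (-q.1) q.2))} := by
              have hm1 : Measurable fun q : ℝ × M => Φ (θ (T (-q.1) q.2)) :=
                hΦm.comp (hθm.comp (hTj.comp ((measurable_fst.neg).prodMk measurable_snd)))
              have hm2 : Measurable fun q : ℝ × M => -(Φ (T (-q.1) q.2)) :=
                (hΦm.comp (hTj.comp ((measurable_fst.neg).prodMk measurable_snd))).neg
              exact measurableSet_eq_fun hm1 hm2
            have hsec : ∀ s : ℝ, ∀ᵐ x ∂ω, Φ (θ (T (-s) x)) = - (Φ (T (-s) x)) := by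
              intro s
              have h1 : ∀ᵐ y ∂(ω.map (T (-s))), Φ (θ y) = - Φ y :=
                aux_ae_trans (hequiv (-s)).1 hθΦ
              exact (ae_map_iff (p := fun y => Φ (θ y) = - Φ y) (hTm (-s)).aemeasurable
                (measurableSet_eq_fun (f := fun y => Φ (θ y)) (g := fun y => -Φ y)
                  (hΦm.comp hθm) hΦm.neg)).1 h1
            have hpp := aux_ae_pair (volume.restrict (Set.Ioc (0:ℝ) t)) ω hP hsec
            filter_upwards [hpp] with x hx
            intro i
            have h1 : ∀ s : ℝ, T s (θ x) = θ (T (-s) x) := by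
              intro s
              have := congrFun (hθT (-s)) x
              simp only [Function.comp_apply, neg_neg] at this
              exact this.symm
            have h2 : S (θ x) i = ∫ s in (0:ℝ)..t, Φ (θ (T (-s) x)) i := by
              simp only [hS]
              congr 1
              ext s
              rw [h1 s]
            rw [h2]
            have h3 : ∫ s in (0:ℝ)..t, Φ (θ (T (-s) x)) i
                = ∫ s in (0:ℝ)..t, - Φ (T (-s) x) i := by
              apply aux_interval_congr_ae ht
              filter_upwards [hx] with s hs
              rw [hs]
              simp
            rw [h3, intervalIntegral.integral_neg]
          filter_upwards [hae] with x hx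
          simp only [hx]
          congr 1
          simp [mul_neg, Finset.sum_neg_distrib]
  -- Step B : flow step
  haveI : IsProbabilityMeasure (ω.map (T (-t))) :=
    Measure.isProbabilityMeasure_map (hTm (-t)).aemeasurable
  set μ := ω.map (T (-t)) with hμdef
  set D : M → ℝ := fun x => (μ.rnDeriv ω x).toReal with hD
  have hDm : Measurable D := (Measure.measurable_rnDeriv μ ω).ennreal_toReal
  have hRT : ∀ y i, R (T t y) i = S y i := by
    intro y i
    have h1 : ∀ s : ℝ, T (-s) (T t y) = T (t - s) y := fun s => by
      have h2 := congrFun (hTadd (-s) t) y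
      rw [show -s + t = t - s by ring] at h2
      exact h2.symm
    simp only [hR]
    calc ∫ s in (0:ℝ)..t, Φ (T (-s) (T t y)) i
        = ∫ s in (0:ℝ)..t, Φ (T (t - s) y) i := by
          congr 1; ext s; rw [h1 s]
      _ = ∫ u in t - t..t - 0, Φ (T u y) i :=
          intervalIntegral.integral_comp_sub_left (fun u => Φ (T u y) i) t
      _ = S y i := by norm_num [hS]
  have hb3 : ∀ᵐ y ∂ω, D y = Real.exp (-(∑ i, X i * S y i)) := by
    have hQset : MeasurableSet {x | Real.log (D (T (-t) x))
        = ∫ s in (0:ℝ)..(-t), ∑ i, X i * Φ (T s x) i} := by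
      apply measurableSet_eq_fun
      · exact (hDm.comp (hTm (-t))).log
      · exact aux_meas_param 0 (-t) (Finset.measurable_sum _ fun i _ =>
          ((measurable_pi_apply i).comp (hΦm.comp hTj)).const_mul (X i))
    have hQ2 : ∀ᵐ y ∂ω, Real.log (D (T (-t) (T t y)))
        = ∫ s in (0:ℝ)..(-t), ∑ i, X i * Φ (T s (T t y)) i := by
      have h1 : ∀ᵐ x ∂(ω.map (T t)), Real.log (D (T (-t) x))
          = ∫ s in (0:ℝ)..(-t), ∑ i, X i * Φ (T s x) i :=
        aux_ae_trans (hequiv t).1 (hcoc (-t))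
      exact (ae_map_iff (p := fun x => Real.log (D (T (-t) x))
        = ∫ s in (0:ℝ)..(-t), ∑ i, X i * Φ (T s x) i) (hTm t).aemeasurable hQset).1 h1
    have hpos : ∀ᵐ y ∂ω, 0 < μ.rnDeriv ω y :=
      aux_ae_trans (hequiv (-t)).2 (Measure.rnDeriv_pos (hequiv (-t)).1)
    filter_upwards [hQ2, hpos, Measure.rnDeriv_lt_top μ ω] with y h1 h2 h3
    have h4 : T (-t) (T t y) = y := by
      have := hTinv (-t) y
      rwa [neg_neg] at this
    rw [h4] at h1
    have h5 : ∀ s : ℝ, T s (T t y) = T (s + t) y := fun s =>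
      (congrFun (hTadd s t) y).symm
    have h6 : ∫ s in (0:ℝ)..(-t), ∑ i, X i * Φ (T s (T t y)) i
        = ∫ s in (0:ℝ)..(-t), (fun u => ∑ i, X i * Φ (T u y) i) (s + t) := by
      congr 1; ext s; rw [h5 s]
    have h7 := intervalIntegral.integral_comp_add_right (a := (0:ℝ)) (b := -t)
      (f := fun u => ∑ i, X i * Φ (T u y) i) t
    have h8 : ∫ u in (0 + t)..(-t + t), ∑ i, X i * Φ (T u y) i
        = - ∫ u in (0:ℝ)..t, ∑ i, X i * Φ (T u y) i := by
      rw [show (0:ℝ) + t = t by ring, show -t + t = 0 by ring,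
        intervalIntegral.integral_symm]
    have h9 : ∫ u in (0:ℝ)..t, ∑ i, X i * Φ (T u y) i = ∑ i, X i * S y i := by
      rw [intervalIntegral.integral_finset_sum]
      · simp only [hS]
        congr 1
        ext i
        rw [intervalIntegral.integral_const_mul]
      · intro i _
        apply aux_intervalIntegrable (C := |X i| * C)
        · exact ((measurable_pi_apply i).comp (hΦm.comp
            (hTj.comp (measurable_id.prodMk measurable_const)))).const_mul (X i)
        · intro s
          rw [abs_mul]
          exact mul_le_mul_of_nonneg_left (hΦb _ i) (abs_nonneg _)
    have hlog : Real.log (D y) = -(∑ i, X i * S y i) := by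
      rw [h1, h6, h7, h8, h9]
    have hDpos : 0 < D y := ENNReal.toReal_pos h2.ne' h3.ne
    rw [← hlog, Real.exp_log hDpos]
  have hfmS : Measurable fun y => Real.exp (∑ i, Y i * S y i) :=
    ((Finset.measurable_sum _ fun i _ => (hSm i).const_mul (Y i))).exp
  have stepB : ∫ x, Real.exp (∑ i, Y i * R x i) ∂ω
      = ∫ x, Real.exp (-(∑ i, (X i - Y i) * S x i)) ∂ω := by
    have hg : Measurable fun y => Real.exp (∑ i, Y i * R (T t y) i) := by
      have : (fun y => Real.exp (∑ i, Y i * R (T t y) i))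
          = fun y => Real.exp (∑ i, Y i * S y i) := by
        ext y; simp only [hRT]
      rw [this]; exact hfmS
    have h0 := MeasureTheory.integral_rnDeriv_smul (μ := μ) (ν := ω) (hequiv (-t)).1
      (f := fun y => Real.exp (∑ i, Y i * R (T t y) i))
    have h1 : ∫ y, Real.exp (∑ i, Y i * R (T t y) i) ∂μ
        = ∫ x, Real.exp (∑ i, Y i * R (T t (T (-t) x)) i) ∂ω :=
      integral_map (hTm (-t)).aemeasurable hg.aestronglyMeasurable
    simp only [hTinv t] at h1
    calc ∫ x, Real.exp (∑ i, Y i * R x i) ∂ω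
        = ∫ y, Real.exp (∑ i, Y i * R (T t y) i) ∂μ := h1.symm
      _ = ∫ y, D y • Real.exp (∑ i, Y i * R (T t y) i) ∂ω := h0.symm
      _ = ∫ y, Real.exp (-(∑ i, (X i - Y i) * S y i)) ∂ω := by
          apply MeasureTheory.integral_congr_ae
          filter_upwards [hb3] with y hy
          simp only [smul_eq_mul, hRT, hy, ← Real.exp_add]
          congr 1
          have hss : ∑ i, (X i - Y i) * S y i
              = ∑ i, X i * S y i - ∑ i, Y i * S y i := by
            rw [← Finset.sum_sub_distrib]
            congr 1
            ext i
            ring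
          rw [hss]
          ring
  exact stepA.trans stepB
end ES

lemma aux_integral_exp_pos (ω : Measure M) [IsProbabilityMeasure ω] {f : M → ℝ}
    (hm : Measurable f) {K : ℝ} (hb : ∀ x, |f x| ≤ K) :
    0 < ∫ x, Real.exp (f x) ∂ω := by
  have h1 : Integrable (fun x => Real.exp (f x)) ω := by
    apply aux_integrable_of_bounded hm.exp.aestronglyMeasurable (C := Real.exp K)
    intro x
    rw [abs_of_nonneg (Real.exp_pos _).le]
    exact Real.exp_le_exp.2 (le_trans (le_abs_self _) (hb x))
  have h2 : ∫ x, Real.exp (-K) ∂ω ≤ ∫ x, Real.exp (f x) ∂ω := by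
    apply integral_mono (integrable_const _) h1
    intro x
    exact Real.exp_le_exp.2 (neg_le_of_abs_le (hb x))
  have h3 : ∫ x, Real.exp (-K) ∂ω = Real.exp (-K) := by simp
  linarith [Real.exp_pos (-K)]

section Helper5
variable {N : ℕ}

/-- Derivative of `gES` in the direction `Y j`. -/
lemma aux_gES_deriv (ω : Measure M) [IsProbabilityMeasure ω]
    (T : ℝ → M → M) (hTj : Measurable fun p : ℝ × M => T p.1 p.2)
    (Φ : M → Fin N → ℝ) (hΦm : Measurable Φ) {C : ℝ} (hC : 0 ≤ C)
    (hΦb : ∀ x i, |Φ x i| ≤ C) (t : ℝ) (ht : 0 < t) (Y : Fin N → ℝ) (j : Fin N) :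
    HasDerivAt (fun u => gES ω T Φ t (Function.update Y j u))
      ((∫ x, (-(∫ s in (0:ℝ)..t, Φ (T s x) j)) *
          Real.exp (-(∑ i, Y i * ∫ s in (0:ℝ)..t, Φ (T s x) i)) ∂ω) /
        (∫ x, Real.exp (-(∑ i, Y i * ∫ s in (0:ℝ)..t, Φ (T s x) i)) ∂ω)) (Y j) := by
  set S : M → Fin N → ℝ := fun x i => ∫ s in (0:ℝ)..t, Φ (T s x) i with hS
  have hSm : ∀ i, Measurable fun x => S x i := fun i =>
    aux_meas_param 0 t ((measurable_pi_apply i).comp (hΦm.comp hTj))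
  have hSb : ∀ x i, |S x i| ≤ C * t := by
    intro x i
    have h1 : ‖∫ s in (0:ℝ)..t, Φ (T s x) i‖ ≤ C * |t - 0| :=
      intervalIntegral.norm_integral_le_of_norm_le_const (fun s _ => by
        rw [Real.norm_eq_abs]; exact hΦb _ i)
    simpa [abs_of_pos ht] using h1
  -- rewrite the exponent
  set w : M → ℝ := fun x => Real.exp (-(∑ i ∈ Finset.univ.erase j, Y i * S x i)) with hw
  set ψ : M → ℝ := fun x => -(S x j) with hψ
  have hsum : ∀ (u : ℝ) (x : M),
      Real.exp (-(∑ i, Function.update Y j u i * S x i)) = w x * Real.exp (u * ψ x) := by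
    intro u x
    rw [← Real.exp_add]
    congr 1
    have e1 : ∑ i, Function.update Y j u i * S x i
        = (∑ i ∈ Finset.univ.erase j, Y i * S x i) + u * S x j := by
      rw [← Finset.sum_erase_add _ _ (Finset.mem_univ j)]
      congr 1
      · apply Finset.sum_congr rfl
        intro i hi
        rw [Function.update_of_ne (Finset.ne_of_mem_erase hi)]
      · rw [Function.update_self]
    rw [e1]
    simp only [hψ]
    ring
  have hwm : Measurable w :=
    ((Finset.measurable_sum _ fun i _ => (hSm i).const_mul (Y i)).neg).exp
  have hψm : Measurable ψ := (hSm j).neg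
  set K : ℝ := (∑ i, |Y i|) * (C * t) with hK
  have hsb : ∀ x, |∑ i ∈ Finset.univ.erase j, Y i * S x i| ≤ K := by
    intro x
    calc |∑ i ∈ Finset.univ.erase j, Y i * S x i|
        ≤ ∑ i ∈ Finset.univ.erase j, |Y i * S x i| := Finset.abs_sum_le_sum_abs _ _
      _ ≤ ∑ i ∈ Finset.univ.erase j, |Y i| * (C * t) := by
          apply Finset.sum_le_sum
          intro i _
          rw [abs_mul]
          exact mul_le_mul_of_nonneg_left (hSb x i) (abs_nonneg _)
      _ ≤ ∑ i, |Y i| * (C * t) := by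
          apply Finset.sum_le_sum_of_subset_of_nonneg (Finset.erase_subset _ _)
          intro i _ _
          positivity
      _ = K := by rw [hK, ← Finset.sum_mul]
  have hwb : ∀ x, |w x| ≤ Real.exp K := by
    intro x
    rw [hw]
    simp only
    rw [abs_of_nonneg (Real.exp_pos _).le]
    exact Real.exp_le_exp.2 (le_trans (neg_le_abs _) (by simpa using hsb x))
  have hψb : ∀ x, |ψ x| ≤ C * t := fun x => by simpa [hψ] using hSb x j
  have hderiv := aux_hasDerivAt_exp_integral ω hwm hψm hwb hψb (Y j)
  have hzpos : ∀ u : ℝ, 0 < ∫ x, w x * Real.exp (u * ψ x) ∂ω := by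
    intro u
    have : ∀ x, w x * Real.exp (u * ψ x)
        = Real.exp (-(∑ i ∈ Finset.univ.erase j, Y i * S x i) + u * ψ x) := by
      intro x
      rw [Real.exp_add]
    simp_rw [this]
    apply aux_integral_exp_pos ω (K := K + |u| * (C * t))
    · exact (((Finset.measurable_sum _ fun i _ => (hSm i).const_mul (Y i)).neg).add
        (hψm.const_mul u))
    · intro x
      calc |(-(∑ i ∈ Finset.univ.erase j, Y i * S x i) + u * ψ x)|
          ≤ |∑ i ∈ Finset.univ.erase j, Y i * S x i| + |u * ψ x| := by
            rw [← abs_neg (∑ i ∈ Finset.univ.erase j, Y i * S x i)] at *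
            exact abs_add_le _ _
        _ ≤ K + |u| * (C * t) := by
            rw [abs_mul]
            gcongr
            · exact by simpa using hsb x
            · exact hψb x
  -- the function u ↦ gES ... equals log of the parametric integral
  have hfun : (fun u => gES ω T Φ t (Function.update Y j u))
      = fun u => Real.log (∫ x, w x * Real.exp (u * ψ x) ∂ω) := by
    ext u
    unfold gES
    congr 1
    exact MeasureTheory.integral_congr_ae (ae_of_all _ fun x => hsum u x)
  rw [hfun]
  have hlog := (hderiv.log (hzpos (Y j)).ne')
  convert hlog using 1
  have h1 : ∫ x, w x * Real.exp (Y j * ψ x) ∂ω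
      = ∫ x, Real.exp (-(∑ i, Y i * S x i)) ∂ω := by
    apply MeasureTheory.integral_congr_ae (ae_of_all _ fun x => ?_)
    rw [← hsum (Y j) x, Function.update_eq_self]
  have h2 : ∫ x, w x * ψ x * Real.exp (Y j * ψ x) ∂ω
      = ∫ x, (-(S x j)) * Real.exp (-(∑ i, Y i * S x i)) ∂ω := by
    apply MeasureTheory.integral_congr_ae (ae_of_all _ fun x => ?_)
    have := hsum (Y j) x
    rw [Function.update_eq_self] at this
    calc w x * ψ x * Real.exp (Y j * ψ x) = ψ x * (w x * Real.exp (Y j * ψ x)) := by ring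
      _ = (-(S x j)) * Real.exp (-(∑ i, Y i * S x i)) := by rw [← this]
  rw [h1, h2]
end Helper5

lemma aux_abs_integral_le (ω : Measure M) [IsProbabilityMeasure ω] {f : M → ℝ}
    (hm : AEStronglyMeasurable f ω) {C : ℝ} (hb : ∀ x, |f x| ≤ C) :
    |∫ x, f x ∂ω| ≤ C := by
  calc |∫ x, f x ∂ω| ≤ ∫ x, |f x| ∂ω := by
        simpa [Real.norm_eq_abs] using norm_integral_le_integral_norm (μ := ω) f
    _ ≤ ∫ x, C ∂ω := integral_mono (aux_integrable_of_bounded hm.norm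
          (C := C) (fun x => by simpa [abs_abs, Real.norm_eq_abs] using hb x))
          (integrable_const _) (fun x => hb x)
    _ = C := by simp

/-- Derivative along the diagonal of a two-variable function with continuous
first partial derivative and a partial derivative in the second variable at the origin. -/
lemma aux_diag_deriv {H Ha : ℝ → ℝ → ℝ} {b' : ℝ} {V : Set (ℝ × ℝ)}
    (hV : IsOpen V) (h0 : ((0:ℝ), (0:ℝ)) ∈ V)
    (hHa : ∀ p ∈ V, HasDerivAt (fun a => H a p.2) (Ha p.1 p.2) p.1)
    (hHac : ContinuousOn (fun p : ℝ × ℝ => Ha p.1 p.2) V)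
    (hHb : HasDerivAt (fun b => H 0 b) b' 0) :
    HasDerivAt (fun u => H u u) (Ha 0 0 + b') 0 := by
  have key1 : Filter.Tendsto (fun u => (H u u - H 0 u) / u)
      (nhdsWithin (0:ℝ) {(0:ℝ)}ᶜ) (nhds (Ha 0 0)) := by
    rw [Metric.tendsto_nhdsWithin_nhds]
    intro ε hε
    obtain ⟨δ0, hδ0, hball⟩ := Metric.isOpen_iff.1 hV _ h0
    obtain ⟨δ1, hδ1, hcont⟩ := Metric.continuousWithinAt_iff.1 (hHac _ h0) ε hε
    refine ⟨min δ0 δ1, lt_min hδ0 hδ1, ?_⟩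
    intro u hu hdist
    rw [Real.dist_eq, sub_zero] at hdist
    have hu0 : u ≠ 0 := hu
    have hmem : ∀ a : ℝ, |a| ≤ |u| → ((a, u) : ℝ × ℝ) ∈ V := by
      intro a ha
      apply hball
      rw [Metric.mem_ball, Prod.dist_eq]
      simp only [Real.dist_eq, sub_zero]
      exact max_lt (lt_of_le_of_lt ha (lt_of_lt_of_le hdist (min_le_left _ _)))
        (lt_of_lt_of_le hdist (min_le_left _ _))
    obtain ⟨c, hcle, hceq⟩ : ∃ c : ℝ, |c| ≤ |u| ∧ Ha c u = (H u u - H 0 u) / u := by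
      rcases hu0.lt_or_gt with hneg | hpos
      · have habs : ∀ a : ℝ, a ∈ Set.Icc u 0 → |a| ≤ |u| := by
          intro a ha
          rw [abs_of_nonpos ha.2, abs_of_neg hneg]
          linarith [ha.1]
        obtain ⟨c, hc, hceq⟩ := exists_hasDerivAt_eq_slope (fun a => H a u)
          (fun a => Ha a u) hneg
          (fun a ha => ((hHa _ (hmem a (habs a ha))).continuousAt).continuousWithinAt)
          (fun a ha => hHa (a, u) (hmem a (habs a ⟨ha.1.le, ha.2.le⟩)))
        refine ⟨c, habs c ⟨hc.1.le, hc.2.le⟩, ?_⟩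
        rw [hceq, zero_sub, div_neg, ← neg_div, neg_sub]
      · have habs : ∀ a : ℝ, a ∈ Set.Icc 0 u → |a| ≤ |u| := by
          intro a ha
          rw [abs_of_nonneg ha.1, abs_of_pos hpos]
          exact ha.2
        obtain ⟨c, hc, hceq⟩ := exists_hasDerivAt_eq_slope (fun a => H a u)
          (fun a => Ha a u) hpos
          (fun a ha => ((hHa _ (hmem a (habs a ha))).continuousAt).continuousWithinAt)
          (fun a ha => hHa (a, u) (hmem a (habs a ⟨ha.1.le, ha.2.le⟩)))
        refine ⟨c, habs c ⟨hc.1.le, hc.2.le⟩, ?_⟩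
        rw [hceq, sub_zero]
    have hVc : ((c, u) : ℝ × ℝ) ∈ V := hmem c hcle
    have hd1 : dist ((c, u) : ℝ × ℝ) ((0:ℝ), (0:ℝ)) < δ1 := by
      rw [Prod.dist_eq]
      simp only [Real.dist_eq, sub_zero]
      exact max_lt (lt_of_le_of_lt hcle (lt_of_lt_of_le hdist (min_le_right _ _)))
        (lt_of_lt_of_le hdist (min_le_right _ _))
    have := hcont hVc hd1
    rw [← hceq]
    exact this
  have key2 : Filter.Tendsto (fun u => (H 0 u - H 0 0) / u)
      (nhdsWithin (0:ℝ) {(0:ℝ)}ᶜ) (nhds b') := by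
    have h := hasDerivAt_iff_tendsto_slope.1 hHb
    apply h.congr
    intro u
    rw [slope_def_field, sub_zero]
  rw [hasDerivAt_iff_tendsto_slope]
  apply Filter.Tendsto.congr' _ (key1.add key2)
  apply Filter.eventuallyEq_of_mem self_mem_nhdsWithin
  intro u hu
  have hu0 : u ≠ 0 := hu
  simp only [Pi.add_apply, slope_def_field, sub_zero]
  rw [← add_div, sub_add_sub_cancel]

lemma aux_triangle {f : ℝ → ℝ} (hm : Measurable f) {C : ℝ} (hb : ∀ r, |f r| ≤ C)
    {t : ℝ} (ht : 0 < t) :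
    ∫ v in (0:ℝ)..t, (∫ r in (0:ℝ)..v, f r) = ∫ r in (0:ℝ)..t, f r * (t - r) := by
  have hC0 : 0 ≤ C := le_trans (abs_nonneg _) (hb 0)
  set g : ℝ × ℝ → ℝ := fun q => if q.2 ≤ q.1 then f q.2 else 0 with hg
  have hgm : Measurable g :=
    Measurable.ite (measurableSet_le measurable_snd measurable_fst)
      (hm.comp measurable_snd) measurable_const
  have hgb : ∀ q, |g q| ≤ C := by
    intro q
    rw [hg]
    dsimp only
    split
    · exact hb _
    · simpa using hC0
  haveI : IsFiniteMeasure (volume.restrict (Set.Ioc (0:ℝ) t)) :=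
    ⟨by simp [Real.volume_Ioc, lt_top_iff_ne_top]⟩
  have inner1 : ∀ v ∈ Set.Ioc (0:ℝ) t,
      (∫ r in (0:ℝ)..v, f r) = ∫ r in Set.Ioc (0:ℝ) t, g (v, r) := by
    intro v hv
    rw [intervalIntegral.integral_of_le hv.1.le]
    have e1 : ∀ r, g (v, r) = Set.indicator (Set.Iic v) f r := by
      intro r
      rw [hg]
      simp [Set.indicator, Set.mem_Iic]
    simp_rw [e1]
    rw [MeasureTheory.integral_indicator measurableSet_Iic,
      Measure.restrict_restrict measurableSet_Iic]
    have e4 : Set.Iic v ∩ Set.Ioc (0:ℝ) t = Set.Ioc 0 v := by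
      ext r
      simp only [Set.mem_inter_iff, Set.mem_Iic, Set.mem_Ioc]
      constructor
      · rintro ⟨h1, h2, h3⟩; exact ⟨h2, h1⟩
      · rintro ⟨h1, h2⟩; exact ⟨h2, h1, le_trans h2 hv.2⟩
    rw [e4]
  rw [intervalIntegral.integral_of_le ht.le, intervalIntegral.integral_of_le ht.le]
  rw [MeasureTheory.setIntegral_congr_fun measurableSet_Ioc inner1]
  have hint : MeasureTheory.Integrable (Function.uncurry fun v r => g (v, r))
      ((volume.restrict (Set.Ioc (0:ℝ) t)).prod (volume.restrict (Set.Ioc (0:ℝ) t))) := by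
    apply aux_integrable_of_bounded (C := C)
    · exact hgm.aestronglyMeasurable
    · intro q; exact hgb q
  rw [MeasureTheory.integral_integral_swap hint]
  apply MeasureTheory.setIntegral_congr_fun measurableSet_Ioc
  intro r hr
  have e2 : ∀ v, g (v, r) = Set.indicator (Set.Ici r) (fun _ => f r) v := by
    intro v
    rw [hg]
    simp [Set.indicator, Set.mem_Ici]
  simp_rw [e2]
  rw [MeasureTheory.integral_indicator measurableSet_Ici,
    Measure.restrict_restrict measurableSet_Ici]
  have e3 : Set.Ici r ∩ Set.Ioc (0:ℝ) t = Set.Icc r t := by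
    ext v
    simp only [Set.mem_inter_iff, Set.mem_Ici, Set.mem_Ioc, Set.mem_Icc]
    constructor
    · rintro ⟨h1, _, h3⟩; exact ⟨h1, h3⟩
    · rintro ⟨h1, h2⟩; exact ⟨h1, lt_of_lt_of_le hr.1 h1, h2⟩
  rw [e3, MeasureTheory.setIntegral_const,
    Real.volume_real_Icc_of_le (by linarith [hr.2] : r ≤ t), smul_eq_mul]
  ring

lemma aux_triangle_neg {f : ℝ → ℝ} (hm : Measurable f) {C : ℝ} (hb : ∀ r, |f r| ≤ C)
    {t : ℝ} (ht : 0 < t) :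
    ∫ v in (-t)..(0:ℝ), (∫ r in (0:ℝ)..v, f r) = - ∫ r in (-t)..(0:ℝ), f r * (t + r) := by
  have h1 := intervalIntegral.integral_comp_neg (a := (0:ℝ)) (b := t)
    (fun v => ∫ r in (0:ℝ)..v, f r)
  simp only [neg_zero] at h1
  rw [← h1]
  have h2 : ∀ v : ℝ, (∫ r in (0:ℝ)..(-v), f r) = - ∫ r in (0:ℝ)..v, f (-r) := by
    intro v
    have h3 := intervalIntegral.integral_comp_neg (a := (0:ℝ)) (b := v) f
    simp only [neg_zero] at h3
    rw [h3, intervalIntegral.integral_symm]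
  have h4 : (∫ v in (0:ℝ)..t, (∫ r in (0:ℝ)..(-v), f r))
      = - ∫ v in (0:ℝ)..t, (∫ r in (0:ℝ)..v, f (-r)) := by
    rw [← intervalIntegral.integral_neg]
    apply intervalIntegral.integral_congr
    intro v _
    exact h2 v
  rw [h4]
  have h5 := aux_triangle (f := fun r => f (-r)) (hm.comp measurable_neg)
    (C := C) (fun r => hb (-r)) ht
  rw [h5]
  congr 1
  have h6 := intervalIntegral.integral_comp_neg (a := (0:ℝ)) (b := t)
    (fun r => f r * (t + r))
  simp only [neg_zero] at h6
  rw [← h6]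
  apply intervalIntegral.integral_congr
  intro r _
  ring_nf

end AuxHelpers

/-- Finite time Green–Kubo formula and Onsager reciprocity relations. Under (T1), (T2) and
the `C^{1,2}` regularity of `g_t(X,Y)` near `(0,0)`, the map `X ↦ ⟨Φ_X^{(j)}⟩_t` has partial
derivatives at `X = 0`, and the finite time kinetic transport coefficients
`L_{jkt} = ∂_{X_k}⟨Φ_X^{(j)}⟩_t|_{X=0}` satisfy
`L_{jkt} = (1/2)∫_{-t}^t ω(Φ^{(k)}·Φ^{(j)}∘φ^s)(1-|s|/t) ds` and `L_{jkt} = L_{kjt}`. -/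
theorem finite_time_green_kubo_onsager
    {M : Type*} [MeasurableSpace M] {N : ℕ}
    (T : (Fin N → ℝ) → ℝ → M → M)
    (hT0 : ∀ X, T X 0 = id)
    (hTadd : ∀ X (s t : ℝ), T X (s + t) = T X s ∘ T X t)
    (hTm : ∀ X (t : ℝ), Measurable (T X t))
    (hTjoint : ∀ X, Measurable fun p : ℝ × M => T X p.1 p.2)
    (ω : (Fin N → ℝ) → Measure M)
    (hωprob : ∀ X, IsProbabilityMeasure (ω X))
    (hequiv : ∀ X (t : ℝ), (ω X).map (T X t) ≪ ω X ∧ ω X ≪ (ω X).map (T X t))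
    (Φ : (Fin N → ℝ) → M → Fin N → ℝ)
    (hΦm : ∀ X, Measurable (Φ X))
    (hΦb : ∀ X, ∃ C : ℝ, ∀ x, ‖Φ X x‖ ≤ C)
    -- the entropy cocycle of `(M, φ_X, ω_X)` satisfies `c_X^t = ∫_0^t (X·Φ_X)∘φ_X^s ds`
    (hcoc : ∀ X (t : ℝ), ∀ᵐ x ∂(ω X),
      Real.log ((((ω X).map (T X t)).rnDeriv (ω X) (T X t x)).toReal)
        = ∫ s in (0:ℝ)..t, ∑ i, X i * Φ X (T X s x) i)
    -- (T1): `ω_0` is invariant under `φ_0^t`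
    (hT1 : ∀ t : ℝ, (ω 0).map (T 0 t) = ω 0)
    -- (T2): time-reversal invariance with `Φ_X ∘ θ_X = -Φ_X`
    (hT2 : ∀ X, ∃ θ : M → M, Measurable θ ∧ (∀ x, θ (θ x) = x) ∧
      (∀ t : ℝ, θ ∘ T X t = T X (-t) ∘ θ) ∧ (ω X).map θ = ω X ∧
      (∀ᵐ x ∂(ω X), Φ X (θ x) = -Φ X x))
    (t : ℝ) (ht : 0 < t)
    -- `g_t(X,Y)` is `C^{1,2}` in a neighborhood `U` of `(0,0)`: all the listed partial
    -- derivatives exist and are continuous on `U`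
    (U : Set ((Fin N → ℝ) × (Fin N → ℝ))) (hU : IsOpen U)
    (hU0 : ((0 : Fin N → ℝ), (0 : Fin N → ℝ)) ∈ U)
    (GX GY : Fin N → (Fin N → ℝ) → (Fin N → ℝ) → ℝ)
    (GYY GXY GYX : Fin N → Fin N → (Fin N → ℝ) → (Fin N → ℝ) → ℝ)
    (hGX : ∀ i, ∀ p ∈ U, HasDerivAt
      (fun u => gES (ω (Function.update p.1 i u)) (T (Function.update p.1 i u))
        (Φ (Function.update p.1 i u)) t p.2) (GX i p.1 p.2) (p.1 i))
    (hGXc : ∀ i, ContinuousOn (fun p : (Fin N → ℝ) × (Fin N → ℝ) => GX i p.1 p.2) U)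
    (hGY : ∀ i, ∀ p ∈ U, HasDerivAt
      (fun u => gES (ω p.1) (T p.1) (Φ p.1) t (Function.update p.2 i u))
      (GY i p.1 p.2) (p.2 i))
    (hGYc : ∀ i, ContinuousOn (fun p : (Fin N → ℝ) × (Fin N → ℝ) => GY i p.1 p.2) U)
    (hGYY : ∀ j k, ∀ p ∈ U, HasDerivAt
      (fun u => GY k p.1 (Function.update p.2 j u)) (GYY j k p.1 p.2) (p.2 j))
    (hGYYc : ∀ j k, ContinuousOn (fun p : (Fin N → ℝ) × (Fin N → ℝ) => GYY j k p.1 p.2) U)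
    (hGXY : ∀ k i, ∀ p ∈ U, HasDerivAt
      (fun u => GY i (Function.update p.1 k u) p.2) (GXY k i p.1 p.2) (p.1 k))
    (hGXYc : ∀ k i, ContinuousOn (fun p : (Fin N → ℝ) × (Fin N → ℝ) => GXY k i p.1 p.2) U)
    (hGYX : ∀ i k, ∀ p ∈ U, HasDerivAt
      (fun u => GX k p.1 (Function.update p.2 i u)) (GYX i k p.1 p.2) (p.2 i))
    (hGYXc : ∀ i k, ContinuousOn (fun p : (Fin N → ℝ) × (Fin N → ℝ) => GYX i k p.1 p.2) U) :
    ∃ L : Fin N → Fin N → ℝ,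
      (∀ j k, HasDerivAt
        (fun u => fluxAvg (ω (Function.update (0 : Fin N → ℝ) k u))
          (T (Function.update (0 : Fin N → ℝ) k u))
          (Φ (Function.update (0 : Fin N → ℝ) k u)) t j) (L j k) 0) ∧
      (∀ j k, L j k = (1 / 2) *
        ∫ s in (-t)..t, (∫ x, Φ 0 x k * Φ 0 (T 0 s x) j ∂(ω 0)) * (1 - |s| / t)) ∧
      (∀ j k, L j k = L k j) := by
  classical
  have hbX : ∀ X : Fin N → ℝ, ∃ C : ℝ, 0 ≤ C ∧ ∀ x i, |Φ X x i| ≤ C := by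
    intro X
    obtain ⟨C, hC⟩ := hΦb X
    refine ⟨max C 0, le_max_right _ _, fun x i => ?_⟩
    calc |Φ X x i| ≤ ‖Φ X x‖ := by
          simpa [Real.norm_eq_abs] using norm_le_pi_norm (Φ X x) i
      _ ≤ max C 0 := le_trans (hC x) (le_max_left _ _)
  choose CB hCB0 hCB using hbX
  have hupz : ∀ k : Fin N, Function.update (0 : Fin N → ℝ) k (0:ℝ) = 0 := by
    intro k; ext i; simp [Function.update_apply]
  set SS : (Fin N → ℝ) → M → Fin N → ℝ :=
    fun X x i => ∫ s in (0:ℝ)..t, Φ X (T X s x) i with hSSdef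
  set Zf : (Fin N → ℝ) → (Fin N → ℝ) → ℝ :=
    fun X Y => ∫ x, Real.exp (-(∑ i, Y i * SS X x i)) ∂(ω X) with hZfdef
  set Dv : Fin N → (Fin N → ℝ) → (Fin N → ℝ) → ℝ := fun j X Y =>
    (∫ x, (-(SS X x j)) * Real.exp (-(∑ i, Y i * SS X x i)) ∂(ω X)) / Zf X Y with hDvdef
  have hSSm : ∀ X i, Measurable fun x => SS X x i := fun X i =>
    aux_meas_param 0 t ((measurable_pi_apply i).comp ((hΦm X).comp (hTjoint X)))
  have hSSb : ∀ X x i, |SS X x i| ≤ CB X * t := by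
    intro X x i
    have h1 : ‖∫ s in (0:ℝ)..t, Φ X (T X s x) i‖ ≤ CB X * |t - 0| :=
      intervalIntegral.norm_integral_le_of_norm_le_const (fun s _ => by
        rw [Real.norm_eq_abs]; exact hCB X _ i)
    simp only [hSSdef]
    simpa [abs_of_pos ht] using h1
  have hgderiv : ∀ (X Y : Fin N → ℝ) (j : Fin N),
      HasDerivAt (fun u => gES (ω X) (T X) (Φ X) t (Function.update Y j u)) (Dv j X Y) (Y j) := by
    intro X Y j
    haveI := hωprob X
    have h := aux_gES_deriv (ω X) (T X) (hTjoint X) (Φ X) (hΦm X) (hCB0 X) (hCB X) t ht Y j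
    simp only [hDvdef, hZfdef, hSSdef]
    exact h
  have hZ0 : ∀ X, Zf X 0 = 1 := by
    intro X
    haveI := hωprob X
    simp only [hZfdef]
    simp
  have hDv0 : ∀ (X : Fin N → ℝ) (j : Fin N), Dv j X 0 = -∫ x, SS X x j ∂(ω X) := by
    intro X j
    haveI := hωprob X
    simp only [hDvdef, hZ0 X, div_one]
    rw [← MeasureTheory.integral_neg]
    apply MeasureTheory.integral_congr_ae
    filter_upwards with x
    simp
  have hES : ∀ (X Y : Fin N → ℝ),
      gES (ω X) (T X) (Φ X) t Y = gES (ω X) (T X) (Φ X) t (X - Y) := by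
    intro X Y
    obtain ⟨θ, hθm, hθθ, hθT, hθω, hθΦ⟩ := hT2 X
    haveI := hωprob X
    unfold gES
    congr 1
    have h := aux_ES_symmetry (ω X) (T X) (hT0 X) (hTadd X) (hTm X) (hTjoint X)
      (fun u => hequiv X u) (Φ X) (hΦm X) (hCB X) X (hcoc X) θ hθm hθT hθω hθΦ t ht Y
    simpa [Pi.sub_apply] using h
  have hGYeq : ∀ (j : Fin N) (p : (Fin N → ℝ) × (Fin N → ℝ)), p ∈ U →
      GY j p.1 p.2 = Dv j p.1 p.2 := fun j p hp =>
    (hGY j p hp).unique (hgderiv p.1 p.2 j)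
  have hGYsym : ∀ (j : Fin N) (X Y : Fin N → ℝ), (X, Y) ∈ U → (X, X - Y) ∈ U →
      GY j X Y = - GY j X (X - Y) := by
    intro j X Y h1 h2
    have hd1 := hGY j (X, Y) h1
    have hd2 := hGY j (X, X - Y) h2
    have hinner : HasDerivAt (fun u : ℝ => X j - u) (-1) (Y j) := by
      simpa using (hasDerivAt_id (Y j)).const_sub (X j)
    have hd2' : HasDerivAt (fun v => gES (ω X) (T X) (Φ X) t (Function.update (X - Y) j v))
        (GY j X (X - Y)) ((fun u : ℝ => X j - u) (Y j)) := by
      simpa [Pi.sub_apply] using hd2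
    have hd3 := hd2'.comp (Y j) hinner
    have hfe : ((fun v => gES (ω X) (T X) (Φ X) t (Function.update (X - Y) j v))
        ∘ (fun u : ℝ => X j - u)) = fun u => gES (ω X) (T X) (Φ X) t (Function.update Y j u) := by
      ext u
      show gES (ω X) (T X) (Φ X) t (Function.update (X - Y) j (X j - u)) = _
      have harg : Function.update (X - Y) j (X j - u) = X - Function.update Y j u := by
        ext i
        by_cases hij : i = j
        · subst hij; simp
        · simp [Function.update_of_ne hij]
      rw [harg, ← hES X (Function.update Y j u)]
    rw [hfe] at hd3
    have h4 := hd1.unique hd3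
    rw [h4]; ring
  have hswapX : ∀ (X : Fin N → ℝ) (i : Fin N), ∫ x, SS X x i ∂(ω X)
      = ∫ s in (0:ℝ)..t, ∫ x, Φ X (T X s x) i ∂(ω X) := by
    intro X i
    haveI := hωprob X
    simp only [hSSdef]
    exact aux_swap_integral (ω X) ht.le
      ((measurable_pi_apply i).comp ((hΦm X).comp (hTjoint X)))
      (C := CB X) (fun p => hCB X _ i)
  have hmean0 : ∀ i, ∫ x, SS 0 x i ∂(ω 0) = 0 := by
    intro i
    haveI := hωprob 0
    rw [hswapX 0 i]
    have hinv : ∀ s : ℝ, ∫ x, Φ 0 (T 0 s x) i ∂(ω 0) = ∫ x, Φ 0 x i ∂(ω 0) := by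
      intro s
      calc ∫ x, Φ 0 (T 0 s x) i ∂(ω 0)
          = ∫ y, Φ 0 y i ∂((ω 0).map (T 0 s)) := (integral_map (hTm 0 s).aemeasurable
            (((measurable_pi_apply i).comp (hΦm 0)).aestronglyMeasurable)).symm
        _ = ∫ y, Φ 0 y i ∂(ω 0) := by rw [hT1 s]
    have hzero : ∫ x, Φ 0 x i ∂(ω 0) = 0 := by
      obtain ⟨θ, hθm, hθθ, hθT, hθω, hθΦ⟩ := hT2 0
      have h1 : ∫ x, Φ 0 x i ∂(ω 0) = ∫ x, Φ 0 (θ x) i ∂(ω 0) := by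
        calc ∫ x, Φ 0 x i ∂(ω 0) = ∫ x, Φ 0 x i ∂((ω 0).map θ) := by rw [hθω]
          _ = ∫ x, Φ 0 (θ x) i ∂(ω 0) := integral_map hθm.aemeasurable
              (((measurable_pi_apply i).comp (hΦm 0)).aestronglyMeasurable)
      have h2 : ∫ x, Φ 0 (θ x) i ∂(ω 0) = - ∫ x, Φ 0 x i ∂(ω 0) := by
        rw [← MeasureTheory.integral_neg]
        apply MeasureTheory.integral_congr_ae
        filter_upwards [hθΦ] with x hx
        rw [hx]
        simp
      linarith
    simp_rw [hinv, hzero]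
    simp
  have hflux : ∀ (X : Fin N → ℝ) (j : Fin N),
      fluxAvg (ω X) (T X) (Φ X) t j = (1 / t) * ∫ x, SS X x j ∂(ω X) := by
    intro X j
    rw [hswapX X j]
    rfl
  have hcup : ∀ k : Fin N, Continuous fun u : ℝ => Function.update (0 : Fin N → ℝ) k u :=
    fun k => continuous_const.update k continuous_id
  have hevKey : ∀ (F : ℝ → (Fin N → ℝ) × (Fin N → ℝ)), Continuous F → F 0 = (0, 0) →
      ∀ᶠ u in nhds (0:ℝ), F u ∈ U := by
    intro F hc h0
    have h1 := hc.continuousAt (x := (0:ℝ))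
    rw [ContinuousAt, h0] at h1
    exact h1.eventually (hU.eventually_mem hU0)
  have hGYY0 : ∀ j k : Fin N, GYY k j 0 0 = ∫ x, SS 0 x j * SS 0 x k ∂(ω 0) := by
    intro j k
    haveI := hωprob 0
    have hsum0 : ∀ (v : ℝ) (x : M),
        -(∑ i, Function.update (0:Fin N→ℝ) k v i * SS 0 x i) = v * (-(SS 0 x k)) := by
      intro v x
      have e1 : ∑ i, Function.update (0:Fin N→ℝ) k v i * SS 0 x i = v * SS 0 x k := by
        rw [← Finset.sum_erase_add _ _ (Finset.mem_univ k), Function.update_self]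
        have e2 : ∀ i ∈ Finset.univ.erase k,
            Function.update (0:Fin N→ℝ) k v i * SS 0 x i = 0 := by
          intro i hi
          rw [Function.update_of_ne (Finset.ne_of_mem_erase hi)]
          simp
        rw [Finset.sum_congr rfl e2, Finset.sum_const_zero, zero_add]
      rw [e1]
      ring
    set n : ℝ → ℝ := fun v => ∫ x, (-(SS 0 x j)) * Real.exp (v * (-(SS 0 x k))) ∂(ω 0) with hn
    set z : ℝ → ℝ := fun v => ∫ x, (1:ℝ) * Real.exp (v * (-(SS 0 x k))) ∂(ω 0) with hz
    have hnd := aux_hasDerivAt_exp_integral (ω 0) (w := fun x => -(SS 0 x j))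
      (ψ := fun x => -(SS 0 x k)) (hSSm 0 j).neg (hSSm 0 k).neg
      (Cw := CB 0 * t) (Cψ := CB 0 * t)
      (fun x => by simpa using hSSb 0 x j) (fun x => by simpa using hSSb 0 x k) 0
    have hzd := aux_hasDerivAt_exp_integral (ω 0) (w := fun _ : M => (1:ℝ))
      (ψ := fun x => -(SS 0 x k)) measurable_const (hSSm 0 k).neg
      (Cw := 1) (Cψ := CB 0 * t)
      (fun x => by norm_num) (fun x => by simpa using hSSb 0 x k) 0
    have hnd' : HasDerivAt n (∫ x, SS 0 x j * SS 0 x k ∂(ω 0)) 0 := by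
      rw [hn]
      convert hnd using 1
      apply MeasureTheory.integral_congr_ae
      filter_upwards with x
      rw [zero_mul, Real.exp_zero, mul_one, neg_mul_neg]
    have hzd' : HasDerivAt z 0 0 := by
      rw [hz]
      convert hzd using 1
      have e3 : ∫ x, (1:ℝ) * (-(SS 0 x k)) * Real.exp (0 * (-(SS 0 x k))) ∂(ω 0)
          = - ∫ x, SS 0 x k ∂(ω 0) := by
        rw [← MeasureTheory.integral_neg]
        apply MeasureTheory.integral_congr_ae
        filter_upwards with x
        rw [zero_mul, Real.exp_zero, mul_one, one_mul]
      rw [e3, hmean0 k, neg_zero]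
    have hz0 : z 0 = 1 := by
      rw [hz]
      simp
    have hdiv := hnd'.div hzd' (by rw [hz0]; norm_num)
    have hdiv' : HasDerivAt (fun v => n v / z v) (∫ x, SS 0 x j * SS 0 x k ∂(ω 0)) 0 := by
      exact hdiv.congr_deriv (by rw [hz0]; ring)
    have hev := hevKey (fun v => ((0 : Fin N → ℝ), Function.update (0 : Fin N → ℝ) k v))
      (continuous_const.prodMk (hcup k)) (by rw [hupz k])
    have hcongr : (fun v => GY j 0 (Function.update (0 : Fin N → ℝ) k v))
        =ᶠ[nhds (0:ℝ)] fun v => n v / z v := by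
      filter_upwards [hev] with v hv
      rw [hGYeq j (0, Function.update (0:Fin N→ℝ) k v) hv]
      simp only [hDvdef, hZfdef, hn, hz]
      congr 1
      · apply MeasureTheory.integral_congr_ae
        filter_upwards with x
        rw [hsum0 v x]
      · apply MeasureTheory.integral_congr_ae
        filter_upwards with x
        rw [hsum0 v x, one_mul]
    have hgyy : HasDerivAt (fun u => GY j 0 (Function.update (0:Fin N→ℝ) k u))
        (GYY k j 0 0) 0 := by simpa using hGYY k j (0, 0) hU0
    exact hgyy.unique (hdiv'.congr_of_eventuallyEq hcongr)
  have hGXY0 : ∀ j k : Fin N, GXY k j 0 0 = -(1/2) * ∫ x, SS 0 x j * SS 0 x k ∂(ω 0) := by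
    intro j k
    have hmapc : Continuous fun q : ℝ × ℝ =>
        ((Function.update (0:Fin N→ℝ) k q.1, Function.update (0:Fin N→ℝ) k q.2) :
          (Fin N → ℝ) × (Fin N → ℝ)) :=
      ((hcup k).comp continuous_fst).prodMk ((hcup k).comp continuous_snd)
    have hVopen : IsOpen ((fun q : ℝ × ℝ =>
        ((Function.update (0:Fin N→ℝ) k q.1, Function.update (0:Fin N→ℝ) k q.2) :
          (Fin N → ℝ) × (Fin N → ℝ))) ⁻¹' U) := hU.preimage hmapc
    have hV0 : ((0:ℝ),(0:ℝ)) ∈ (fun q : ℝ × ℝ =>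
        ((Function.update (0:Fin N→ℝ) k q.1, Function.update (0:Fin N→ℝ) k q.2) :
          (Fin N → ℝ) × (Fin N → ℝ))) ⁻¹' U := by
      simp only [Set.mem_preimage]
      rw [hupz k]
      exact hU0
    have hdiag := aux_diag_deriv
      (H := fun a b => GY j (Function.update (0:Fin N→ℝ) k a) (Function.update (0:Fin N→ℝ) k b))
      (Ha := fun a b => GXY k j (Function.update (0:Fin N→ℝ) k a) (Function.update (0:Fin N→ℝ) k b))
      (b' := GYY k j 0 0) hVopen hV0
      (fun p hp => by
        have h := hGXY k j (Function.update (0:Fin N→ℝ) k p.1, Function.update (0:Fin N→ℝ) k p.2) hp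
        simpa [Function.update_idem, Function.update_self] using h)
      ((hGXYc k j).comp hmapc.continuousOn (fun p hp => hp))
      (by
        have h : HasDerivAt (fun u => GY j 0 (Function.update (0:Fin N→ℝ) k u))
            (GYY k j 0 0) 0 := by simpa using hGYY k j (0, 0) hU0
        simp only [hupz k]
        exact h)
    have hdiag' : HasDerivAt (fun u => GY j (Function.update (0:Fin N→ℝ) k u)
        (Function.update (0:Fin N→ℝ) k u)) (GXY k j 0 0 + GYY k j 0 0) 0 := by
      have e : GXY k j (Function.update (0:Fin N→ℝ) k 0) (Function.update (0:Fin N→ℝ) k 0)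
          = GXY k j 0 0 := by rw [hupz k]
      rw [← e]
      exact hdiag
    have hd : HasDerivAt (fun u => GY j (Function.update (0:Fin N→ℝ) k u) 0)
        (GXY k j 0 0) 0 := by simpa using hGXY k j (0, 0) hU0
    have hev1 := hevKey (fun u => (Function.update (0:Fin N→ℝ) k u, (0:Fin N→ℝ)))
      ((hcup k).prodMk continuous_const) (by rw [hupz k])
    have hev2 := hevKey (fun u =>
        (Function.update (0:Fin N→ℝ) k u, Function.update (0:Fin N→ℝ) k u))
      ((hcup k).prodMk (hcup k)) (by rw [hupz k])
    have hcongr : (fun u => GY j (Function.update (0:Fin N→ℝ) k u)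
        (Function.update (0:Fin N→ℝ) k u)) =ᶠ[nhds (0:ℝ)]
        fun u => -(GY j (Function.update (0:Fin N→ℝ) k u) 0) := by
      filter_upwards [hev1, hev2] with u h1 h2
      have h3 : GY j (Function.update (0:Fin N→ℝ) k u) 0
          = - GY j (Function.update (0:Fin N→ℝ) k u) (Function.update (0:Fin N→ℝ) k u) := by
        have := hGYsym j (Function.update (0:Fin N→ℝ) k u) 0 h1 (by
          rw [sub_zero]
          exact h2)
        rwa [sub_zero] at this
      linarith
    have hother : HasDerivAt (fun u => GY j (Function.update (0:Fin N→ℝ) k u)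
        (Function.update (0:Fin N→ℝ) k u)) (-(GXY k j 0 0)) 0 :=
      hd.neg.congr_of_eventuallyEq hcongr
    have hu := hdiag'.unique hother
    rw [hGYY0 j k] at hu
    linarith
  have hQform : ∀ j k : Fin N, ∫ x, SS 0 x j * SS 0 x k ∂(ω 0)
      = ∫ s in (-t)..t, (∫ x, Φ 0 x k * Φ 0 (T 0 s x) j ∂(ω 0)) * (t - |s|) := by
    intro j k
    haveI := hωprob 0
    set Cf : ℝ → ℝ := fun r => ∫ x, Φ 0 x k * Φ 0 (T 0 r x) j ∂(ω 0) with hCf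
    have hfm : Measurable fun q : ℝ × M => Φ 0 q.2 k * Φ 0 (T 0 q.1 q.2) j :=
      ((measurable_pi_apply k).comp ((hΦm 0).comp measurable_snd)).mul
        ((measurable_pi_apply j).comp ((hΦm 0).comp (hTjoint 0)))
    have hfb : ∀ q : ℝ × M, |Φ 0 q.2 k * Φ 0 (T 0 q.1 q.2) j| ≤ CB 0 * CB 0 := by
      intro q
      rw [abs_mul]
      exact mul_le_mul (hCB 0 _ k) (hCB 0 _ j) (abs_nonneg _) (hCB0 0)
    have hCfm : Measurable Cf := by
      rw [hCf]
      exact (hfm.stronglyMeasurable.integral_prod_right').measurable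
    have hCfb : ∀ r, |Cf r| ≤ CB 0 * CB 0 := by
      intro r
      rw [hCf]
      exact aux_abs_integral_le (ω 0)
        (((measurable_pi_apply k).comp (hΦm 0)).mul
          ((measurable_pi_apply j).comp ((hΦm 0).comp (hTm 0 r)))).aestronglyMeasurable
        (fun x => hfb (r, x))
    have hTinv0 : ∀ (u : ℝ) (x : M), T 0 u (T 0 (-u) x) = x := by
      intro u x
      have h1 : T 0 (u + -u) = T 0 u ∘ T 0 (-u) := hTadd 0 u (-u)
      simp only [add_neg_cancel, hT0 0] at h1
      exact (congrFun h1.symm x)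
    have step1 : ∫ x, SS 0 x j * SS 0 x k ∂(ω 0)
        = ∫ u in (0:ℝ)..t, (∫ x, SS 0 x j * Φ 0 (T 0 u x) k ∂(ω 0)) := by
      calc ∫ x, SS 0 x j * SS 0 x k ∂(ω 0)
          = ∫ x, (∫ u in (0:ℝ)..t, SS 0 x j * Φ 0 (T 0 u x) k) ∂(ω 0) := by
            apply MeasureTheory.integral_congr_ae
            filter_upwards with x
            rw [intervalIntegral.integral_const_mul]
        _ = ∫ u in (0:ℝ)..t, (∫ x, SS 0 x j * Φ 0 (T 0 u x) k ∂(ω 0)) :=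
            aux_swap_integral (ω 0) ht.le
              (f := fun q : ℝ × M => SS 0 q.2 j * Φ 0 (T 0 q.1 q.2) k)
              (((hSSm 0 j).comp measurable_snd).mul
                ((measurable_pi_apply k).comp ((hΦm 0).comp (hTjoint 0))))
              (C := (CB 0 * t) * CB 0) (fun p => by
                rw [abs_mul]
                exact mul_le_mul (hSSb 0 _ j) (hCB 0 _ k) (abs_nonneg _)
                  (mul_nonneg (hCB0 0) ht.le))
    have step2 : ∀ u : ℝ, (∫ x, SS 0 x j * Φ 0 (T 0 u x) k ∂(ω 0))
        = ∫ r in (-u)..(t-u), Cf r := by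
      intro u
      have einv : ∫ x, SS 0 x j * Φ 0 (T 0 u x) k ∂(ω 0)
          = ∫ y, SS 0 (T 0 (-u) y) j * Φ 0 (T 0 u (T 0 (-u) y)) k ∂(ω 0) := by
        calc ∫ x, SS 0 x j * Φ 0 (T 0 u x) k ∂(ω 0)
            = ∫ x, SS 0 x j * Φ 0 (T 0 u x) k ∂((ω 0).map (T 0 (-u))) := by rw [hT1 (-u)]
          _ = ∫ y, SS 0 (T 0 (-u) y) j * Φ 0 (T 0 u (T 0 (-u) y)) k ∂(ω 0) :=
              integral_map (hTm 0 (-u)).aemeasurable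
                (((hSSm 0 j).mul ((measurable_pi_apply k).comp
                  ((hΦm 0).comp (hTm 0 u)))).aestronglyMeasurable)
      rw [einv]
      have e2 : ∀ y, SS 0 (T 0 (-u) y) j = ∫ r in (-u)..(t-u), Φ 0 (T 0 r y) j := by
        intro y
        simp only [hSSdef]
        have e3 : ∀ s : ℝ, T 0 s (T 0 (-u) y) = T 0 (s - u) y := by
          intro s
          have h2 := congrFun (hTadd 0 s (-u)) y
          rw [show s + -u = s - u by ring] at h2
          exact h2.symm
        calc ∫ s in (0:ℝ)..t, Φ 0 (T 0 s (T 0 (-u) y)) j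
            = ∫ s in (0:ℝ)..t, (fun r => Φ 0 (T 0 r y) j) (s - u) := by
              congr 1
              ext s
              rw [e3 s]
          _ = ∫ r in (0:ℝ) - u..t - u, Φ 0 (T 0 r y) j := by
              exact intervalIntegral.integral_comp_sub_right (fun r => Φ 0 (T 0 r y) j) u
          _ = ∫ r in (-u)..(t - u), Φ 0 (T 0 r y) j := by norm_num
      calc ∫ y, SS 0 (T 0 (-u) y) j * Φ 0 (T 0 u (T 0 (-u) y)) k ∂(ω 0)
          = ∫ y, (∫ r in (-u)..(t-u), Φ 0 y k * Φ 0 (T 0 r y) j) ∂(ω 0) := by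
            apply MeasureTheory.integral_congr_ae
            filter_upwards with y
            rw [hTinv0 u y, e2 y, mul_comm, ← intervalIntegral.integral_const_mul]
        _ = ∫ r in (-u)..(t-u), Cf r := by
            rw [aux_swap_integral (ω 0) (by linarith : -u ≤ t - u)
              (f := fun q : ℝ × M => Φ 0 q.2 k * Φ 0 (T 0 q.1 q.2) j) hfm
              (C := CB 0 * CB 0) hfb]
    have hCfint : ∀ a b : ℝ, IntervalIntegrable Cf volume a b := fun a b =>
      aux_intervalIntegrable hCfm hCfb a b
    have step3 : ∀ u : ℝ, ∫ r in (-u)..(t-u), Cf r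
        = (∫ r in (0:ℝ)..(t-u), Cf r) - ∫ r in (0:ℝ)..(-u), Cf r := by
      intro u
      rw [intervalIntegral.integral_interval_sub_left (hCfint 0 (t-u)) (hCfint 0 (-u))]
    have hprim : Continuous fun v : ℝ => ∫ r in (0:ℝ)..v, Cf r :=
      intervalIntegral.continuous_primitive (fun a b => hCfint a b) 0
    have step4 : ∫ u in (0:ℝ)..t, ((∫ r in (0:ℝ)..(t-u), Cf r) - ∫ r in (0:ℝ)..(-u), Cf r)
        = (∫ v in (0:ℝ)..t, (∫ r in (0:ℝ)..v, Cf r))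
          - ∫ v in (-t)..(0:ℝ), (∫ r in (0:ℝ)..v, Cf r) := by
      have hc1 : Continuous fun u : ℝ => ∫ r in (0:ℝ)..(t - u), Cf r :=
        hprim.comp (continuous_const.sub continuous_id)
      have hc2 : Continuous fun u : ℝ => ∫ r in (0:ℝ)..(-u), Cf r :=
        hprim.comp continuous_neg
      rw [intervalIntegral.integral_sub (hc1.intervalIntegrable 0 t)
        (hc2.intervalIntegrable 0 t)]
      congr 1
      · have h3 := intervalIntegral.integral_comp_sub_left (a := (0:ℝ)) (b := t)
          (fun v => ∫ r in (0:ℝ)..v, Cf r) t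
        simp only [sub_self, sub_zero] at h3
        exact h3
      · have h3 := intervalIntegral.integral_comp_neg (a := (0:ℝ)) (b := t)
          (fun v => ∫ r in (0:ℝ)..v, Cf r)
        simp only [neg_zero] at h3
        exact h3
    have tri1 := aux_triangle hCfm hCfb ht
    have tri2 := aux_triangle_neg hCfm hCfb ht
    have int1 : IntervalIntegrable (fun r => Cf r * (t - |r|)) volume (-t) 0 :=
      (hCfint (-t) 0).mul_continuousOn
        ((continuous_const.sub continuous_abs).continuousOn)
    have int2 : IntervalIntegrable (fun r => Cf r * (t - |r|)) volume 0 t :=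
      (hCfint 0 t).mul_continuousOn
        ((continuous_const.sub continuous_abs).continuousOn)
    calc ∫ x, SS 0 x j * SS 0 x k ∂(ω 0)
        = ∫ u in (0:ℝ)..t, (∫ x, SS 0 x j * Φ 0 (T 0 u x) k ∂(ω 0)) := step1
      _ = ∫ u in (0:ℝ)..t, ((∫ r in (0:ℝ)..(t-u), Cf r) - ∫ r in (0:ℝ)..(-u), Cf r) := by
          apply intervalIntegral.integral_congr
          intro u _
          simp only [step2, step3]
      _ = (∫ v in (0:ℝ)..t, (∫ r in (0:ℝ)..v, Cf r))
          - ∫ v in (-t)..(0:ℝ), (∫ r in (0:ℝ)..v, Cf r) := step4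
      _ = (∫ r in (0:ℝ)..t, Cf r * (t - r)) + ∫ r in (-t)..(0:ℝ), Cf r * (t + r) := by
          rw [tri1, tri2]
          ring
      _ = (∫ r in (-t)..(0:ℝ), Cf r * (t - |r|)) + ∫ r in (0:ℝ)..t, Cf r * (t - |r|) := by
          have eA : ∫ r in (0:ℝ)..t, Cf r * (t - r) = ∫ r in (0:ℝ)..t, Cf r * (t - |r|) :=
            intervalIntegral.integral_congr (fun r hr => by
              rw [Set.uIcc_of_le ht.le] at hr
              simp only [abs_of_nonneg hr.1])
          have eB : ∫ r in (-t)..(0:ℝ), Cf r * (t + r)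
              = ∫ r in (-t)..(0:ℝ), Cf r * (t - |r|) :=
            intervalIntegral.integral_congr (fun r hr => by
              rw [Set.uIcc_of_le (by linarith : (-t:ℝ) ≤ 0)] at hr
              simp only [abs_of_nonpos hr.2]
              ring)
          rw [eA, eB, add_comm]
      _ = ∫ s in (-t)..t, Cf s * (t - |s|) :=
          intervalIntegral.integral_add_adjacent_intervals int1 int2
  refine ⟨fun j k => -(1/t) * GXY k j 0 0, ?_, ?_, ?_⟩
  · intro j k
    have hd : HasDerivAt (fun u => GY j (Function.update (0 : Fin N → ℝ) k u) 0)
        (GXY k j 0 0) 0 := by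
      have h := hGXY k j (0, 0) hU0
      simpa using h
    have hd2 := hd.const_mul (-(1/t))
    apply hd2.congr_of_eventuallyEq
    have hev := hevKey (fun u => (Function.update (0 : Fin N → ℝ) k u, 0))
      ((hcup k).prodMk continuous_const) (by rw [hupz k])
    filter_upwards [hev] with u hu
    rw [hflux _ j, hGYeq j (Function.update (0 : Fin N → ℝ) k u, 0) hu]
    rw [hDv0]
    ring
  · intro j k
    show -(1/t) * GXY k j 0 0 = _
    rw [hGXY0 j k, hQform j k]
    have hrw : ∫ s in (-t)..t, (∫ x, Φ 0 x k * Φ 0 (T 0 s x) j ∂(ω 0)) * (1 - |s| / t)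
        = (1/t) * ∫ s in (-t)..t, (∫ x, Φ 0 x k * Φ 0 (T 0 s x) j ∂(ω 0)) * (t - |s|) := by
      rw [← intervalIntegral.integral_const_mul]
      apply intervalIntegral.integral_congr
      intro s _
      field_simp
    rw [hrw]
    ring
  · intro j k
    show -(1/t) * GXY k j 0 0 = -(1/t) * GXY j k 0 0
    have hQsym : (∫ x, SS 0 x j * SS 0 x k ∂(ω 0)) = ∫ x, SS 0 x k * SS 0 x j ∂(ω 0) := by
      apply MeasureTheory.integral_congr_ae
      filter_upwards with x
      ring
    rw [hGXY0 j k, hGXY0 k j, hQsym]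
end

section
/- Regular sequence lemma: let (t_n) be a sequence of positive real numbers with t_n ↑ ∞ such that Σ_n e^{−a t_n} < ∞ for every a > 0 (a regular sequence). Then for ω-a.e. x ∈ M: liminf_{n→∞} (1/t_n) c^{t_n}(x) ≥ 0 and limsup_{n→∞} (−1/t_n) c^{−t_n}(x) ≤ 0. -/
open MeasureTheory ENNReal Filter

/-- The entropy cocycle `c^t := (log Δ^t) ∘ φ^t` where `Δ^t := d(ω∘φ^{-t})/dω` and
`T t` is the flow `φ^t`. -/
noncomputable def ecocC {M : Type*} [MeasurableSpace M] (ω : Measure M) (T : ℝ → M → M)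
    (t : ℝ) (x : M) : ℝ :=
  Real.log (((ω.map (T t)).rnDeriv ω (T t x)).toReal)

/-- Key estimate: the measure of the set where `c^s ≤ log ε` is at most `ε`, for `0 < ε < 1`. -/
lemma ecocC_small_measure {M : Type*} [MeasurableSpace M] (ω : Measure M)
    [IsProbabilityMeasure ω] (T : ℝ → M → M) (hTm : ∀ t : ℝ, Measurable (T t))
    (hac : ∀ t : ℝ, ω.map (T t) ≪ ω) (s ε : ℝ) (hε : 0 < ε) (hε1 : ε < 1) :
    ω {x | ecocC ω T s x ≤ Real.log ε} ≤ ENNReal.ofReal ε := by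
  set D := (ω.map (T s)).rnDeriv ω with hDdef
  have hD : Measurable D := Measure.measurable_rnDeriv _ _
  set A : Set M := {y | D y ≤ ENNReal.ofReal ε} with hAdef
  have hA : MeasurableSet A := measurableSet_le hD measurable_const
  have hlogε : Real.log ε < 0 := Real.log_neg hε hε1
  have hsub : {x | ecocC ω T s x ≤ Real.log ε} ⊆ T s ⁻¹' A := by
    intro x hx
    simp only [ecocC, Set.mem_setOf_eq, ← hDdef] at hx
    simp only [Set.mem_preimage, hAdef, Set.mem_setOf_eq]
    by_cases h0 : (D (T s x)).toReal = 0
    · rw [h0, Real.log_zero] at hx; linarith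
    · have hpos : 0 < (D (T s x)).toReal :=
        lt_of_le_of_ne ENNReal.toReal_nonneg (Ne.symm h0)
      have hle : (D (T s x)).toReal ≤ ε := (Real.log_le_log_iff hpos hε).mp hx
      have hne : D (T s x) ≠ ∞ := by
        intro h; rw [h] at h0; simp at h0
      calc D (T s x) = ENNReal.ofReal (D (T s x)).toReal := (ENNReal.ofReal_toReal hne).symm
        _ ≤ ENNReal.ofReal ε := ENNReal.ofReal_le_ofReal hle
  calc ω {x | ecocC ω T s x ≤ Real.log ε} ≤ ω (T s ⁻¹' A) := measure_mono hsub
    _ = ω.map (T s) A := (Measure.map_apply (hTm s) hA).symm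
    _ = ∫⁻ y in A, D y ∂ω := (Measure.setLIntegral_rnDeriv (hac s) A).symm
    _ ≤ ∫⁻ _ in A, ENNReal.ofReal ε ∂ω := by
        refine setLIntegral_mono' hA fun y hy => hy
    _ = ENNReal.ofReal ε * ω A := setLIntegral_const A _
    _ ≤ ENNReal.ofReal ε * 1 := mul_le_mul_right prob_le_one _
    _ = ENNReal.ofReal ε := mul_one _

/-- For a single rate `a > 0` and a single time parameterization `u n` (with `|u n|`-type
scaling `t n`), a.e. eventually `ecocC ω T (u n) x > -(a * t n)`. -/
lemma ecocC_eventually_gt {M : Type*} [MeasurableSpace M] (ω : Measure M)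
    [IsProbabilityMeasure ω] (T : ℝ → M → M) (hTm : ∀ t : ℝ, Measurable (T t))
    (hac : ∀ t : ℝ, ω.map (T t) ≪ ω)
    (t : ℕ → ℝ) (htpos : ∀ n, 0 < t n)
    (u : ℕ → ℝ)
    (htreg : ∀ a : ℝ, 0 < a → Summable fun n => Real.exp (-a * t n)) (a : ℝ) (ha : 0 < a) :
    ∀ᵐ x ∂ω, ∀ᶠ n in atTop, -(a * t n) < ecocC ω T (u n) x := by
  set E : ℕ → Set M := fun n => {x | ecocC ω T (u n) x ≤ Real.log (Real.exp (-a * t n))}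
  have hmeas : ∀ n, ω (E n) ≤ ENNReal.ofReal (Real.exp (-a * t n)) := by
    intro n
    refine ecocC_small_measure ω T hTm hac (u n) _ (Real.exp_pos _) ?_
    rw [Real.exp_lt_one_iff]
    have := htpos n
    nlinarith
  have hsum : (∑' n, ω (E n)) ≠ ∞ := by
    refine ne_top_of_le_ne_top ?_ (ENNReal.tsum_le_tsum hmeas)
    rw [← ENNReal.ofReal_tsum_of_nonneg (fun n => (Real.exp_pos _).le) (htreg a ha)]
    exact ENNReal.ofReal_ne_top
  filter_upwards [ae_eventually_notMem hsum] with x hx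
  filter_upwards [hx] with n hn
  simp only [E, Set.mem_setOf_eq, Real.log_exp, not_le] at hn
  linarith

/-- Regular sequence lemma: if `(t_n)` is a regular sequence (positive, increasing to `∞`,
with `Σ_n e^{-a t_n} < ∞` for all `a > 0`), then for ω-a.e. `x`,
`liminf (1/t_n) c^{t_n}(x) ≥ 0` and `limsup (-1/t_n) c^{-t_n}(x) ≤ 0`
(the lim inf/lim sup being taken in the extended reals). -/
theorem regular_sequence_entropy_bounds
    {M : Type*} [MeasurableSpace M] (ω : Measure M) [IsProbabilityMeasure ω]
    (T : ℝ → M → M)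
    (hT0 : T 0 = id)
    (hTadd : ∀ s t : ℝ, T (s + t) = T s ∘ T t)
    (hTm : ∀ t : ℝ, Measurable (T t))
    (hTjoint : Measurable fun p : ℝ × M => T p.1 p.2)
    (hequiv : ∀ t : ℝ, ω.map (T t) ≪ ω ∧ ω ≪ ω.map (T t))
    (t : ℕ → ℝ) (htpos : ∀ n, 0 < t n) (htmono : StrictMono t)
    (htinf : Tendsto t atTop atTop)
    (htreg : ∀ a : ℝ, 0 < a → Summable fun n => Real.exp (-a * t n)) :
    ∀ᵐ x ∂ω,
      (0 ≤ atTop.liminf fun n : ℕ => ((ecocC ω T (t n) x / t n : ℝ) : EReal)) ∧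
      (atTop.limsup (fun n : ℕ => ((-(ecocC ω T (-(t n)) x) / t n : ℝ) : EReal)) ≤ 0) := by
  have hac : ∀ s : ℝ, ω.map (T s) ≪ ω := fun s => (hequiv s).1
  have hall : ∀ᵐ x ∂ω, ∀ k : ℕ,
      (∀ᶠ n in atTop, -((1 / (k + 1 : ℝ)) * t n) < ecocC ω T (t n) x) ∧
      (∀ᶠ n in atTop, -((1 / (k + 1 : ℝ)) * t n) < ecocC ω T (-(t n)) x) := by
    rw [ae_all_iff]
    intro k
    have hk : (0 : ℝ) < 1 / (k + 1 : ℝ) := by positivity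
    exact (ecocC_eventually_gt ω T hTm hac t htpos (fun n => t n) htreg _ hk).and
      (ecocC_eventually_gt ω T hTm hac t htpos (fun n => -(t n)) htreg _ hk)
  filter_upwards [hall] with x hx
  have hseq : Tendsto (fun k : ℕ => ((-(1 / (k + 1 : ℝ)) : ℝ) : EReal)) atTop (nhds 0) := by
    have h1 : Tendsto (fun k : ℕ => -(1 / (k + 1 : ℝ))) atTop (nhds 0) := by
      have := tendsto_one_div_add_atTop_nhds_zero_nat (𝕜 := ℝ)
      simpa using this.neg
    have := (EReal.continuous_coe_iff.mpr continuous_id).continuousAt.tendsto.comp h1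
    simpa using (EReal.tendsto_coe.mpr h1)
  constructor
  · -- liminf ≥ 0
    refine le_of_tendsto hseq (Eventually.of_forall fun k => ?_)
    have hev : ∀ᶠ n in atTop,
        ((-(1 / (k + 1 : ℝ)) : ℝ) : EReal) ≤ ((ecocC ω T (t n) x / t n : ℝ) : EReal) := by
      filter_upwards [(hx k).1] with n hn
      rw [EReal.coe_le_coe_iff]
      rw [le_div_iff₀ (htpos n)]
      nlinarith [htpos n]
    calc ((-(1 / (k + 1 : ℝ)) : ℝ) : EReal)
        = atTop.liminf (fun _ : ℕ => ((-(1 / (k + 1 : ℝ)) : ℝ) : EReal)) := (liminf_const _).symm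
      _ ≤ _ := liminf_le_liminf hev
  · -- limsup ≤ 0
    have hseq' : Tendsto (fun k : ℕ => (((1 / (k + 1 : ℝ)) : ℝ) : EReal)) atTop (nhds 0) := by
      have h1 : Tendsto (fun k : ℕ => (1 / (k + 1 : ℝ))) atTop (nhds 0) :=
        tendsto_one_div_add_atTop_nhds_zero_nat
      simpa using (EReal.tendsto_coe.mpr h1)
    refine ge_of_tendsto hseq' (Eventually.of_forall fun k => ?_)
    have hev : ∀ᶠ n in atTop,
        ((-(ecocC ω T (-(t n)) x) / t n : ℝ) : EReal) ≤ (((1 / (k + 1 : ℝ)) : ℝ) : EReal) := by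
      filter_upwards [(hx k).2] with n hn
      rw [EReal.coe_le_coe_iff]
      rw [div_le_iff₀ (htpos n)]
      nlinarith [htpos n]
    calc atTop.limsup (fun n : ℕ => ((-(ecocC ω T (-(t n)) x) / t n : ℝ) : EReal))
        ≤ atTop.limsup (fun _ : ℕ => (((1 / (k + 1 : ℝ)) : ℝ) : EReal)) := limsup_le_limsup hev
      _ = (((1 / (k + 1 : ℝ)) : ℝ) : EReal) := limsup_const _
end

section
/- Suppose ω is invariant under the flow (ω ∘ φ^{−t} = ω for all t ∈ ℝ), let Φ, Ψ : M → ℝ be bounded measurable, and set C(s) := ∫_M Ψ·(Φ ∘ φ^s) dω. Assume sup_{|s|≥1} |s·C(s)| < ∞ (i.e. C(s) = O(|s|^{−1}) as |s| → ∞). Then for any L ∈ ℝ the following are equivalent: (1) lim_{t→∞} (1/2)∫_{−t}^{t} C(s) ds = L; (2) lim_{t→∞} (1/2)∫_{−t}^{t} C(s)(1 − |s|/t) ds = L. -/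
open MeasureTheory Filter intervalIntegral

section AuxGK

lemma half_tendsto_gk (f : ℝ → ℝ) (l : Filter ℝ) (L : ℝ) :
    Tendsto (fun t => (1/2 : ℝ) * f t) l (nhds L) ↔ Tendsto f l (nhds (2*L)) := by
  constructor
  · intro h
    have h2 := h.const_mul (2:ℝ)
    exact Filter.Tendsto.congr (fun t => by ring) h2
  · intro h
    have h2 := h.const_mul ((1:ℝ)/2)
    have he : (1/2 : ℝ) * (2*L) = L := by ring
    rwa [he] at h2

end AuxGK

lemma cesaro_cont (f : ℝ → ℝ) (hf : ∀ a b : ℝ, IntervalIntegrable f volume a b)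
    {L : ℝ} (h : Tendsto f atTop (nhds L)) :
    Tendsto (fun t => (∫ u in (0:ℝ)..t, f u) / t) atTop (nhds L) := by
  rw [Metric.tendsto_nhds]
  intro ε hε
  obtain ⟨T0', hT0'⟩ := eventually_atTop.mp (Metric.tendsto_nhds.mp h (ε/2) (half_pos hε))
  set T0 : ℝ := max T0' 0 with hT0def
  have hT0nn : 0 ≤ T0 := le_max_right _ _
  set A : ℝ := ∫ u in (0:ℝ)..T0, |f u - L| with hA
  have hAnn : 0 ≤ A := intervalIntegral.integral_nonneg hT0nn (fun u _ => abs_nonneg _)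
  rw [eventually_atTop]
  refine ⟨max (max T0 1) (2*A/ε + 1), fun t ht => ?_⟩
  have ht1 : (1:ℝ) ≤ t := le_trans (le_max_right T0 1) (le_trans (le_max_left _ _) ht)
  have htpos : (0:ℝ) < t := lt_of_lt_of_le one_pos ht1
  have htT0 : T0 ≤ t := le_trans (le_max_left T0 1) (le_trans (le_max_left _ _) ht)
  have hsplit : (∫ u in (0:ℝ)..t, (f u - L)) =
      (∫ u in (0:ℝ)..T0, (f u - L)) + ∫ u in T0..t, (f u - L) :=
    (intervalIntegral.integral_add_adjacent_intervals
      ((hf 0 T0).sub intervalIntegrable_const) ((hf T0 t).sub intervalIntegrable_const)).symm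
  have hbound2 : |∫ u in T0..t, (f u - L)| ≤ (ε/2) * t := by
    calc |∫ u in T0..t, (f u - L)| ≤ ∫ u in T0..t, |f u - L| :=
          intervalIntegral.abs_integral_le_integral_abs htT0
      _ ≤ ∫ u in T0..t, (ε/2) := by
          apply intervalIntegral.integral_mono_on htT0
            ((hf T0 t).sub intervalIntegrable_const).abs intervalIntegrable_const
          intro u hu
          have : T0' ≤ u := le_trans (le_max_left _ _) hu.1
          exact le_of_lt (hT0' u this)
      _ = (ε/2) * (t - T0) := by rw [intervalIntegral.integral_const, smul_eq_mul, mul_comm]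
      _ ≤ (ε/2) * t := by nlinarith
  have hbound1 : |∫ u in (0:ℝ)..T0, (f u - L)| ≤ A := by
    calc |∫ u in (0:ℝ)..T0, (f u - L)| ≤ ∫ u in (0:ℝ)..T0, |f u - L| :=
          intervalIntegral.abs_integral_le_integral_abs hT0nn
      _ = A := rfl
  have key : (∫ u in (0:ℝ)..t, f u) / t - L = (∫ u in (0:ℝ)..t, (f u - L)) / t := by
    rw [intervalIntegral.integral_sub (hf 0 t) intervalIntegrable_const,
      intervalIntegral.integral_const, smul_eq_mul, sub_zero]
    field_simp
  rw [Real.dist_eq, key, abs_div, abs_of_pos htpos]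
  have hAt : A / t < ε/2 := by
    rw [div_lt_iff₀ htpos]
    have h2 : 2*A/ε + 1 ≤ t := le_trans (le_max_right _ _) ht
    have h3 : ε * (2*A/ε + 1) ≤ ε * t := mul_le_mul_of_nonneg_left h2 (le_of_lt hε)
    have h4 : ε * (2*A/ε) = 2*A := by field_simp
    nlinarith
  have hnum : |∫ u in (0:ℝ)..t, (f u - L)| ≤ A + (ε/2)*t := by
    rw [hsplit]
    exact (abs_add_le _ _).trans (by linarith)
  calc |∫ u in (0:ℝ)..t, (f u - L)| / t ≤ (A + (ε/2)*t) / t := by gcongr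
    _ = A/t + ε/2 := by rw [add_div, mul_div_assoc, div_self (ne_of_gt htpos), mul_one]
    _ < ε/2 + ε/2 := by linarith
    _ = ε := by ring

lemma tauberian_cont (F : ℝ → ℝ) (hF : ∀ a b : ℝ, IntervalIntegrable F volume a b)
    (K : ℝ) (hosc : ∀ t u : ℝ, 1 ≤ t → t ≤ u → |F u - F t| ≤ K * Real.log (u / t))
    {L : ℝ} (hg : Tendsto (fun t => (∫ u in (0:ℝ)..t, F u) / t) atTop (nhds L)) :
    Tendsto F atTop (nhds L) := by
  rw [Metric.tendsto_nhds]
  intro ε hε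
  set K' : ℝ := max K 0 with hK'
  have hK'nn : 0 ≤ K' := le_max_right _ _
  set δ : ℝ := ε / (2 * (K' + 1)) with hδ
  have hδpos : 0 < δ := by positivity
  set lam : ℝ := Real.exp δ with hlam
  have hlam1 : 1 < lam := Real.one_lt_exp_iff.mpr hδpos
  have hlampos : 0 < lam := lt_trans one_pos hlam1
  have hloglam : Real.log lam = δ := Real.log_exp δ
  -- the averaged bracket tends to L
  have hcomp : Tendsto (fun t : ℝ => lam * t) atTop atTop :=
    Tendsto.const_mul_atTop hlampos tendsto_id
  have h1 : Tendsto (fun t => (∫ u in (0:ℝ)..(lam*t), F u) / (lam*t)) atTop (nhds L) :=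
    hg.comp hcomp
  have h2 : Tendsto (fun t => (lam * ((∫ u in (0:ℝ)..(lam*t), F u) / (lam*t))
      - (∫ u in (0:ℝ)..t, F u) / t) / (lam - 1)) atTop
      (nhds ((lam * L - L) / (lam - 1))) :=
    Tendsto.div ((h1.const_mul lam).sub hg) tendsto_const_nhds (by linarith)
  have hl1 : lam - 1 ≠ 0 := by linarith
  have hLL : (lam * L - L) / (lam - 1) = L := by
    rw [div_eq_iff hl1]; ring
  rw [hLL] at h2
  have h3 := Metric.tendsto_nhds.mp h2 (ε/2) (half_pos hε)
  rw [eventually_atTop] at h3 ⊢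
  obtain ⟨T1, hT1⟩ := h3
  refine ⟨max T1 1, fun t ht => ?_⟩
  have ht1 : (1:ℝ) ≤ t := le_trans (le_max_right _ _) ht
  have htpos : (0:ℝ) < t := lt_of_lt_of_le one_pos ht1
  have htlam : t ≤ lam * t := by nlinarith
  have ht0 : t ≠ 0 := ne_of_gt htpos
  have hl0 : lam ≠ 0 := ne_of_gt hlampos
  have hlt0 : (0:ℝ) < (lam - 1) * t := by nlinarith
  set Bt : ℝ := (lam * ((∫ u in (0:ℝ)..(lam*t), F u) / (lam*t))
      - (∫ u in (0:ℝ)..t, F u) / t) / (lam - 1) with hBt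
  have hBtL : |Bt - L| < ε/2 := by
    have := hT1 t (le_trans (le_max_left _ _) ht)
    rwa [Real.dist_eq] at this
  -- rewrite Bt as  (∫_t^{λt} F) / ((λ-1) t)
  have hBt2 : Bt = (∫ u in t..(lam*t), F u) / ((lam - 1) * t) := by
    have hadj : (∫ u in (0:ℝ)..t, F u) + (∫ u in t..(lam*t), F u)
        = ∫ u in (0:ℝ)..(lam*t), F u :=
      intervalIntegral.integral_add_adjacent_intervals (hF 0 t) (hF t (lam*t))
    have h0 : (∫ u in (0:ℝ)..(lam*t), F u)
        = (∫ u in (0:ℝ)..t, F u) + (∫ u in t..(lam*t), F u) := hadj.symm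
    rw [hBt, h0]
    field_simp
    ring
  -- bound |F t - Bt|
  have hFB : |F t - Bt| ≤ K' * δ := by
    have hsub0 : (∫ u in t..(lam*t), (F t - F u))
        = ((lam - 1) * t) * F t - (∫ u in t..(lam*t), F u) := by
      rw [intervalIntegral.integral_sub (intervalIntegrable_const (c := F t))
        (hF t (lam*t)), intervalIntegral.integral_const, smul_eq_mul]
      ring
    have hsub : F t - Bt = (∫ u in t..(lam*t), (F t - F u)) / ((lam - 1) * t) := by
      rw [hBt2, hsub0]
      field_simp
    rw [hsub, abs_div, abs_of_pos hlt0, div_le_iff₀ hlt0]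
    have hb1 : |∫ u in t..(lam*t), (F t - F u)| ≤ ∫ u in t..(lam*t), |F t - F u| :=
      intervalIntegral.abs_integral_le_integral_abs htlam
    have hb2 : (∫ u in t..(lam*t), |F t - F u|) ≤ ∫ u in t..(lam*t), K' * δ := by
      apply intervalIntegral.integral_mono_on htlam
        ((intervalIntegrable_const (c := F t)).sub (hF t (lam*t))).abs
        intervalIntegrable_const
      intro u hu
      rw [abs_sub_comm]
      have hu0 : 0 < u := lt_of_lt_of_le htpos hu.1
      have h5 : |F u - F t| ≤ K * Real.log (u / t) := hosc t u ht1 hu.1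
      have h6 : Real.log (u / t) ≤ δ := by
        rw [← hloglam]
        apply Real.log_le_log (div_pos hu0 htpos)
        rw [div_le_iff₀ htpos]
        exact hu.2
      have h7 : 0 ≤ Real.log (u / t) := Real.log_nonneg (by
        rw [le_div_iff₀ htpos]; linarith [hu.1])
      calc |F u - F t| ≤ K * Real.log (u/t) := h5
        _ ≤ K' * Real.log (u/t) := mul_le_mul_of_nonneg_right (le_max_left _ _) h7
        _ ≤ K' * δ := mul_le_mul_of_nonneg_left h6 hK'nn
    calc |∫ u in t..(lam*t), (F t - F u)| ≤ ∫ u in t..(lam*t), K' * δ := le_trans hb1 hb2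
      _ = K' * δ * ((lam - 1) * t) := by
          rw [intervalIntegral.integral_const, smul_eq_mul]; ring
  have hKδ : K' * δ < ε/2 := by
    have : K' * δ < (K' + 1) * δ := by nlinarith
    have h8 : (K' + 1) * δ = ε/2 := by
      rw [hδ]; field_simp
    linarith
  have : |F t - L| ≤ |F t - Bt| + |Bt - L| := abs_sub_le _ _ _
  rw [Real.dist_eq]
  linarith

lemma intInt_of_bdd (d : ℝ → ℝ) (hm : Measurable d) (B : ℝ) (hb : ∀ s, |d s| ≤ B)
    (a b : ℝ) : IntervalIntegrable d volume a b := by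
  apply IntervalIntegrable.mono_fun' (g := fun _ => B)
    (intervalIntegrable_const (c := B))
    hm.aestronglyMeasurable.restrict
  exact ae_of_all _ (fun x => by simpa [Real.norm_eq_abs] using hb x)

lemma one_sided (d : ℝ → ℝ) (hm : Measurable d) (B : ℝ) (hb : ∀ s, |d s| ≤ B)
    {t : ℝ} (ht : 0 < t) :
    (∫ u in (0:ℝ)..t, ∫ s in (0:ℝ)..u, d s) = ∫ s in (0:ℝ)..t, d s * (t - s) := by
  set g : ℝ → ℝ → ℝ := fun u s => (Set.Ioc (0:ℝ) u).indicator d s with hg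
  have step1 : (∫ u in (0:ℝ)..t, ∫ s in (0:ℝ)..u, d s)
      = ∫ u in Set.Ioc (0:ℝ) t, ∫ s in Set.Ioc (0:ℝ) t, g u s := by
    rw [intervalIntegral.integral_of_le ht.le]
    apply setIntegral_congr_fun measurableSet_Ioc
    intro u hu
    dsimp only
    rw [intervalIntegral.integral_of_le hu.1.le,
      setIntegral_indicator measurableSet_Ioc,
      Set.inter_eq_self_of_subset_right (Set.Ioc_subset_Ioc_right hu.2)]
  haveI : IsFiniteMeasure (volume.restrict (Set.Ioc (0:ℝ) t)) :=
    ⟨by rw [Measure.restrict_apply_univ]; exact measure_Ioc_lt_top⟩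
  have hmeas : Measurable (Function.uncurry g) := by
    have h0 : Function.uncurry g
        = Set.indicator {p : ℝ×ℝ | 0 < p.2 ∧ p.2 ≤ p.1} (fun p => d p.2) := by
      ext p
      by_cases hp : 0 < p.2 ∧ p.2 ≤ p.1 <;>
        simp [Function.uncurry, hg, Set.indicator, Set.mem_Ioc, hp]
    rw [h0]
    have hset : MeasurableSet {p : ℝ×ℝ | 0 < p.2 ∧ p.2 ≤ p.1} :=
      (measurableSet_lt measurable_const measurable_snd).inter
        (measurableSet_le measurable_snd measurable_fst)
    exact (hm.comp measurable_snd).indicator hset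
  have hint : Integrable (Function.uncurry g)
      ((volume.restrict (Set.Ioc (0:ℝ) t)).prod (volume.restrict (Set.Ioc (0:ℝ) t))) := by
    apply Integrable.mono' (integrable_const (max B 0)) hmeas.aestronglyMeasurable
    refine ae_of_all _ (fun p => ?_)
    rw [Real.norm_eq_abs]
    by_cases hp : p.2 ∈ Set.Ioc (0:ℝ) p.1
    · rw [Function.uncurry]
      simp only [hg, Set.indicator_of_mem hp]
      exact le_trans (hb _) (le_max_left _ _)
    · rw [Function.uncurry]
      simp only [hg, Set.indicator_of_notMem hp, abs_zero]
      exact le_max_right _ _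
  have step2 : (∫ u in Set.Ioc (0:ℝ) t, ∫ s in Set.Ioc (0:ℝ) t, g u s)
      = ∫ s in Set.Ioc (0:ℝ) t, ∫ u in Set.Ioc (0:ℝ) t, g u s :=
    integral_integral_swap hint
  have step3 : ∀ s ∈ Set.Ioc (0:ℝ) t,
      (∫ u in Set.Ioc (0:ℝ) t, g u s) = d s * (t - s) := by
    intro s hs
    have h1 : ∀ u, g u s = (Set.Ici s).indicator (fun _ => d s) u := by
      intro u
      by_cases h : s ≤ u
      · simp [hg, Set.indicator, Set.mem_Ioc, hs.1, h, Set.mem_Ici]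
      · simp [hg, Set.indicator, Set.mem_Ioc, h, Set.mem_Ici]
    have h2 : Set.Ioc (0:ℝ) t ∩ Set.Ici s = Set.Icc s t := by
      ext u
      simp only [Set.mem_inter_iff, Set.mem_Ioc, Set.mem_Ici, Set.mem_Icc]
      constructor
      · rintro ⟨⟨_, hu2⟩, hu3⟩; exact ⟨hu3, hu2⟩
      · rintro ⟨hu1, hu2⟩; exact ⟨⟨lt_of_lt_of_le hs.1 hu1, hu2⟩, hu1⟩
    simp_rw [h1]
    rw [setIntegral_indicator measurableSet_Ici, h2, setIntegral_const,
      Real.volume_real_Icc_of_le (by linarith [hs.2] : s ≤ t), smul_eq_mul, mul_comm]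
  rw [step1, step2, setIntegral_congr_fun measurableSet_Ioc step3,
    ← intervalIntegral.integral_of_le ht.le]

lemma two_sided (c : ℝ → ℝ) (hm : Measurable c) (B : ℝ) (hb : ∀ s, |c s| ≤ B)
    {t : ℝ} (ht : 0 < t) :
    (∫ s in (-t)..t, c s * (1 - |s|/t)) = (∫ u in (0:ℝ)..t, ∫ s in (-u)..u, c s) / t := by
  set cn : ℝ → ℝ := fun s => c (-s) with hcn
  have hmn : Measurable cn := hm.comp measurable_neg
  have hbn : ∀ s, |cn s| ≤ B := fun s => hb (-s)
  have hci : ∀ a b : ℝ, IntervalIntegrable c volume a b := intInt_of_bdd c hm B hb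
  have hcni : ∀ a b : ℝ, IntervalIntegrable cn volume a b := intInt_of_bdd cn hmn B hbn
  have hsplit : ∀ u : ℝ,
      (∫ s in (-u)..u, c s) = (∫ s in (0:ℝ)..u, cn s) + ∫ s in (0:ℝ)..u, c s := by
    intro u
    have h1 : (∫ s in (0:ℝ)..u, cn s) = ∫ s in (-u)..(0:ℝ), c s := by
      have h := intervalIntegral.integral_comp_neg (a := (0:ℝ)) (b := u) (f := c)
      rw [neg_zero] at h
      exact h
    rw [h1]
    exact (intervalIntegral.integral_add_adjacent_intervals (hci (-u) 0) (hci 0 u)).symm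
  have hint1 : IntervalIntegrable (fun u => ∫ s in (0:ℝ)..u, cn s) volume 0 t :=
    ((intervalIntegral.continuous_primitive hcni 0).intervalIntegrable 0 t)
  have hint2 : IntervalIntegrable (fun u => ∫ s in (0:ℝ)..u, c s) volume 0 t :=
    ((intervalIntegral.continuous_primitive hci 0).intervalIntegrable 0 t)
  have hRHS : (∫ u in (0:ℝ)..t, ∫ s in (-u)..u, c s)
      = (∫ s in (0:ℝ)..t, cn s * (t - s)) + ∫ s in (0:ℝ)..t, c s * (t - s) := by
    rw [intervalIntegral.integral_congr
      (g := fun u => (∫ s in (0:ℝ)..u, cn s) + ∫ s in (0:ℝ)..u, c s) (fun u _ => hsplit u),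
      intervalIntegral.integral_add hint1 hint2,
      one_sided cn hmn B hbn ht, one_sided c hm B hb ht]
  have hwc : Continuous (fun s : ℝ => 1 - |s|/t) := by continuity
  have hL1 : (∫ s in (-t)..(0:ℝ), c s * (1 - |s|/t))
      = ∫ s in (0:ℝ)..t, cn s * (1 - |s|/t) := by
    have h := intervalIntegral.integral_comp_neg (a := (0:ℝ)) (b := t)
      (f := fun s => c s * (1 - |s|/t))
    simp only [abs_neg, neg_zero] at h
    rw [← h]
  have hLHS : (∫ s in (-t)..t, c s * (1 - |s|/t))
      = (∫ s in (0:ℝ)..t, cn s * (1 - |s|/t)) + ∫ s in (0:ℝ)..t, c s * (1 - |s|/t) := by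
    rw [← hL1]
    exact (intervalIntegral.integral_add_adjacent_intervals
      ((hci (-t) 0).mul_continuousOn hwc.continuousOn)
      ((hci 0 t).mul_continuousOn hwc.continuousOn)).symm
  have hconv : ∀ x : ℝ → ℝ, (∫ s in (0:ℝ)..t, x s * (1 - |s|/t))
      = (∫ s in (0:ℝ)..t, x s * (t - s)) / t := by
    intro x
    rw [← intervalIntegral.integral_div]
    apply intervalIntegral.integral_congr
    intro s hs
    rw [Set.uIcc_of_le ht.le] at hs
    dsimp only
    rw [abs_of_nonneg hs.1]
    field_simp
  rw [hLHS, hconv cn, hconv c, hRHS, add_div]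

/-- The equilibrium flux–flux correlation function `C(s) := ∫ Ψ·(Φ∘φ^s) dω`. -/
noncomputable def corrFun {M : Type*} [MeasurableSpace M] (ω : Measure M) (T : ℝ → M → M)
    (Φ Ψ : M → ℝ) (s : ℝ) : ℝ :=
  ∫ x, Ψ x * Φ (T s x) ∂ω

/-- Cesàro/Tauberian equivalence for the finite time Green–Kubo formula: if `ω` is invariant,
`Φ, Ψ` are bounded measurable, and `C(s) = O(|s|^{-1})`, then for any `L`:
`(1/2)∫_{-t}^t C(s) ds → L` iff `(1/2)∫_{-t}^t C(s)(1-|s|/t) ds → L` as `t → ∞`. -/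
theorem green_kubo_cesaro_tauberian
    {M : Type*} [MeasurableSpace M] (ω : Measure M) [IsProbabilityMeasure ω]
    (T : ℝ → M → M)
    (hT0 : T 0 = id)
    (hTadd : ∀ s t : ℝ, T (s + t) = T s ∘ T t)
    (hTm : ∀ t : ℝ, Measurable (T t))
    (hTjoint : Measurable fun p : ℝ × M => T p.1 p.2)
    (hinv : ∀ t : ℝ, ω.map (T t) = ω)
    (Φ Ψ : M → ℝ) (hΦm : Measurable Φ) (hΨm : Measurable Ψ)
    (CΦ : ℝ) (hΦb : ∀ x, |Φ x| ≤ CΦ) (CΨ : ℝ) (hΨb : ∀ x, |Ψ x| ≤ CΨ)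
    (K : ℝ) (hK : ∀ s : ℝ, 1 ≤ |s| → |s * corrFun ω T Φ Ψ s| ≤ K) :
    ∀ L : ℝ,
      Tendsto (fun t : ℝ => (1 / 2) * ∫ s in (-t)..t, corrFun ω T Φ Ψ s)
        atTop (nhds L)
      ↔ Tendsto (fun t : ℝ => (1 / 2) * ∫ s in (-t)..t, corrFun ω T Φ Ψ s * (1 - |s| / t))
        atTop (nhds L) := by
  intro L
  set C : ℝ → ℝ := corrFun ω T Φ Ψ with hCdef
  -- measurability of C
  have hCm : Measurable C := by
    have hSM : StronglyMeasurable (fun p : ℝ × M => Ψ p.2 * Φ (T p.1 p.2)) :=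
      ((hΨm.comp measurable_snd).mul (hΦm.comp hTjoint)).stronglyMeasurable
    exact hSM.integral_prod_right'.measurable
  -- boundedness of C
  set B : ℝ := |CΨ| * |CΦ| with hBdef
  have hCb : ∀ s, |C s| ≤ B := by
    intro s
    have h1 : ∀ x, ‖Ψ x * Φ (T s x)‖ ≤ B := by
      intro x
      rw [Real.norm_eq_abs, abs_mul]
      exact mul_le_mul (le_trans (hΨb x) (le_abs_self _)) (le_trans (hΦb _) (le_abs_self _))
        (abs_nonneg _) (abs_nonneg _)
    have h2 := norm_integral_le_of_norm_le_const (C := B)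
      (μ := ω) (f := fun x => Ψ x * Φ (T s x)) (ae_of_all _ h1)
    simpa [hCdef, corrFun, Real.norm_eq_abs, measure_univ] using h2
  have hCi : ∀ a b : ℝ, IntervalIntegrable C volume a b := intInt_of_bdd C hCm B hCb
  -- the symmetric primitive F
  set F : ℝ → ℝ := fun t => ∫ s in (-t)..t, C s with hFdef
  have hFcont : Continuous F := by
    have h1 : Continuous fun t : ℝ => ∫ s in (0:ℝ)..t, C s :=
      intervalIntegral.continuous_primitive hCi 0
    have h2 : Continuous fun t : ℝ => ∫ s in (0:ℝ)..(-t), C s := h1.comp continuous_neg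
    have h3 : F = fun t => (∫ s in (0:ℝ)..t, C s) - (∫ s in (0:ℝ)..(-t), C s) := by
      funext u
      have h4 := intervalIntegral.integral_add_adjacent_intervals (hCi (-u) 0) (hCi 0 u)
      have h5 : (∫ s in (-u)..(0:ℝ), C s) = -∫ s in (0:ℝ)..(-u), C s :=
        intervalIntegral.integral_symm _ _
      rw [hFdef]
      dsimp only
      rw [← h4, h5]
      ring
    rw [h3]
    exact h1.sub h2
  have hFi : ∀ a b : ℝ, IntervalIntegrable F volume a b :=
    fun a b => hFcont.intervalIntegrable a b
  -- slow oscillation of F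
  have hosc : ∀ t u : ℝ, 1 ≤ t → t ≤ u → |F u - F t| ≤ (2*K) * Real.log (u / t) := by
    intro t u ht1 htu
    have htpos : (0:ℝ) < t := lt_of_lt_of_le one_pos ht1
    have hupos : (0:ℝ) < u := lt_of_lt_of_le htpos htu
    have hsplit : F u - F t = (∫ s in (-u)..(-t), C s) + ∫ s in t..u, C s := by
      have h4 := intervalIntegral.integral_add_adjacent_intervals (hCi (-u) (-t)) (hCi (-t) t)
      have h5 := intervalIntegral.integral_add_adjacent_intervals (hCi (-u) t) (hCi t u)
      rw [hFdef]
      dsimp only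
      rw [← h5, ← h4]
      ring
    -- integrability of the comparison function
    have hKint : IntervalIntegrable (fun s : ℝ => K * s⁻¹) volume t u := by
      apply ContinuousOn.intervalIntegrable
      apply ContinuousOn.mul continuousOn_const
      apply ContinuousOn.inv₀ continuousOn_id
      intro x hx
      rw [Set.uIcc_of_le htu] at hx
      exact ne_of_gt (lt_of_lt_of_le htpos hx.1)
    have hlog : (∫ s in t..u, K * s⁻¹) = K * Real.log (u / t) := by
      rw [intervalIntegral.integral_const_mul, integral_inv_of_pos htpos hupos]
    have hbound : ∀ (D : ℝ → ℝ), (∀ a b : ℝ, IntervalIntegrable D volume a b) →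
        (∀ s, s ∈ Set.Icc t u → |D s| ≤ K * s⁻¹) →
        |∫ s in t..u, D s| ≤ K * Real.log (u / t) := by
      intro D hDi hDb
      calc |∫ s in t..u, D s| ≤ ∫ s in t..u, |D s| :=
            intervalIntegral.abs_integral_le_integral_abs htu
        _ ≤ ∫ s in t..u, K * s⁻¹ :=
            intervalIntegral.integral_mono_on htu (hDi t u).abs hKint hDb
        _ = K * Real.log (u / t) := hlog
    have hC1 : |∫ s in t..u, C s| ≤ K * Real.log (u / t) := by
      apply hbound C hCi
      intro s hs
      have hspos : (0:ℝ) < s := lt_of_lt_of_le htpos hs.1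
      have h6 : |s * C s| ≤ K := hK s (by rw [abs_of_pos hspos]; linarith [hs.1])
      rw [abs_mul, abs_of_pos hspos] at h6
      calc |C s| = s * |C s| * s⁻¹ := by field_simp
        _ ≤ K * s⁻¹ := by
            apply mul_le_mul_of_nonneg_right h6 (le_of_lt (inv_pos.mpr hspos))
    have hC2 : |∫ s in (-u)..(-t), C s| ≤ K * Real.log (u / t) := by
      have h7 : (∫ s in (-u)..(-t), C s) = ∫ s in t..u, C (-s) := by
        have h := intervalIntegral.integral_comp_neg (a := t) (b := u) (f := C)
        rw [h]
      rw [h7]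
      apply hbound (fun s => C (-s)) (intInt_of_bdd _ (hCm.comp measurable_neg) B (fun s => hCb (-s)))
      intro s hs
      have hspos : (0:ℝ) < s := lt_of_lt_of_le htpos hs.1
      have h6 : |(-s) * C (-s)| ≤ K := hK (-s) (by rw [abs_neg, abs_of_pos hspos]; linarith [hs.1])
      rw [abs_mul, abs_neg, abs_of_pos hspos] at h6
      calc |C (-s)| = s * |C (-s)| * s⁻¹ := by field_simp
        _ ≤ K * s⁻¹ := mul_le_mul_of_nonneg_right h6 (le_of_lt (inv_pos.mpr hspos))
    calc |F u - F t| = |(∫ s in (-u)..(-t), C s) + ∫ s in t..u, C s| := by rw [hsplit]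
      _ ≤ |∫ s in (-u)..(-t), C s| + |∫ s in t..u, C s| := abs_add_le _ _
      _ ≤ K * Real.log (u / t) + K * Real.log (u / t) := add_le_add hC2 hC1
      _ = (2*K) * Real.log (u / t) := by ring
  -- the two bridging equivalences
  have iff1 : Tendsto (fun t : ℝ => (1 / 2) * ∫ s in (-t)..t, C s) atTop (nhds L)
      ↔ Tendsto F atTop (nhds (2*L)) := half_tendsto_gk F atTop L
  have iff2 : Tendsto (fun t : ℝ => (1 / 2) * ∫ s in (-t)..t, C s * (1 - |s| / t))
        atTop (nhds L)
      ↔ Tendsto (fun t => (∫ u in (0:ℝ)..t, F u) / t) atTop (nhds (2*L)) := by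
    have hev : (fun t : ℝ => (1 / 2) * ∫ s in (-t)..t, C s * (1 - |s| / t))
        =ᶠ[atTop] fun t => (1/2 : ℝ) * ((∫ u in (0:ℝ)..t, F u) / t) := by
      filter_upwards [eventually_gt_atTop (0:ℝ)] with t ht
      rw [two_sided C hCm B hCb ht]
    exact (tendsto_congr' hev).trans (half_tendsto_gk _ atTop L)
  constructor
  · intro h1
    exact iff2.mpr (cesaro_cont F hFi (iff1.mp h1))
  · intro h2
    exact iff1.mpr (tauberian_cont F hFi (2*K) hosc (iff2.mp h2))
end

section
/- Let ϑ : M → M be a continuous involution (ϑ ∘ ϑ = id) with ϑ ∘ φ = φ^{−1} ∘ ϑ such that the metric d_ϑ(x,y) := d(ϑ(x),ϑ(y)) is equivalent to d. Let ω be a Borel probability measure on M with ω ∘ ϑ = ω and such that the pushforward ω_1 := ω ∘ φ^{−1} is equivalent to ω, and suppose the entropy production observable σ := (log dω_1/dω) ∘ φ has a continuous version (σ continuous with σ = (log dω_1/dω) ∘ φ ω-a.e.). Let V : M → ℝ be continuous with ω ∈ S_V. Then σ is physically equivalent to σ̃_V := V − V ∘ ϑ, i.e. lim_{n→∞} (1/n)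 sup_{x∈M} |S_n σ(x) − S_n σ̃_V(x)| = 0. -/
open MeasureTheory Filter ENNReal

section TopDyn

variable {M : Type*} [MetricSpace M]

/-- Birkhoff sum `S_n f := Σ_{j=0}^{n-1} f ∘ φ^j`. -/
def birkhoff (φ : M → M) (f : M → ℝ) (n : ℕ) (x : M) : ℝ :=
  ∑ j ∈ Finset.range n, f (φ^[j] x)

/-- The Bowen ball `B_n(x,ε) := {y : max_{0≤j≤n-1} d(φ^j x, φ^j y) < ε}`. -/
def bowenBall (φ : M → M) (n : ℕ) (x : M) (ε : ℝ) : Set M :=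
  {y | ∀ j < n, dist (φ^[j] x) (φ^[j] y) < ε}

/-- The condition `ν ∈ S_V`: for all sufficiently small `ε > 0` there are constants
`C_n(ε) > 0` with `(1/n) log C_n(ε) → 0` such that
`C_n(ε)⁻¹ ≤ ν(B_n(x,ε)) e^{-S_n V(x)} ≤ C_n(ε)` for all `x` and `n ≥ 1`. -/
def memSV [MeasurableSpace M] (φ : M → M) (V : M → ℝ) (ν : Measure M) : Prop :=
  ∃ ε₀ > (0 : ℝ), ∀ ε : ℝ, 0 < ε → ε < ε₀ →
    ∃ C : ℕ → ℝ, (∀ n, 0 < C n) ∧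
      Tendsto (fun n : ℕ => Real.log (C n) / n) atTop (nhds 0) ∧
      ∀ n : ℕ, 1 ≤ n → ∀ x : M,
        (C n)⁻¹ ≤ (ν (bowenBall φ n x ε)).toReal * Real.exp (-(birkhoff φ V n x)) ∧
        (ν (bowenBall φ n x ε)).toReal * Real.exp (-(birkhoff φ V n x)) ≤ C n

end TopDyn

section helpers
variable {M : Type*} [MetricSpace M]

lemma iterCancel (φ : M ≃ₜ M) : ∀ (m : ℕ) (z : M), (⇑φ)^[m] ((⇑φ.symm)^[m] z) = z := by
  intro m
  induction m with
  | zero => intro z; rfl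
  | succ k ih =>
    intro z
    rw [Function.iterate_succ_apply, Function.iterate_succ_apply']
    simp [ih]

lemma iterCancel' (φ : M ≃ₜ M) : ∀ (m : ℕ) (z : M), (⇑φ.symm)^[m] ((⇑φ)^[m] z) = z := by
  intro m
  induction m with
  | zero => intro z; rfl
  | succ k ih =>
    intro z
    rw [Function.iterate_succ_apply, Function.iterate_succ_apply']
    simp [ih]

lemma symm_iter_of_le (φ : M ≃ₜ M) {i m : ℕ} (h : i ≤ m) (y : M) :
    (⇑φ.symm)^[i] ((⇑φ)^[m] y) = (⇑φ)^[m - i] y := by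
  conv_lhs => rw [show m = i + (m - i) from (Nat.add_sub_cancel' h).symm,
    Function.iterate_add_apply]
  rw [iterCancel' φ]

lemma iter_of_symm_of_le (φ : M ≃ₜ M) {i m : ℕ} (h : i ≤ m) (z : M) :
    (⇑φ)^[i] ((⇑φ.symm)^[m] z) = (⇑φ.symm)^[m - i] z := by
  conv_lhs => rw [show m = i + (m - i) from (Nat.add_sub_cancel' h).symm,
    Function.iterate_add_apply]
  rw [iterCancel φ]

lemma theta_iter (φ : M ≃ₜ M) (ϑ : M → M) (hϑφ : ∀ x, ϑ (φ x) = φ.symm (ϑ x)) :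
    ∀ (k : ℕ) (w : M), ϑ ((⇑φ)^[k] w) = (⇑φ.symm)^[k] (ϑ w) := by
  intro k
  induction k with
  | zero => intro w; rfl
  | succ j ih =>
    intro w
    rw [Function.iterate_succ_apply', hϑφ, ih,
      ← Function.iterate_succ_apply' (⇑φ.symm) j (ϑ w)]

lemma iter_theta (φ : M ≃ₜ M) (ϑ : M → M) (hϑinv : ∀ x, ϑ (ϑ x) = x)
    (hϑφ : ∀ x, ϑ (φ x) = φ.symm (ϑ x)) :
    ∀ (k : ℕ) (w : M), (⇑φ)^[k] (ϑ w) = ϑ ((⇑φ.symm)^[k] w) := by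
  have hφϑ : ∀ v, φ (ϑ v) = ϑ (φ.symm v) := by
    intro v
    calc φ (ϑ v) = ϑ (ϑ (φ (ϑ v))) := (hϑinv _).symm
    _ = ϑ (φ.symm (ϑ (ϑ v))) := by rw [hϑφ]
    _ = ϑ (φ.symm v) := by rw [hϑinv]
  intro k
  induction k with
  | zero => intro w; rfl
  | succ j ih =>
    intro w
    rw [Function.iterate_succ_apply', ih, hφϑ,
      ← Function.iterate_succ_apply' (⇑φ.symm) j w]

lemma bowen_isOpen (φ : M ≃ₜ M) (n : ℕ) (c : M) (δ : ℝ) :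
    IsOpen (bowenBall (⇑φ) n c δ) := by
  have : bowenBall (⇑φ) n c δ =
      ⋂ j ∈ Finset.range n, (fun y => dist ((⇑φ)^[j] c) ((⇑φ)^[j] y)) ⁻¹' Set.Iio δ := by
    ext y; simp [bowenBall, Finset.mem_range]
  rw [this]
  exact isOpen_biInter_finset fun j _ =>
    (continuous_const.dist (φ.continuous.iterate j)).isOpen_preimage _ isOpen_Iio

end helpers

lemma cov_core {M : Type*} [MetricSpace M] [MeasurableSpace M] [BorelSpace M]
    (φ : M ≃ₜ M) (ω : Measure M) [IsProbabilityMeasure ω]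
    (heq : ω.map (⇑φ) ≪ ω ∧ ω ≪ ω.map (⇑φ)) :
    ∀ (m : ℕ) (F : M → ℝ≥0∞), Measurable F →
      ∫⁻ y, F y ∂ω = ∫⁻ z, F ((⇑φ)^[m] z) *
        ∏ k ∈ Finset.range m, ((ω.map (⇑φ)).rnDeriv ω ((⇑φ)^[k+1] z))⁻¹ ∂ω := by
  have hφm : Measurable ⇑φ := φ.continuous.measurable
  haveI : IsProbabilityMeasure (ω.map ⇑φ) := Measure.isProbabilityMeasure_map hφm.aemeasurable
  set g := (ω.map (⇑φ)).rnDeriv ω with hgdef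
  have hgm : Measurable g := Measure.measurable_rnDeriv _ _
  have hmap : ω.withDensity g = ω.map ⇑φ := Measure.withDensity_rnDeriv_eq _ _ heq.1
  have hgpos : ∀ᵐ y ∂ω, 0 < g y := (Measure.rnDeriv_pos heq.1).filter_mono heq.2.ae_le
  have hgfin : ∀ᵐ y ∂ω, g y < ⊤ := Measure.rnDeriv_lt_top _ _
  have step : ∀ (F : M → ℝ≥0∞), Measurable F →
      ∫⁻ y, F y ∂ω = ∫⁻ z, F (φ z) * (g (φ z))⁻¹ ∂ω := by
    intro F hF
    have h1 : ∫⁻ z, F (φ z) * (g (φ z))⁻¹ ∂ω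
        = ∫⁻ y, F y * (g y)⁻¹ ∂(ω.map ⇑φ) := by
      rw [lintegral_map (f := fun y => F y * (g y)⁻¹) (hF.mul hgm.inv) hφm]
    rw [h1, ← hmap, lintegral_withDensity_eq_lintegral_mul ω hgm (g := fun y => F y * (g y)⁻¹) (hF.mul hgm.inv)]
    refine lintegral_congr_ae ?_
    filter_upwards [hgpos, hgfin] with y h0 hfin
    simp only [Pi.mul_apply]
    rw [mul_comm (g y) _, mul_assoc, ENNReal.inv_mul_cancel h0.ne' hfin.ne, mul_one]
  intro m
  induction m with
  | zero => intro F hF; simp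
  | succ m ih =>
    intro F hF
    have hFφ : Measurable fun z => F (φ z) * (g (φ z))⁻¹ :=
      (hF.comp hφm).mul ((hgm.comp hφm).inv)
    rw [step F hF, ih _ hFφ]
    refine lintegral_congr fun z => ?_
    rw [Finset.prod_range_succ, Function.iterate_succ_apply']
    ring


lemma cov_set {M : Type*} [MetricSpace M] [MeasurableSpace M] [BorelSpace M]
    (φ : M ≃ₜ M) (ω : Measure M) [IsProbabilityMeasure ω]
    (heq : ω.map (⇑φ) ≪ ω ∧ ω ≪ ω.map (⇑φ))
    (σ : M → ℝ)
    (hσ : σ =ᵐ[ω] fun x => Real.log (((ω.map (⇑φ)).rnDeriv ω (φ x)).toReal))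
    (m : ℕ) (S : Set M) (hS : MeasurableSet S) :
    ω ((⇑φ.symm)^[m] ⁻¹' S)
      = ∫⁻ z in S, ENNReal.ofReal (Real.exp (-(birkhoff (⇑φ) σ m z))) ∂ω := by
  have hφm : Measurable ⇑φ := φ.continuous.measurable
  haveI : IsProbabilityMeasure (ω.map ⇑φ) := Measure.isProbabilityMeasure_map hφm.aemeasurable
  set g := (ω.map (⇑φ)).rnDeriv ω with hgdef
  have hgm : Measurable g := Measure.measurable_rnDeriv _ _
  have hgpos : ∀ᵐ y ∂ω, 0 < g y := (Measure.rnDeriv_pos heq.1).filter_mono heq.2.ae_le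
  have hgfin : ∀ᵐ y ∂ω, g y < ⊤ := Measure.rnDeriv_lt_top _ _
  -- a.e. identity g(φ z) = ofReal (exp (σ z))
  have hPφ : ∀ᵐ z ∂ω, 0 < g (φ z) ∧ g (φ z) < ⊤ := by
    have h1 : ∀ᵐ y ∂(ω.map ⇑φ), 0 < g y ∧ g y < ⊤ :=
      (hgpos.and hgfin).filter_mono heq.1.ae_le
    have hmeas : MeasurableSet {y | 0 < g y ∧ g y < ⊤} := by
      have he : {y | 0 < g y ∧ g y < ⊤} = g ⁻¹' (Set.Ioo 0 ⊤) := rfl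
      rw [he]; exact hgm measurableSet_Ioo
    exact (ae_map_iff hφm.aemeasurable hmeas).1 h1
  have hgσ : ∀ᵐ z ∂ω, g (φ z) = ENNReal.ofReal (Real.exp (σ z)) := by
    filter_upwards [hσ, hPφ] with z hz hp
    have htr : (g (φ z)).toReal > 0 := ENNReal.toReal_pos hp.1.ne' hp.2.ne
    rw [hz, Real.exp_log htr, ENNReal.ofReal_toReal hp.2.ne]
  have hqmp : ∀ k : ℕ, Measure.QuasiMeasurePreserving ((⇑φ)^[k]) ω ω := by
    intro k
    induction k with
    | zero => simpa using Measure.QuasiMeasurePreserving.id ω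
    | succ k ih =>
      have : ((⇑φ)^[k+1]) = ((⇑φ)^[k]) ∘ ⇑φ := Function.iterate_succ (⇑φ) k
      rw [this]
      exact ih.comp ⟨hφm, heq.1⟩
  have hgσk : ∀ k : ℕ, ∀ᵐ z ∂ω,
      g (φ ((⇑φ)^[k] z)) = ENNReal.ofReal (Real.exp (σ ((⇑φ)^[k] z))) := by
    intro k
    have h0 : (fun z => g (φ z)) =ᵐ[ω] fun z => ENNReal.ofReal (Real.exp (σ z)) := hgσ
    exact (hqmp k).ae_eq_comp h0
  have hprod : ∀ᵐ z ∂ω,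
      (∏ k ∈ Finset.range m, (g ((⇑φ)^[k+1] z))⁻¹)
        = ENNReal.ofReal (Real.exp (-(birkhoff (⇑φ) σ m z))) := by
    have hall : ∀ᵐ z ∂ω, ∀ k ∈ Finset.range m,
        g (φ ((⇑φ)^[k] z)) = ENNReal.ofReal (Real.exp (σ ((⇑φ)^[k] z))) :=
      (ae_ball_iff (Finset.range m).countable_toSet).2 fun k _ => hgσk k
    filter_upwards [hall] with z hz
    have h1 : (∏ k ∈ Finset.range m, (g ((⇑φ)^[k+1] z))⁻¹)
        = ∏ k ∈ Finset.range m, ENNReal.ofReal (Real.exp (-(σ ((⇑φ)^[k] z)))) := by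
      refine Finset.prod_congr rfl fun k hk => ?_
      rw [Function.iterate_succ_apply' (⇑φ) k z, hz k hk, Real.exp_neg,
        ENNReal.ofReal_inv_of_pos (Real.exp_pos _)]
    rw [h1, ← ENNReal.ofReal_prod_of_nonneg (fun k _ => (Real.exp_pos _).le),
      ← Real.exp_sum]
    congr 1
    rw [birkhoff, ← Finset.sum_neg_distrib]
  -- indicator trick
  have hS' : MeasurableSet ((⇑φ.symm)^[m] ⁻¹' S) :=
    hS.preimage (φ.symm.continuous.measurable.iterate m)
  have hFm : Measurable (((⇑φ.symm)^[m] ⁻¹' S).indicator (1 : M → ℝ≥0∞)) :=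
    measurable_one.indicator hS'
  have hcov := cov_core φ ω heq m _ hFm
  rw [lintegral_indicator_one hS'] at hcov
  have hmem : ∀ z : M, ((⇑φ)^[m] z ∈ ((⇑φ.symm)^[m] ⁻¹' S)) ↔ z ∈ S := by
    intro z; simp [Set.mem_preimage, iterCancel']
  have hind : ∀ z : M,
      ((⇑φ.symm)^[m] ⁻¹' S).indicator (1 : M → ℝ≥0∞) ((⇑φ)^[m] z)
        * (∏ k ∈ Finset.range m, (g ((⇑φ)^[k+1] z))⁻¹)
      = S.indicator (fun z => ∏ k ∈ Finset.range m, (g ((⇑φ)^[k+1] z))⁻¹) z := by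
    intro z
    by_cases hzS : z ∈ S
    · rw [Set.indicator_of_mem ((hmem z).2 hzS), Set.indicator_of_mem hzS,
        Pi.one_apply, one_mul]
    · rw [Set.indicator_of_notMem (fun h => hzS ((hmem z).1 h)),
        Set.indicator_of_notMem hzS, zero_mul]
  calc ω ((⇑φ.symm)^[m] ⁻¹' S)
      = ∫⁻ z, ((⇑φ.symm)^[m] ⁻¹' S).indicator (1 : M → ℝ≥0∞) ((⇑φ)^[m] z)
          * ∏ k ∈ Finset.range m, (g ((⇑φ)^[k+1] z))⁻¹ ∂ω := hcov
    _ = ∫⁻ z, S.indicator (fun z => ∏ k ∈ Finset.range m, (g ((⇑φ)^[k+1] z))⁻¹) z ∂ω :=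
        lintegral_congr hind
    _ = ∫⁻ z in S, ∏ k ∈ Finset.range m, (g ((⇑φ)^[k+1] z))⁻¹ ∂ω :=
        lintegral_indicator hS _
    _ = ∫⁻ z in S, ENNReal.ofReal (Real.exp (-(birkhoff (⇑φ) σ m z))) ∂ω :=
        lintegral_congr_ae (ae_restrict_of_ae hprod)


/-- If `ϑ` is a (bi-Lipschitz-compatible) continuous time reversal, `ω` a TRI reference
measure with `ω∘φ^{-1}` equivalent to `ω`, `σ` a continuous version of the entropy
production observable, and `ω ∈ S_V`, then `σ` is physically equivalent to
`σ̃_V := V - V∘ϑ`, i.e. `(1/n) sup_x |S_n σ(x) - S_n σ̃_V(x)| → 0`. -/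
theorem entropy_production_physical_equivalence
    {M : Type*} [MetricSpace M] [CompactSpace M] [MeasurableSpace M] [BorelSpace M]
    (φ : M ≃ₜ M)
    (ϑ : M → M) (hϑc : Continuous ϑ) (hϑinv : ∀ x, ϑ (ϑ x) = x)
    (hϑφ : ∀ x, ϑ (φ x) = φ.symm (ϑ x))
    (Cd : ℝ) (hCd : 0 < Cd)
    (hmetric : ∀ x y : M,
      Cd⁻¹ * dist x y ≤ dist (ϑ x) (ϑ y) ∧ dist (ϑ x) (ϑ y) ≤ Cd * dist x y)
    (ω : Measure M) [IsProbabilityMeasure ω]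
    (hωϑ : ω.map ϑ = ω)
    (heq : ω.map (⇑φ) ≪ ω ∧ ω ≪ ω.map (⇑φ))
    (σ : M → ℝ) (hσc : Continuous σ)
    (hσ : σ =ᵐ[ω] fun x => Real.log (((ω.map (⇑φ)).rnDeriv ω (φ x)).toReal))
    (V : M → ℝ) (hVc : Continuous V) (hωV : memSV (⇑φ) V ω) :
    Tendsto
      (fun n : ℕ => (n : ℝ)⁻¹ *
        ⨆ x : M, |birkhoff (⇑φ) σ n x - birkhoff (⇑φ) (fun y => V y - V (ϑ y)) n x|)
      atTop (nhds 0) := by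
  classical
  rcases isEmpty_or_nonempty M with hM | hM
  · have h0 : ∀ n : ℕ, (⨆ x : M,
        |birkhoff (⇑φ) σ n x - birkhoff (⇑φ) (fun y => V y - V (ϑ y)) n x|) = 0 := by
      intro n; rw [iSup_of_empty', Real.sSup_empty]
    simp only [h0, mul_zero]
    exact tendsto_const_nhds
  -- boundedness of σ
  obtain ⟨Kσ, hKσ⟩ : ∃ K : ℝ, ∀ x : M, |σ x| ≤ K := by
    obtain ⟨x₀, -, hx₀⟩ := IsCompact.exists_isMaxOn isCompact_univ Set.univ_nonempty
      hσc.abs.continuousOn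
    exact ⟨|σ x₀|, fun x => hx₀ (Set.mem_univ x)⟩
  obtain ⟨ε₀, hε₀, hSV⟩ := hωV
  have hφm : Measurable ⇑φ := φ.continuous.measurable
  have hθB : ∀ B : Set M, MeasurableSet B → ω (ϑ ⁻¹' B) = ω B := by
    intro B hB
    conv_rhs => rw [← hωϑ]
    rw [Measure.map_apply hϑc.measurable hB]
  rw [Metric.tendsto_atTop]
  intro η hη
  set η' := η / 4 with hη'def
  have hη' : 0 < η' := by positivity
  obtain ⟨r, hr, hrσ⟩ : ∃ r > 0, ∀ a b : M, dist a b < r → |σ a - σ b| < η' := by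
    have huc := Metric.uniformContinuous_iff.1
      (CompactSpace.uniformContinuous_of_continuous hσc) η' hη'
    obtain ⟨δ, hδ, h⟩ := huc
    exact ⟨δ, hδ, fun a b hab => by simpa [Real.dist_eq] using h hab⟩
  -- choice of ε
  set e := min ε₀ r with hedef
  have he : 0 < e := lt_min hε₀ hr
  set ε := e * min Cd Cd⁻¹ / 2 with hεdef
  have hcpos : 0 < min Cd Cd⁻¹ := lt_min hCd (inv_pos.2 hCd)
  have hc1 : min Cd Cd⁻¹ ≤ 1 := by
    rcases le_total Cd 1 with h | h
    · exact le_trans (min_le_left _ _) h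
    · exact le_trans (min_le_right _ _) (by rw [inv_le_one_iff₀]; right; exact h)
  have hε : 0 < ε := by positivity
  have hεe : ε ≤ e / 2 := by
    rw [hεdef]
    have := mul_le_mul_of_nonneg_left hc1 he.le
    linarith
  have hεlt : ε < ε₀ := lt_of_le_of_lt hεe (by
    have : e ≤ ε₀ := min_le_left _ _
    linarith)
  have hCdε_pos : 0 < Cd * ε := by positivity
  have hCdε_le : Cd * ε ≤ e / 2 := by
    rw [hεdef]
    have h1 : Cd * (e * min Cd Cd⁻¹ / 2) ≤ Cd * (e * Cd⁻¹ / 2) := by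
      have : min Cd Cd⁻¹ ≤ Cd⁻¹ := min_le_right _ _
      have := mul_le_mul_of_nonneg_left this he.le
      nlinarith
    have h2 : Cd * (e * Cd⁻¹ / 2) = e / 2 := by field_simp
    linarith
  have hCdε_lt₀ : Cd * ε < ε₀ := lt_of_le_of_lt hCdε_le (by
    have : e ≤ ε₀ := min_le_left _ _; linarith)
  have hCdε_ltr : Cd * ε < r := lt_of_le_of_lt hCdε_le (by
    have : e ≤ r := min_le_right _ _; linarith)
  have hεCd_pos : 0 < ε / Cd := by positivity
  have hεCd_le : ε / Cd ≤ e / 2 := by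
    rw [hεdef]
    have h1 : e * min Cd Cd⁻¹ / 2 / Cd ≤ e * Cd / 2 / Cd := by
      have : min Cd Cd⁻¹ ≤ Cd := min_le_left _ _
      have := mul_le_mul_of_nonneg_left this he.le
      have hCdinv : 0 < Cd⁻¹ := inv_pos.2 hCd
      rw [div_le_div_iff₀ hCd hCd]
      nlinarith
    have h2 : e * Cd / 2 / Cd = e / 2 := by field_simp
    linarith
  have hεCd_lt₀ : ε / Cd < ε₀ := lt_of_le_of_lt hεCd_le (by
    have : e ≤ ε₀ := min_le_left _ _; linarith)
  have hεCd_ltr : ε / Cd < r := lt_of_le_of_lt hεCd_le (by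
    have : e ≤ r := min_le_right _ _; linarith)
  obtain ⟨C1, hC1pos, hC1lim, hC1⟩ := hSV ε hε hεlt
  obtain ⟨C2, hC2pos, hC2lim, hC2⟩ := hSV (Cd * ε) hCdε_pos hCdε_lt₀
  obtain ⟨C3, hC3pos, hC3lim, hC3⟩ := hSV (ε / Cd) hεCd_pos hεCd_lt₀
  set D : ℕ → ℝ := fun n => |Real.log (C1 n)| + |Real.log (C2 n)| + |Real.log (C3 n)|
    with hD
  -- key estimate
  have key : ∀ n : ℕ, 1 ≤ n → ∀ y : M,
      |birkhoff (⇑φ) σ n y - birkhoff (⇑φ) (fun z => V z - V (ϑ z)) n y|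
        ≤ Kσ + D n + (n : ℝ) * η' := by
    intro n hn y
    set m := n - 1 with hm
    have hnm : n = m + 1 := (Nat.succ_pred_eq_of_pos hn).symm
    set x := ϑ ((⇑φ)^[m] y) with hx
    -- pointwise orbit identities
    have hji : ∀ j : ℕ, j < n → (⇑φ)^[j] x = ϑ ((⇑φ)^[m - j] y) := by
      intro j hj
      have hjm : j ≤ m := by omega
      rw [hx, iter_theta φ ϑ hϑinv hϑφ, symm_iter_of_le φ hjm]
    have hzi : ∀ (z : M) (j : ℕ), j < n →
        (⇑φ)^[j] (ϑ z) = ϑ ((⇑φ)^[m - j] ((⇑φ.symm)^[m] z)) := by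
      intro z j hj
      have hjm : j ≤ m := by omega
      have h1 : (⇑φ)^[m - j] ((⇑φ.symm)^[m] z) = (⇑φ.symm)^[j] z := by
        rw [iter_of_symm_of_le φ (Nat.sub_le m j), Nat.sub_sub_self hjm]
      rw [iter_theta φ ϑ hϑinv hϑφ, ← h1]
    -- Bowen ball inclusions
    have hincl_up : ϑ ⁻¹' (bowenBall (⇑φ) n x ε)
        ⊆ (⇑φ.symm)^[m] ⁻¹' (bowenBall (⇑φ) n y (Cd * ε)) := by
      intro z hz
      simp only [Set.mem_preimage, bowenBall, Set.mem_setOf_eq] at hz ⊢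
      intro i hi
      have him : i ≤ m := by omega
      have hj : m - i < n := by omega
      have h1 := hz (m - i) hj
      rw [hji (m - i) hj, hzi z (m - i) hj, Nat.sub_sub_self him] at h1
      have h2 := (hmetric ((⇑φ)^[i] y) ((⇑φ)^[i] ((⇑φ.symm)^[m] z))).1
      have h3 : Cd⁻¹ * dist ((⇑φ)^[i] y) ((⇑φ)^[i] ((⇑φ.symm)^[m] z)) < ε :=
        lt_of_le_of_lt h2 h1
      calc dist ((⇑φ)^[i] y) ((⇑φ)^[i] ((⇑φ.symm)^[m] z))
          = Cd * (Cd⁻¹ * dist ((⇑φ)^[i] y) ((⇑φ)^[i] ((⇑φ.symm)^[m] z))) := by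
            field_simp
        _ < Cd * ε := mul_lt_mul_of_pos_left h3 hCd
    have hincl_lo : (⇑φ.symm)^[m] ⁻¹' (bowenBall (⇑φ) n y (ε / Cd))
        ⊆ ϑ ⁻¹' (bowenBall (⇑φ) n x ε) := by
      intro z hz
      simp only [Set.mem_preimage, bowenBall, Set.mem_setOf_eq] at hz ⊢
      intro j hj
      have hjm : j ≤ m := by omega
      have hi : m - j < n := by omega
      have h1 := hz (m - j) hi
      rw [hji j hj, hzi z j hj]
      have h2 := (hmetric ((⇑φ)^[m - j] y) ((⇑φ)^[m - j] ((⇑φ.symm)^[m] z))).2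
      calc dist (ϑ ((⇑φ)^[m - j] y)) (ϑ ((⇑φ)^[m - j] ((⇑φ.symm)^[m] z)))
          ≤ Cd * dist ((⇑φ)^[m - j] y) ((⇑φ)^[m - j] ((⇑φ.symm)^[m] z)) := h2
        _ < Cd * (ε / Cd) := mul_lt_mul_of_pos_left h1 hCd
        _ = ε := by field_simp
    -- measurability
    have hBx : MeasurableSet (bowenBall (⇑φ) n x ε) := (bowen_isOpen φ n x ε).measurableSet
    have hBp : MeasurableSet (bowenBall (⇑φ) n y (Cd * ε)) :=
      (bowen_isOpen φ n y _).measurableSet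
    have hBm' : MeasurableSet (bowenBall (⇑φ) n y (ε / Cd)) :=
      (bowen_isOpen φ n y _).measurableSet
    have hωx : ω (bowenBall (⇑φ) n x ε) = ω (ϑ ⁻¹' (bowenBall (⇑φ) n x ε)) :=
      (hθB _ hBx).symm
    have hcov_p := cov_set φ ω heq σ hσ m _ hBp
    have hcov_m := cov_set φ ω heq σ hσ m _ hBm'
    -- uniform continuity bound on Birkhoff sums over Bowen balls
    have hσbound : ∀ δ : ℝ, δ < r → ∀ w ∈ bowenBall (⇑φ) n y δ,
        |birkhoff (⇑φ) σ m w - birkhoff (⇑φ) σ m y| ≤ (n : ℝ) * η' := by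
      intro δ hδ w hw
      simp only [bowenBall, Set.mem_setOf_eq] at hw
      have hdiff : birkhoff (⇑φ) σ m w - birkhoff (⇑φ) σ m y
          = ∑ j ∈ Finset.range m, (σ ((⇑φ)^[j] w) - σ ((⇑φ)^[j] y)) := by
        rw [birkhoff, birkhoff, ← Finset.sum_sub_distrib]
      rw [hdiff]
      calc |∑ j ∈ Finset.range m, (σ ((⇑φ)^[j] w) - σ ((⇑φ)^[j] y))|
          ≤ ∑ j ∈ Finset.range m, |σ ((⇑φ)^[j] w) - σ ((⇑φ)^[j] y)| :=
            Finset.abs_sum_le_sum_abs _ _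
        _ ≤ ∑ _j ∈ Finset.range m, η' := by
            refine Finset.sum_le_sum fun j hj => ?_
            have hjn : j < n := by
              have := Finset.mem_range.1 hj; omega
            have hd := hw j hjn
            have hdr : dist ((⇑φ)^[j] w) ((⇑φ)^[j] y) < r := by
              rw [dist_comm]; exact lt_trans hd hδ
            exact (hrσ _ _ hdr).le
        _ = (m : ℝ) * η' := by
            rw [Finset.sum_const, Finset.card_range, nsmul_eq_mul]
        _ ≤ (n : ℝ) * η' := by
            have hmn : (m : ℝ) ≤ (n : ℝ) := by exact_mod_cast Nat.sub_le n 1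
            nlinarith [hη'.le]
    -- upper lintegral bound
    have hup : ω ((⇑φ.symm)^[m] ⁻¹' (bowenBall (⇑φ) n y (Cd * ε)))
        ≤ ENNReal.ofReal (Real.exp (-(birkhoff (⇑φ) σ m y) + (n : ℝ) * η'))
          * ω (bowenBall (⇑φ) n y (Cd * ε)) := by
      rw [hcov_p]
      calc ∫⁻ z in bowenBall (⇑φ) n y (Cd * ε),
            ENNReal.ofReal (Real.exp (-(birkhoff (⇑φ) σ m z))) ∂ω
          ≤ ∫⁻ _ in bowenBall (⇑φ) n y (Cd * ε),
            ENNReal.ofReal (Real.exp (-(birkhoff (⇑φ) σ m y) + (n : ℝ) * η')) ∂ω := by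
            refine setLIntegral_mono' hBp fun z hz => ?_
            refine ENNReal.ofReal_le_ofReal (Real.exp_le_exp.2 ?_)
            have h1 := (abs_le.1 (hσbound (Cd * ε) hCdε_ltr z hz)).1
            linarith
        _ = _ := setLIntegral_const _ _
    -- lower lintegral bound
    have hlo : ENNReal.ofReal (Real.exp (-(birkhoff (⇑φ) σ m y) - (n : ℝ) * η'))
          * ω (bowenBall (⇑φ) n y (ε / Cd))
        ≤ ω ((⇑φ.symm)^[m] ⁻¹' (bowenBall (⇑φ) n y (ε / Cd))) := by
      rw [hcov_m]
      calc ENNReal.ofReal (Real.exp (-(birkhoff (⇑φ) σ m y) - (n : ℝ) * η'))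
            * ω (bowenBall (⇑φ) n y (ε / Cd))
          = ∫⁻ _ in bowenBall (⇑φ) n y (ε / Cd),
            ENNReal.ofReal (Real.exp (-(birkhoff (⇑φ) σ m y) - (n : ℝ) * η')) ∂ω :=
            (setLIntegral_const _ _).symm
        _ ≤ ∫⁻ z in bowenBall (⇑φ) n y (ε / Cd),
            ENNReal.ofReal (Real.exp (-(birkhoff (⇑φ) σ m z))) ∂ω := by
            refine setLIntegral_mono' hBm' fun z hz => ?_
            refine ENNReal.ofReal_le_ofReal (Real.exp_le_exp.2 ?_)
            have h1 := (abs_le.1 (hσbound (ε / Cd) hεCd_ltr z hz)).2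
            linarith
    -- real-valued inequalities
    have hXup : (ω (bowenBall (⇑φ) n x ε)).toReal
        ≤ Real.exp (-(birkhoff (⇑φ) σ m y) + (n : ℝ) * η')
          * (ω (bowenBall (⇑φ) n y (Cd * ε))).toReal := by
      have h1 : ω (bowenBall (⇑φ) n x ε)
          ≤ ENNReal.ofReal (Real.exp (-(birkhoff (⇑φ) σ m y) + (n : ℝ) * η'))
            * ω (bowenBall (⇑φ) n y (Cd * ε)) := by
        rw [hωx]
        exact le_trans (measure_mono hincl_up) hup
      have h2 := ENNReal.toReal_mono
        (ENNReal.mul_ne_top ENNReal.ofReal_ne_top (measure_ne_top ω _)) h1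
      rwa [ENNReal.toReal_mul, ENNReal.toReal_ofReal (Real.exp_nonneg _)] at h2
    have hXlo : Real.exp (-(birkhoff (⇑φ) σ m y) - (n : ℝ) * η')
          * (ω (bowenBall (⇑φ) n y (ε / Cd))).toReal
        ≤ (ω (bowenBall (⇑φ) n x ε)).toReal := by
      have h1 : ENNReal.ofReal (Real.exp (-(birkhoff (⇑φ) σ m y) - (n : ℝ) * η'))
            * ω (bowenBall (⇑φ) n y (ε / Cd))
          ≤ ω (bowenBall (⇑φ) n x ε) := by
        rw [hωx]
        exact le_trans hlo (measure_mono hincl_lo)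
      have h2 := ENNReal.toReal_mono (measure_ne_top ω _) h1
      rwa [ENNReal.toReal_mul, ENNReal.toReal_ofReal (Real.exp_nonneg _)] at h2
    -- S_V bounds
    obtain ⟨hP1, hP2⟩ := hC1 n hn x
    have hP3 := (hC2 n hn y).2
    have hP4 := (hC3 n hn y).1
    -- Birkhoff sum identities
    have hVx : birkhoff (⇑φ) V n x = ∑ j ∈ Finset.range n, V (ϑ ((⇑φ)^[j] y)) := by
      rw [birkhoff]
      rw [Finset.sum_congr rfl fun j hj => by
        rw [hji j (Finset.mem_range.1 hj)]]
      have hrefl := Finset.sum_range_reflect (fun i => V (ϑ ((⇑φ)^[i] y))) n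
      calc (∑ j ∈ Finset.range n, V (ϑ ((⇑φ)^[m - j] y)))
          = ∑ j ∈ Finset.range n, V (ϑ ((⇑φ)^[n - 1 - j] y)) := by rw [hm]
        _ = _ := hrefl
    have hsplit : birkhoff (⇑φ) (fun z => V z - V (ϑ z)) n y
        = birkhoff (⇑φ) V n y - ∑ j ∈ Finset.range n, V (ϑ ((⇑φ)^[j] y)) := by
      rw [birkhoff, birkhoff, ← Finset.sum_sub_distrib]
    have hsum : birkhoff (⇑φ) σ n y = birkhoff (⇑φ) σ m y + σ ((⇑φ)^[m] y) := by
      conv_lhs => rw [hnm]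
      rw [birkhoff, Finset.sum_range_succ]
      rfl
    -- exponential rearrangements
    set a := (ω (bowenBall (⇑φ) n x ε)).toReal with ha
    set bp := (ω (bowenBall (⇑φ) n y (Cd * ε))).toReal with hbp
    set bm := (ω (bowenBall (⇑φ) n y (ε / Cd))).toReal with hbm
    set vx := birkhoff (⇑φ) V n x with hvx
    set vy := birkhoff (⇑φ) V n y with hvy
    set lσ := birkhoff (⇑φ) σ m y with hlσ
    have hA1 : (C1 n)⁻¹ * Real.exp vx ≤ a := by
      have h1 := mul_le_mul_of_nonneg_right hP1 (Real.exp_pos vx).le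
      rwa [mul_assoc, ← Real.exp_add, neg_add_cancel, Real.exp_zero, mul_one] at h1
    have hA2 : a ≤ C1 n * Real.exp vx := by
      have h1 := mul_le_mul_of_nonneg_right hP2 (Real.exp_pos vx).le
      rwa [mul_assoc, ← Real.exp_add, neg_add_cancel, Real.exp_zero, mul_one] at h1
    have hB3 : bp ≤ C2 n * Real.exp vy := by
      have h1 := mul_le_mul_of_nonneg_right hP3 (Real.exp_pos vy).le
      rwa [mul_assoc, ← Real.exp_add, neg_add_cancel, Real.exp_zero, mul_one] at h1
    have hB4 : (C3 n)⁻¹ * Real.exp vy ≤ bm := by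
      have h1 := mul_le_mul_of_nonneg_right hP4 (Real.exp_pos vy).le
      rwa [mul_assoc, ← Real.exp_add, neg_add_cancel, Real.exp_zero, mul_one] at h1
    have chain_up : (C1 n)⁻¹ * Real.exp vx
        ≤ Real.exp (-lσ + (n : ℝ) * η') * (C2 n * Real.exp vy) :=
      le_trans hA1 (le_trans hXup
        (mul_le_mul_of_nonneg_left hB3 (Real.exp_nonneg _)))
    have chain_lo : Real.exp (-lσ - (n : ℝ) * η') * ((C3 n)⁻¹ * Real.exp vy)
        ≤ C1 n * Real.exp vx :=
      le_trans (mul_le_mul_of_nonneg_left hB4 (Real.exp_nonneg _))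
        (le_trans hXlo hA2)
    have hLup := Real.log_le_log
      (mul_pos (inv_pos.2 (hC1pos n)) (Real.exp_pos _)) chain_up
    have hLlo := Real.log_le_log
      (mul_pos (Real.exp_pos _) (mul_pos (inv_pos.2 (hC3pos n)) (Real.exp_pos _))) chain_lo
    rw [Real.log_mul (inv_ne_zero (hC1pos n).ne') (Real.exp_ne_zero _),
      Real.log_mul (Real.exp_ne_zero _) (mul_pos (hC2pos n) (Real.exp_pos _)).ne',
      Real.log_mul (hC2pos n).ne' (Real.exp_ne_zero _),
      Real.log_inv, Real.log_exp, Real.log_exp, Real.log_exp] at hLup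
    rw [Real.log_mul (Real.exp_ne_zero _)
        (mul_pos (inv_pos.2 (hC3pos n)) (Real.exp_pos _)).ne',
      Real.log_mul (inv_ne_zero (hC3pos n).ne') (Real.exp_ne_zero _),
      Real.log_mul (hC1pos n).ne' (Real.exp_ne_zero _),
      Real.log_inv, Real.log_exp, Real.log_exp, Real.log_exp] at hLlo
    -- final combination
    rw [hsum, hsplit]
    have hVeq : vx = ∑ j ∈ Finset.range n, V (ϑ ((⇑φ)^[j] y)) := hVx
    have hσm := abs_le.1 (hKσ ((⇑φ)^[m] y))
    simp only [hD]
    rw [abs_le]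
    constructor
    · have l1 := le_abs_self (Real.log (C1 n))
      have l3 := le_abs_self (Real.log (C3 n))
      linarith [hσm.1, hσm.2, abs_nonneg (Real.log (C1 n)),
        abs_nonneg (Real.log (C2 n)), abs_nonneg (Real.log (C3 n))]
    · have l1 := le_abs_self (Real.log (C1 n))
      have l2 := le_abs_self (Real.log (C2 n))
      linarith [hσm.1, hσm.2, abs_nonneg (Real.log (C1 n)),
        abs_nonneg (Real.log (C2 n)), abs_nonneg (Real.log (C3 n))]
  -- limit bookkeeping
  have hDlim : Tendsto (fun n : ℕ => D n / n) atTop (nhds 0) := by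
    have h1 : Tendsto (fun n : ℕ => |Real.log (C1 n) / n|
        + |Real.log (C2 n) / n| + |Real.log (C3 n) / n|) atTop (nhds 0) := by
      have := (hC1lim.abs.add hC2lim.abs).add hC3lim.abs
      simpa using this
    refine h1.congr fun n => ?_
    rw [hD]
    rw [abs_div, abs_div, abs_div, Nat.abs_cast, add_div, add_div]
  have hKlim : Tendsto (fun n : ℕ => Kσ / n) atTop (nhds 0) :=
    tendsto_const_div_atTop_nhds_zero_nat _
  have hev : ∀ᶠ n : ℕ in atTop, D n / n < η' ∧ Kσ / n < η' ∧ 1 ≤ n := by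
    filter_upwards [hDlim.eventually (gt_mem_nhds hη'),
      hKlim.eventually (gt_mem_nhds hη'), eventually_ge_atTop 1] with n h1 h2 h3
    exact ⟨h1, h2, h3⟩
  obtain ⟨N, hN⟩ := eventually_atTop.1 hev
  refine ⟨N, fun n hn => ?_⟩
  obtain ⟨hD1, hK1, hn1⟩ := hN n hn
  have hnR : (0 : ℝ) < n := by exact_mod_cast hn1
  set Sup := ⨆ x : M, |birkhoff (⇑φ) σ n x - birkhoff (⇑φ) (fun y => V y - V (ϑ y)) n x|
    with hSup
  have hsup_le : Sup ≤ Kσ + D n + (n : ℝ) * η' := ciSup_le fun y => key n hn1 y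
  have hsup0 : 0 ≤ Sup := Real.iSup_nonneg fun y => abs_nonneg _
  rw [Real.dist_eq, sub_zero, abs_of_nonneg (by positivity)]
  have hstep : (n : ℝ)⁻¹ * Sup ≤ Kσ / n + D n / n + η' := by
    have h1 : (n : ℝ)⁻¹ * Sup ≤ (n : ℝ)⁻¹ * (Kσ + D n + (n : ℝ) * η') :=
      mul_le_mul_of_nonneg_left hsup_le (by positivity)
    have h2 : (n : ℝ)⁻¹ * (Kσ + D n + (n : ℝ) * η') = Kσ / n + D n / n + η' := by
      field_simp
    linarith
  have : Kσ / n + D n / n + η' < η := by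
    rw [hη'def] at *
    linarith
  linarith
end
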